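/- arXiv:1402.3702 — 15 statements merged into one kernel-verified Lean document; each statement's English description precedes it below -/
import Mathlib

section
/- Let S = N_2 be the null semigroup of order 2, i.e. e_i e_j = e_1 for all i, j in {1,2}. A k-linear operator P on k[S] is a Rota-Baxter operator of weight zero if and only if its matrix C_P equals [[a, -a], [b, -b]] for some a, b in k (rows listed as (c_{11}, c_{12}) and (c_{21}, c_{22})). -/
/- Statement 1: RBOs of weight zero on the semigroup algebra of the null semigroup N₂ of order 2. -/

namespace Stmt1

inductive S : Type
  | e1 | e2
  deriving DecidableEq

instance instFintypeS : Fintype S := ⟨{S.e1, S.e2}, fun x => by cases x <;> decide⟩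

open S

/-- Multiplication table of the semigroup. -/
instance : Mul S := ⟨fun a b => match a, b with
  | e1, e1 => e1
  | e1, e2 => e1
  | e2, e1 => e1
  | e2, e2 => e1⟩

instance : Semigroup S := { mul_assoc := by decide }

/-- The 2×2 matrix (rows = first index) as a function `S → S → k`. -/
def mat2 {k : Type*} (a11 a12 a21 a22 : k) : S → S → k :=
  fun i j => match i, j with
  | e1, e1 => a11 | e1, e2 => a12
  | e2, e1 => a21 | e2, e2 => a22

theorem rbo_N2 {k : Type*} [Field k] [CharZero k]
    (P : MonoidAlgebra k S →ₗ[k] MonoidAlgebra k S) (C : S → S → k)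
    (hC : ∀ i, P (MonoidAlgebra.single i 1) = ∑ j, MonoidAlgebra.single j (C i j)) :
    (∀ x y, P x * P y = P (x * P y) + P (P x * y)) ↔
      (∃ a b : k, C = mat2 a (-a) b (-b)) := by
  classical
  have hmul : ∀ i j : S, i * j = e1 := by decide
  have hsum : ∀ i, P (MonoidAlgebra.single i (1:k)) =
      MonoidAlgebra.single e1 (C i e1) + MonoidAlgebra.single e2 (C i e2) := by
    intro i
    rw [hC, show (Finset.univ : Finset S) = {e1, e2} from rfl]
    simp
  have hsingle_c : ∀ (i : S) (c : k),
      MonoidAlgebra.single i c = c • MonoidAlgebra.single i (1:k) := by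
    intro i c
    rw [MonoidAlgebra.smul_single', mul_one]
  have ext2 : ∀ A B A' B' : k,
      (Finsupp.single e1 A + Finsupp.single e2 B : S →₀ k) =
        Finsupp.single e1 A' + Finsupp.single e2 B' → A = A' ∧ B = B' := by
    intro A B A' B' hh
    constructor
    · have := Finsupp.ext_iff.mp hh e1
      simpa [Finsupp.single_apply] using this
    · have := Finsupp.ext_iff.mp hh e2
      simpa [Finsupp.single_apply] using this
  constructor
  · intro hP
    have raw : ∀ i : S,
        (C i e1 + C i e2) * (C i e1 + C i e2) = 2 * ((C i e1 + C i e2) * C e1 e1) ∧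
        (0:k) = 2 * ((C i e1 + C i e2) * C e1 e2) := by
      intro i
      have h := hP (MonoidAlgebra.single i (1:k)) (MonoidAlgebra.single i 1)
      rw [hsum i] at h
      rw [show MonoidAlgebra.single i (1:k) *
            (MonoidAlgebra.single e1 (C i e1) + MonoidAlgebra.single e2 (C i e2)) =
            MonoidAlgebra.single e1 (C i e1 + C i e2) by
          simp [mul_add, MonoidAlgebra.single_mul_single, hmul, Finsupp.single_add],
        show (MonoidAlgebra.single e1 (C i e1) + MonoidAlgebra.single e2 (C i e2)) *
            MonoidAlgebra.single i (1:k) =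
            MonoidAlgebra.single e1 (C i e1 + C i e2) by
          simp [add_mul, MonoidAlgebra.single_mul_single, hmul, Finsupp.single_add],
        hsingle_c e1 (C i e1 + C i e2), map_smul, hsum e1] at h
      rw [show (MonoidAlgebra.single e1 (C i e1) + MonoidAlgebra.single e2 (C i e2)) *
            (MonoidAlgebra.single e1 (C i e1) + MonoidAlgebra.single e2 (C i e2)) =
            MonoidAlgebra.single e1 ((C i e1 + C i e2) * (C i e1 + C i e2)) +
              MonoidAlgebra.single e2 (0:k) by
          simp only [mul_add, add_mul, MonoidAlgebra.single_mul_single, hmul,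
            ← MonoidAlgebra.single_add, MonoidAlgebra.single_zero, add_zero],
        show (C i e1 + C i e2) •
              (MonoidAlgebra.single e1 (C e1 e1) + MonoidAlgebra.single e2 (C e1 e2)) +
            (C i e1 + C i e2) •
              (MonoidAlgebra.single e1 (C e1 e1) + MonoidAlgebra.single e2 (C e1 e2)) =
            MonoidAlgebra.single e1 (2 * ((C i e1 + C i e2) * C e1 e1)) +
              MonoidAlgebra.single e2 (2 * ((C i e1 + C i e2) * C e1 e2)) by
          simp only [smul_add, MonoidAlgebra.smul_single']
          rw [add_add_add_comm, ← MonoidAlgebra.single_add, ← MonoidAlgebra.single_add]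
          exact congrArg₂ (· + ·) (congrArg (fun t => MonoidAlgebra.single e1 t) (by ring))
            (congrArg (fun t => MonoidAlgebra.single e2 t) (by ring))] at h
      have h' := congrArg MonoidAlgebra.coeff h
      simp only [MonoidAlgebra.coeff_add, MonoidAlgebra.coeff_single] at h'
      obtain ⟨h1, h2⟩ := ext2 _ _ _ _ h'
      exact ⟨h1, h2⟩
    have hs1 : C e1 e1 + C e1 e2 = 0 := by
      obtain ⟨h1, h2⟩ := raw e1
      have h2' : (C e1 e1 + C e1 e2) * C e1 e2 = 0 := by
        linear_combination (-1/2 : k) * h2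
      have h1' : (C e1 e1 + C e1 e2) * C e1 e1 = 0 := by
        linear_combination -h1 + h2'
      have hss : (C e1 e1 + C e1 e2) * (C e1 e1 + C e1 e2) = 0 := by
        linear_combination h1 + 2 * h1'
      exact mul_self_eq_zero.mp hss
    have hs2 : C e2 e1 + C e2 e2 = 0 := by
      obtain ⟨h1, h2⟩ := raw e2
      have h2' : (C e2 e1 + C e2 e2) * C e1 e2 = 0 := by
        linear_combination (-1/2 : k) * h2
      have h1' : (C e2 e1 + C e2 e2) * C e1 e1 = 0 := by
        linear_combination (C e2 e1 + C e2 e2) * hs1 - h2'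
      have hss : (C e2 e1 + C e2 e2) * (C e2 e1 + C e2 e2) = 0 := by
        linear_combination h1 + 2 * h1'
      exact mul_self_eq_zero.mp hss
    refine ⟨C e1 e1, C e2 e1, ?_⟩
    funext i j
    cases i <;> cases j <;> simp [mat2] <;>
      first
        | linear_combination hs1
        | linear_combination hs2
  · rintro ⟨a, b, rfl⟩
    set u : MonoidAlgebra k S :=
      MonoidAlgebra.single e1 1 - MonoidAlgebra.single e2 1 with hu
    have hzu : ∀ z : MonoidAlgebra k S, z * u = 0 := by
      intro z
      induction z using MonoidAlgebra.induction_linear with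
      | zero => simp
      | add f g hf hg => rw [add_mul, hf, hg, add_zero]
      | single i c =>
        show MonoidAlgebra.single i c * _ = 0
        simp [hu, mul_sub, MonoidAlgebra.single_mul_single, hmul]
    have huz : ∀ z : MonoidAlgebra k S, u * z = 0 := by
      intro z
      induction z using MonoidAlgebra.induction_linear with
      | zero => simp
      | add f g hf hg => rw [mul_add, hf, hg, add_zero]
      | single i c =>
        show _ * MonoidAlgebra.single i c = 0
        simp [hu, sub_mul, MonoidAlgebra.single_mul_single, hmul]
    have hPz : ∀ z : MonoidAlgebra k S, ∃ c : k, P z = c • u := by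
      intro z
      induction z using MonoidAlgebra.induction_linear with
      | zero => exact ⟨0, by simp⟩
      | add f g hf hg =>
        obtain ⟨c, hc⟩ := hf; obtain ⟨d, hd⟩ := hg
        exact ⟨c + d, by rw [map_add, hc, hd, add_smul]⟩
      | single i c =>
        cases i with
        | e1 =>
          refine ⟨c * a, ?_⟩
          rw [hsingle_c, map_smul, hsum e1]
          show c • (MonoidAlgebra.single e1 a + MonoidAlgebra.single e2 (-a)) = (c * a) • u
          rw [hsingle_c e1 a, hsingle_c e2 (-a), smul_add, smul_smul, smul_smul, hu,
            smul_sub, mul_neg, neg_smul, ← sub_eq_add_neg]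
        | e2 =>
          refine ⟨c * b, ?_⟩
          rw [hsingle_c, map_smul, hsum e2]
          show c • (MonoidAlgebra.single e1 b + MonoidAlgebra.single e2 (-b)) = (c * b) • u
          rw [hsingle_c e1 b, hsingle_c e2 (-b), smul_add, smul_smul, smul_smul, hu,
            smul_sub, mul_neg, neg_smul, ← sub_eq_add_neg]
    intro x y
    obtain ⟨c, hc⟩ := hPz x
    obtain ⟨d, hd⟩ := hPz y
    have t1 : (c • u) * (d • u) = 0 := by
      rw [smul_mul_assoc, mul_smul_comm, hzu u, smul_zero, smul_zero]
    have t2 : x * (d • u) = 0 := by rw [mul_smul_comm, hzu, smul_zero]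
    have t3 : (c • u) * y = 0 := by rw [smul_mul_assoc, huz, smul_zero]
    rw [hc, hd, t1, t2, t3]
    simp

end Stmt1
end

section
/- Let S = Y_2 be the semilattice of order 2, with multiplication e_1 e_1 = e_1 e_2 = e_2 e_1 = e_1 and e_2 e_2 = e_2. The only Rota-Baxter operator of weight zero on k[S] is the zero operator; that is, a k-linear operator P on k[S] is a Rota-Baxter operator of weight zero if and only if its matrix C_P is the 2x2 zero matrix. -/
/- Statement 2: the only RBO of weight zero on the semigroup algebra of the semilattice Y₂ of order 2 is the zero operator. -/

namespace Stmt2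

inductive S : Type
  | e1 | e2
  deriving DecidableEq

instance : Fintype S := ⟨{S.e1, S.e2}, fun x => by cases x <;> simp⟩

open S

/-- Multiplication table of the semigroup. -/
instance : Mul S := ⟨fun a b => match a, b with
  | e1, e1 => e1
  | e1, e2 => e1
  | e2, e1 => e1
  | e2, e2 => e2⟩

instance : Semigroup S := { mul_assoc := by decide }

/-- The 2×2 matrix (rows = first index) as a function `S → S → k`. -/
def mat2 {k : Type*} (a11 a12 a21 a22 : k) : S → S → k :=
  fun i j => match i, j with
  | e1, e1 => a11 | e1, e2 => a12
  | e2, e1 => a21 | e2, e2 => a22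

@[simp] lemma m11 : e1 * e1 = e1 := rfl
@[simp] lemma m12 : e1 * e2 = e1 := rfl
@[simp] lemma m21 : e2 * e1 = e1 := rfl
@[simp] lemma m22 : e2 * e2 = e2 := rfl

lemma univS : (Finset.univ : Finset S) = {e1, e2} := rfl

lemma add_ap {k : Type*} [Field k] (x y : MonoidAlgebra k S) (s : S) :
    (x + y).coeff s = x.coeff s + y.coeff s := Finsupp.add_apply x.coeff y.coeff s

lemma sg_same {k : Type*} [Field k] (a : S) (b : k) :
    (MonoidAlgebra.single a b : MonoidAlgebra k S).coeff a = b := Finsupp.single_eq_same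

lemma sg12 {k : Type*} [Field k] (b : k) :
    (MonoidAlgebra.single e1 b : MonoidAlgebra k S).coeff e2 = 0 :=
  Finsupp.single_eq_of_ne' (by decide)

lemma sg21 {k : Type*} [Field k] (b : k) :
    (MonoidAlgebra.single e2 b : MonoidAlgebra k S).coeff e1 = 0 :=
  Finsupp.single_eq_of_ne' (by decide)

theorem rbo_Y2 {k : Type*} [Field k] [CharZero k]
    (P : MonoidAlgebra k S →ₗ[k] MonoidAlgebra k S) (C : S → S → k)
    (hC : ∀ i, P (MonoidAlgebra.single i 1) = ∑ j, MonoidAlgebra.single j (C i j)) :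
    (∀ x y, P x * P y = P (x * P y) + P (P x * y)) ↔
      (C = mat2 0 0 0 0) := by
  have hsum : ∀ i, P (MonoidAlgebra.single i 1)
      = MonoidAlgebra.single e1 (C i e1) + MonoidAlgebra.single e2 (C i e2) := by
    intro i
    rw [hC i, univS, Finset.sum_pair (by decide : e1 ≠ e2)]
  have hP : ∀ (i : S) (r : k), P (MonoidAlgebra.single i r)
      = MonoidAlgebra.single e1 (r * C i e1) + MonoidAlgebra.single e2 (r * C i e2) := by
    intro i r
    have h1 : MonoidAlgebra.single i r = r • MonoidAlgebra.single i (1 : k) := by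
      simp [Finsupp.smul_single]
    rw [h1, map_smul, hsum i, smul_add]
    simp [Finsupp.smul_single]
  constructor
  · intro h
    -- key equations
    have key1 := h (MonoidAlgebra.single e1 (1:k)) (MonoidAlgebra.single e1 (1:k))
    have key2 := h (MonoidAlgebra.single e2 (1:k)) (MonoidAlgebra.single e2 (1:k))
    rw [hsum e1] at key1
    rw [hsum e2] at key2
    simp only [mul_add, add_mul, MonoidAlgebra.single_mul_single, m11, m12, m21, m22,
        map_add, hP, one_mul] at key1
    simp only [mul_add, add_mul, MonoidAlgebra.single_mul_single, m11, m12, m21, m22,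
        map_add, hP, one_mul] at key2
    have k1a := Finsupp.ext_iff.mp (congrArg MonoidAlgebra.coeff key1) e1
    have k1b := Finsupp.ext_iff.mp (congrArg MonoidAlgebra.coeff key1) e2
    have k2a := Finsupp.ext_iff.mp (congrArg MonoidAlgebra.coeff key2) e1
    have k2b := Finsupp.ext_iff.mp (congrArg MonoidAlgebra.coeff key2) e2
    simp only [add_ap, sg_same, sg12, sg21, one_mul, mul_one,
        add_zero, zero_add] at k1a k1b k2a k2b
    have ha : C e1 e1 = 0 := by
      have : C e1 e1 * C e1 e1 = 0 := by linear_combination -k1a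
      exact mul_self_eq_zero.mp this
    have hb : C e1 e2 = 0 := by
      have : C e1 e2 * C e1 e2 = 0 := by linear_combination -k1b - 2 * C e1 e2 * ha
      exact mul_self_eq_zero.mp this
    have hc : C e2 e1 = 0 := by
      have : C e2 e1 * C e2 e1 = 0 := by
        linear_combination k2a + 2 * C e2 e1 * ha
      exact mul_self_eq_zero.mp this
    have hd : C e2 e2 = 0 := by
      have : C e2 e2 * C e2 e2 = 0 := by
        linear_combination -k2b - 2 * C e2 e1 * hb
      exact mul_self_eq_zero.mp this
    funext i j
    cases i <;> cases j <;> simp [mat2, ha, hb, hc, hd]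
  · intro hCz
    have hz : ∀ x, P x = 0 := by
      intro x
      obtain ⟨x⟩ := x
      induction x using Finsupp.induction with
      | zero => exact map_zero P
      | single_add a b f _ _ ih =>
          show P (MonoidAlgebra.ofCoeff (Finsupp.single a b) + MonoidAlgebra.ofCoeff f) = 0
          rw [map_add, ih, add_zero]
          rw [show MonoidAlgebra.ofCoeff (Finsupp.single a b) = MonoidAlgebra.single a b from rfl, hP]
          subst hCz
          cases a <;> simp [mat2]
    intro x y
    simp [hz]

end Stmt2
end

section
/- Let S = Z_2 be the cyclic group of order 2, with multiplication e_1 e_1 = e_1, e_1 e_2 = e_2 e_1 = e_2, e_2 e_2 = e_1. The only Rota-Baxter operator of weight zero on the group algebra k[S] is the zero operator; that is, a k-linear operator P on k[S] is a Rota-Baxter operator of weight zero if and only if its matrix C_P is the 2x2 zero matrix. -/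
/- Statement 3: the only RBO of weight zero on the group algebra of the cyclic group Z₂ is the zero operator. -/

namespace Stmt3

inductive S : Type
  | e1 | e2
  deriving DecidableEq

instance : Fintype S := ⟨{S.e1, S.e2}, fun x => by cases x <;> simp⟩

open S

/-- Multiplication table of the semigroup. -/
instance : Mul S := ⟨fun a b => match a, b with
  | e1, e1 => e1
  | e1, e2 => e2
  | e2, e1 => e2
  | e2, e2 => e1⟩

instance : Semigroup S := { mul_assoc := by decide }

/-- The 2×2 matrix (rows = first index) as a function `S → S → k`. -/
def mat2 {k : Type*} (a11 a12 a21 a22 : k) : S → S → k :=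
  fun i j => match i, j with
  | e1, e1 => a11 | e1, e2 => a12
  | e2, e1 => a21 | e2, e2 => a22

lemma m11 : e1 * e1 = e1 := rfl
lemma m12 : e1 * e2 = e2 := rfl
lemma m21 : e2 * e1 = e2 := rfl
lemma m22 : e2 * e2 = e1 := rfl

theorem rbo_Z2 {k : Type*} [Field k] [CharZero k]
    (P : MonoidAlgebra k S →ₗ[k] MonoidAlgebra k S) (C : S → S → k)
    (hC : ∀ i, P (MonoidAlgebra.single i 1) = ∑ j, MonoidAlgebra.single j (C i j)) :
    (∀ x y, P x * P y = P (x * P y) + P (P x * y)) ↔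
      (C = mat2 0 0 0 0) := by
  classical
  have huniv : (Finset.univ : Finset S) = {e1, e2} := by decide
  have hC' : ∀ i, P (MonoidAlgebra.single i 1) =
      MonoidAlgebra.single e1 (C i e1) + MonoidAlgebra.single e2 (C i e2) := by
    intro i
    rw [hC i, huniv, Finset.sum_insert (by decide), Finset.sum_singleton]
  have Pr : ∀ i (r : k), P (MonoidAlgebra.single i r) =
      MonoidAlgebra.single e1 (r * C i e1) + MonoidAlgebra.single e2 (r * C i e2) := by
    intro i r
    have h1 : (MonoidAlgebra.single i r : MonoidAlgebra k S)
        = r • MonoidAlgebra.single i 1 := by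
      rw [MonoidAlgebra.smul_single', mul_one]
    rw [h1, map_smul, hC' i, smul_add, MonoidAlgebra.smul_single',
      MonoidAlgebra.smul_single']
  constructor
  · intro h
    have h11 := h (MonoidAlgebra.single e1 1) (MonoidAlgebra.single e1 1)
    have h12 := h (MonoidAlgebra.single e1 1) (MonoidAlgebra.single e2 1)
    have h22 := h (MonoidAlgebra.single e2 1) (MonoidAlgebra.single e2 1)
    simp only [hC', Pr, map_add, mul_add, add_mul, MonoidAlgebra.single_mul_single,
      m11, m12, m21, m22, one_mul, mul_one] at h11 h12 h22
    have q1 := congrArg (fun f : MonoidAlgebra k S => f.coeff e1) h11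
    have q2 := congrArg (fun f : MonoidAlgebra k S => f.coeff e2) h11
    have q3 := congrArg (fun f : MonoidAlgebra k S => f.coeff e1) h12
    have q4 := congrArg (fun f : MonoidAlgebra k S => f.coeff e2) h12
    have q5 := congrArg (fun f : MonoidAlgebra k S => f.coeff e1) h22
    have q6 := congrArg (fun f : MonoidAlgebra k S => f.coeff e2) h22
    have addap : ∀ (f g : MonoidAlgebra k S) (s : S), (f + g).coeff s = f.coeff s + g.coeff s :=
      fun f g s => by rw [MonoidAlgebra.coeff_add]; rfl
    have singap : ∀ (a : S) (b : k) (s : S),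
        (MonoidAlgebra.single a b : MonoidAlgebra k S).coeff s = if a = s then b else 0 :=
      fun a b s => by rw [MonoidAlgebra.coeff_single]; exact Finsupp.single_apply
    have hne1 : (e1 = e2) = False := eq_false (by decide)
    have hne2 : (e2 = e1) = False := eq_false (by decide)
    simp only [addap, singap] at q1 q2 q3 q4 q5 q6
    simp only [hne1, hne2, if_false, if_true, add_zero, zero_add, if_pos rfl]
      at q1 q2 q3 q4 q5 q6
    -- notation: a = C e1 e1, b = C e1 e2, c = C e2 e1, d = C e2 e2
    have hbd : C e1 e2 * C e2 e2 = 0 := by linear_combination (-(1:k)/2) * q2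
    have hsq : C e1 e2 * C e1 e2 + C e2 e2 * C e2 e2 = 0 := by linear_combination -q4
    have hd4 : (C e2 e2 * C e2 e2) * (C e2 e2 * C e2 e2) = 0 := by
      linear_combination (C e2 e2 * C e2 e2) * hsq - (C e1 e2 * C e2 e2) * hbd
    have hd : C e2 e2 = 0 := mul_self_eq_zero.mp (mul_self_eq_zero.mp hd4)
    have hb2 : C e1 e2 * C e1 e2 = 0 := by linear_combination hsq - C e2 e2 * hd
    have hb : C e1 e2 = 0 := mul_self_eq_zero.mp hb2
    have ha2 : C e1 e1 * C e1 e1 = 0 := by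
      linear_combination (-1 : k) * q1 + (C e1 e2 - 2 * C e2 e1) * hb
    have ha : C e1 e1 = 0 := mul_self_eq_zero.mp ha2
    have hc2 : C e2 e1 * C e2 e1 = 0 := by
      linear_combination (-1 : k) * q5 + (C e2 e2 - 2 * C e1 e1) * hd
    have hcc : C e2 e1 = 0 := mul_self_eq_zero.mp hc2
    funext i j
    cases i <;> cases j <;> simp [mat2, ha, hb, hcc, hd]
  · intro hc
    have P0 : ∀ x, P x = 0 := by
      intro x
      have : P = 0 := by
        apply LinearMap.toAddMonoidHom_injective
        apply MonoidAlgebra.addMonoidHom_ext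
        intro a b
        simp only [LinearMap.toAddMonoidHom_coe, LinearMap.zero_apply]
        erw [Pr a b]
        rw [hc]
        cases a <;> simp [mat2]
      rw [this]; rfl
    intro x y
    simp [P0]
end Stmt3
end

section
/- Let S = L_2 be the left zero semigroup of order 2, i.e. e_i e_j = e_i for all i, j in {1,2}. A k-linear operator P on k[S] is a Rota-Baxter operator of weight zero if and only if its matrix C_P is either of the form [[a, -a^2/b], [b, -a]] for some a, b in k with b nonzero, or of the form [[0, a], [0, 0]] for some a in k (rows listed as (c_{11}, c_{12}) and (c_{21}, c_{22})). -/
/- Statement 4: RBOs of weight zero on the semigroup algebra of the left zero semigroup L₂ of order 2. -/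

namespace Stmt4

inductive S : Type
  | e1 | e2
  deriving DecidableEq

instance : Fintype S := ⟨{S.e1, S.e2}, fun x => by cases x <;> simp⟩

open S

/-- Multiplication table of the semigroup. -/
instance : Mul S := ⟨fun a b => match a, b with
  | e1, e1 => e1
  | e1, e2 => e1
  | e2, e1 => e2
  | e2, e2 => e2⟩

instance : Semigroup S := { mul_assoc := by decide }

/-- The 2×2 matrix (rows = first index) as a function `S → S → k`. -/
def mat2 {k : Type*} (a11 a12 a21 a22 : k) : S → S → k :=
  fun i j => match i, j with
  | e1, e1 => a11 | e1, e2 => a12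
  | e2, e1 => a21 | e2, e2 => a22

lemma sum_univ {M : Type*} [AddCommMonoid M] (f : S → M) : ∑ j, f j = f e1 + f e2 := by
  show Finset.sum {e1, e2} f = _
  rw [Finset.sum_insert (by decide), Finset.sum_singleton]

lemma mul_def (i j : S) : i * j = i := by cases i <;> cases j <;> rfl

lemma single_mul {k : Type*} [Field k] (i j : S) (a b : k) :
    MonoidAlgebra.single (R := k) i a * MonoidAlgebra.single j b
      = MonoidAlgebra.single i (a * b) := by
  rw [MonoidAlgebra.single_mul_single, mul_def]

lemma coeff_add {k : Type*} [Field k] (x y : MonoidAlgebra k S) (i : S) :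
    (x + y).coeff i = x.coeff i + y.coeff i := Finsupp.add_apply x.coeff y.coeff i

lemma coeff_single {k : Type*} [Field k] (i j : S) (c : k) :
    (MonoidAlgebra.single i c : MonoidAlgebra k S).coeff j = if i = j then c else 0 :=
  Finsupp.single_apply

lemma decomp {k : Type*} [Field k] (x : MonoidAlgebra k S) :
    ∃ x1 x2 : k, x = MonoidAlgebra.single e1 x1 + MonoidAlgebra.single e2 x2 := by
  refine ⟨x.coeff e1, x.coeff e2, ?_⟩
  apply MonoidAlgebra.ext; apply Finsupp.ext; intro i
  rw [MonoidAlgebra.coeff_add, Finsupp.add_apply]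
  cases i <;> simp [MonoidAlgebra.coeff_single, Finsupp.single_apply]

theorem rbo_L2 {k : Type*} [Field k] [CharZero k]
    (P : MonoidAlgebra k S →ₗ[k] MonoidAlgebra k S) (C : S → S → k)
    (hC : ∀ i, P (MonoidAlgebra.single i 1) = ∑ j, MonoidAlgebra.single j (C i j)) :
    (∀ x y, P x * P y = P (x * P y) + P (P x * y)) ↔
      ((∃ a b : k, b ≠ 0 ∧ C = mat2 a (-(a ^ 2) / b) b (-a)) ∨ (∃ a : k, C = mat2 0 a 0 0)) := by
  have Psingle : ∀ (i : S) (c : k), P (MonoidAlgebra.single i c)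
      = MonoidAlgebra.single e1 (c * C i e1) + MonoidAlgebra.single e2 (c * C i e2) := by
    intro i c
    have h : MonoidAlgebra.single (R := k) i c = c • MonoidAlgebra.single i 1 := by
      rw [MonoidAlgebra.smul_single', mul_one]
    rw [h, map_smul, hC, sum_univ, smul_add, MonoidAlgebra.smul_single',
      MonoidAlgebra.smul_single']
  have key : (∀ x y, P x * P y = P (x * P y) + P (P x * y)) ↔
      (C e1 e1 * C e1 e1 + C e1 e2 * C e2 e1 = 0 ∧
       C e1 e1 * C e1 e2 + C e1 e2 * C e2 e2 = 0 ∧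
       C e2 e1 * C e1 e1 + C e2 e2 * C e2 e1 = 0 ∧
       C e2 e1 * C e1 e2 + C e2 e2 * C e2 e2 = 0) := by
    constructor
    · intro h
      have g1 := h (MonoidAlgebra.single e1 1) (MonoidAlgebra.single e1 1)
      have g2 := h (MonoidAlgebra.single e2 1) (MonoidAlgebra.single e1 1)
      simp only [Psingle, map_add, add_mul, mul_add, single_mul] at g1 g2
      have a1 := congrArg (fun z : MonoidAlgebra k S => z.coeff e1) g1
      have a2 := congrArg (fun z : MonoidAlgebra k S => z.coeff e2) g1
      have a3 := congrArg (fun z : MonoidAlgebra k S => z.coeff e1) g2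
      have a4 := congrArg (fun z : MonoidAlgebra k S => z.coeff e2) g2
      simp only [coeff_add, coeff_single, reduceCtorEq, reduceIte, if_true, if_false]
        at a1 a2 a3 a4
      exact ⟨by linear_combination -a1, by linear_combination -a2,
             by linear_combination -a3, by linear_combination -a4⟩
    · rintro ⟨E1, E2, E3, E4⟩ x y
      obtain ⟨x1, x2, rfl⟩ := decomp x
      obtain ⟨y1, y2, rfl⟩ := decomp y
      simp only [Psingle, map_add, add_mul, mul_add, single_mul]
      apply MonoidAlgebra.ext; apply Finsupp.ext; intro j
      cases j
      · simp only [coeff_add, coeff_single, reduceCtorEq, reduceIte, if_true, if_false]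
        linear_combination -((y1 + y2) * x1 * E1) - (y1 + y2) * x2 * E3
      · simp only [coeff_add, coeff_single, reduceCtorEq, reduceIte, if_true, if_false]
        linear_combination -((y1 + y2) * x1 * E2) - (y1 + y2) * x2 * E4
  rw [key]
  constructor
  · rintro ⟨E1, E2, E3, E4⟩
    by_cases hb : C e2 e1 = 0
    · right
      have h11 : C e1 e1 = 0 := by
        have : C e1 e1 * C e1 e1 = 0 := by linear_combination E1 - C e1 e2 * hb
        exact mul_self_eq_zero.mp this
      have h22 : C e2 e2 = 0 := by
        have : C e2 e2 * C e2 e2 = 0 := by linear_combination E4 - C e1 e2 * hb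
        exact mul_self_eq_zero.mp this
      exact ⟨C e1 e2, by funext i j; cases i <;> cases j <;> simp [mat2, hb, h11, h22]⟩
    · left
      refine ⟨C e1 e1, C e2 e1, hb, ?_⟩
      have h22 : C e2 e2 = -C e1 e1 := by
        have h : C e2 e1 * (C e1 e1 + C e2 e2) = 0 := by linear_combination E3
        rcases mul_eq_zero.mp h with h' | h'
        · exact absurd h' hb
        · linear_combination h'
      have h12 : C e1 e2 = -(C e1 e1 ^ 2) / C e2 e1 := by
        field_simp
        linear_combination E1
      funext i j
      cases i <;> cases j <;> simp [mat2, h22, h12]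
  · rintro (⟨a, b, hb, rfl⟩ | ⟨a, rfl⟩)
    · refine ⟨?_, ?_, ?_, ?_⟩ <;> (show _ = (0:k); simp only [mat2]; field_simp; ring)
    · refine ⟨?_, ?_, ?_, ?_⟩ <;> (simp only [mat2]; ring)

end Stmt4
end

section
/- Let S = CS(1) be the null semigroup of order 3, i.e. e_i e_j = e_1 for all i, j in {1,2,3}. A k-linear operator P on k[S] is a Rota-Baxter operator of weight zero if and only if its matrix C_P equals [[a, b, -a-b], [c, d, -c-d], [e, f, -e-f]] for some a, b, c, d, e, f in k; equivalently, if and only if each row of C_P sums to zero. -/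
/- Statement 5: RBOs of weight zero on the semigroup algebra of the null semigroup CS(1) of order 3. -/

namespace Stmt5

inductive S : Type
  | e1 | e2 | e3
  deriving DecidableEq

open S

instance instFintypeS : Fintype S :=
  ⟨{e1, e2, e3}, by intro x; cases x <;> decide⟩

/-- Multiplication table of the semigroup. -/
instance : Mul S := ⟨fun a b => match a, b with
  | e1, e1 => e1
  | e1, e2 => e1
  | e1, e3 => e1
  | e2, e1 => e1
  | e2, e2 => e1
  | e2, e3 => e1
  | e3, e1 => e1
  | e3, e2 => e1
  | e3, e3 => e1⟩

instance : Semigroup S := { mul_assoc := by decide }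

/-- The 3×3 matrix (rows = first index) as a function `S → S → k`. -/
def mat3 {k : Type*} (a11 a12 a13 a21 a22 a23 a31 a32 a33 : k) : S → S → k :=
  fun i j => match i, j with
  | e1, e1 => a11 | e1, e2 => a12 | e1, e3 => a13
  | e2, e1 => a21 | e2, e2 => a22 | e2, e3 => a23
  | e3, e1 => a31 | e3, e2 => a32 | e3, e3 => a33

lemma mul_eq_e1 (s t : S) : s * t = e1 := by cases s <;> cases t <;> rfl

lemma sum_S {M : Type*} [AddCommMonoid M] (g : S → M) : ∑ i, g i = g e1 + g e2 + g e3 := by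
  have : (Finset.univ : Finset S) = {e1, e2, e3} := by decide
  rw [this]
  simp [Finset.sum_insert, add_assoc]

lemma MA_add_apply {k : Type*} [Field k] (x y : MonoidAlgebra k S) (t : S) :
    (x + y).coeff t = x.coeff t + y.coeff t := rfl

lemma MA_smul_apply {k : Type*} [Field k] (a : k) (x : MonoidAlgebra k S) (t : S) :
    (a • x).coeff t = a * x.coeff t := rfl

lemma MA_single_apply {k : Type*} [Field k] (i t : S) (v : k) :
    (MonoidAlgebra.single i v : MonoidAlgebra k S).coeff t = if i = t then v else 0 :=
  Finsupp.single_apply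

lemma MA_univ_sum_single {k : Type*} [Field k] (x : MonoidAlgebra k S) :
    ∑ s, MonoidAlgebra.single s (x.coeff s) = x := by
  apply MonoidAlgebra.coeff_injective
  simp [MonoidAlgebra.coeff_sum, MonoidAlgebra.coeff_single, Finsupp.univ_sum_single]

lemma MA_single_sum {k : Type*} [Field k] {ι : Type*} (s : Finset ι) (m : S) (f : ι → k) :
    (MonoidAlgebra.single m (∑ i ∈ s, f i) : MonoidAlgebra k S)
      = ∑ i ∈ s, MonoidAlgebra.single m (f i) := by
  apply MonoidAlgebra.coeff_injective
  simp [MonoidAlgebra.coeff_sum, MonoidAlgebra.coeff_single, Finsupp.single_finset_sum]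

lemma mul_eq {k : Type*} [Field k] (x y : MonoidAlgebra k S) :
    x * y = MonoidAlgebra.single e1 ((∑ s, x.coeff s) * (∑ t, y.coeff t)) := by
  conv_lhs => rw [← MA_univ_sum_single x, ← MA_univ_sum_single y]
  rw [Finset.sum_mul_sum, Finset.sum_mul]
  simp only [Finset.mul_sum, MonoidAlgebra.single_mul_single, mul_eq_e1,
    MA_single_sum]

theorem rbo_CS1 {k : Type*} [Field k] [CharZero k]
    (P : MonoidAlgebra k S →ₗ[k] MonoidAlgebra k S) (C : S → S → k)
    (hC : ∀ i, P (MonoidAlgebra.single i 1) = ∑ j, MonoidAlgebra.single j (C i j)) :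
    (∀ x y, P x * P y = P (x * P y) + P (P x * y)) ↔
      (∃ a b c d e f : k, C = mat3 a b (-a - b) c d (-c - d) e f (-e - f)) := by
  have hσP : ∀ i, (∑ t, (P (MonoidAlgebra.single i 1)).coeff t) = ∑ j, C i j := by
    intro i
    rw [hC i]
    simp only [sum_S]
    simp [MA_add_apply, MA_single_apply]
  have hσ1 : ∀ i, (∑ t : S, (MonoidAlgebra.single i (1:k) : MonoidAlgebra k S).coeff t) = 1 := by
    intro i; simp only [sum_S]; cases i <;> simp [MA_single_apply]
  have hPe1 : ∀ a : k, P (MonoidAlgebra.single e1 a)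
      = a • ∑ t, MonoidAlgebra.single t (C e1 t) := by
    intro a
    rw [show (MonoidAlgebra.single e1 a : MonoidAlgebra k S) = a • MonoidAlgebra.single e1 (1:k) by
      simp [MonoidAlgebra.smul_single'], map_smul, hC]
  constructor
  · intro h
    have key : ∀ i j : S, (MonoidAlgebra.single e1 ((∑ s, C i s) * (∑ s, C j s)) :
        MonoidAlgebra k S) =
        ((∑ s, C j s) + (∑ s, C i s)) • ∑ t, MonoidAlgebra.single t (C e1 t) := by
      intro i j
      have h1 := h (MonoidAlgebra.single i 1) (MonoidAlgebra.single j 1)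
      rw [mul_eq (P _) (P _), mul_eq (MonoidAlgebra.single i 1) (P _),
        mul_eq (P _) (MonoidAlgebra.single j 1), hσP i, hσP j, hσ1 i, hσ1 j, one_mul, mul_one,
        hPe1, hPe1] at h1
      rw [h1, add_smul]
    have coord : ∀ i j t : S,
        (MonoidAlgebra.single e1 ((∑ s, C i s) * (∑ s, C j s)) : MonoidAlgebra k S).coeff t =
        ((∑ s, C j s) + (∑ s, C i s)) *
          ((∑ t', MonoidAlgebra.single t' (C e1 t') : MonoidAlgebra k S).coeff t) := by
      intro i j t
      have h2 := congrArg (fun z : MonoidAlgebra k S => z.coeff t) (key i j)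
      simpa [MA_smul_apply] using h2
    have E1 : ∀ i j : S, (C i e1 + C i e2 + C i e3) * (C j e1 + C j e2 + C j e3)
        = (C j e1 + C j e2 + C j e3 + (C i e1 + C i e2 + C i e3)) * C e1 e1 := by
      intro i j
      have h2 := coord i j e1
      simp only [sum_S, MA_add_apply, MA_single_apply, reduceIte, reduceCtorEq, if_false,
        add_zero, zero_add, mul_zero] at h2
      linear_combination h2
    have E2 : ∀ i j : S,
        (C j e1 + C j e2 + C j e3 + (C i e1 + C i e2 + C i e3)) * C e1 e2 = 0 := by
      intro i j
      have h2 := coord i j e2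
      simp only [sum_S, MA_add_apply, MA_single_apply, reduceIte, reduceCtorEq, if_false,
        add_zero, zero_add, mul_zero] at h2
      linear_combination -h2
    have E3 : ∀ i j : S,
        (C j e1 + C j e2 + C j e3 + (C i e1 + C i e2 + C i e3)) * C e1 e3 = 0 := by
      intro i j
      have h2 := coord i j e3
      simp only [sum_S, MA_add_apply, MA_single_apply, reduceIte, reduceCtorEq, if_false,
        add_zero, zero_add, mul_zero] at h2
      linear_combination -h2
    have h10 : C e1 e1 + C e1 e2 + C e1 e3 = 0 := by
      have q1 := E1 e1 e1
      have q2 := E2 e1 e1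
      have q3 := E3 e1 e1
      have hsq : (C e1 e1 + C e1 e2 + C e1 e3) * (C e1 e1 + C e1 e2 + C e1 e3) = 0 := by
        linear_combination -q1 + q2 + q3
      exact mul_self_eq_zero.mp hsq
    have h0 : ∀ i : S, C i e1 + C i e2 + C i e3 = 0 := by
      intro i
      have q1 := E1 i i
      have q2 := E1 i e1
      have hsq : (C i e1 + C i e2 + C i e3) * (C i e1 + C i e2 + C i e3) = 0 := by
        linear_combination q1 - 2 * q2 + (2 * (C i e1 + C i e2 + C i e3) - 2 * C e1 e1) * h10
      exact mul_self_eq_zero.mp hsq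
    refine ⟨C e1 e1, C e1 e2, C e2 e1, C e2 e2, C e3 e1, C e3 e2, ?_⟩
    funext i j
    have hi : C i e1 + C i e2 + C i e3 = 0 := h0 i
    cases i <;> cases j <;> simp [mat3] <;> linear_combination hi
  · rintro ⟨a, b, c, d, e, f, rfl⟩ x y
    have h0 : ∀ i : S, (∑ s, mat3 a b (-a-b) c d (-c-d) e f (-e-f) i s) = 0 := by
      intro i
      rw [sum_S]
      cases i <;> simp [mat3]
    have hs : ∀ (z : MonoidAlgebra k S) (i : S),
        ∑ t, (z.coeff i • P (MonoidAlgebra.single i 1) : MonoidAlgebra k S).coeff t = 0 := by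
      intro z i
      simp only [MA_smul_apply]
      rw [← Finset.mul_sum, hσP i, h0 i, mul_zero]
    have hσPz : ∀ z : MonoidAlgebra k S, ∑ t, (P z).coeff t = 0 := by
      intro z
      have hPz : P z = ∑ i, z.coeff i • P (MonoidAlgebra.single i 1) := by
        conv_lhs => rw [← MA_univ_sum_single z]
        rw [map_sum]
        refine Finset.sum_congr rfl fun i _ => ?_
        rw [show (MonoidAlgebra.single i (z.coeff i) : MonoidAlgebra k S)
            = z.coeff i • MonoidAlgebra.single i (1:k) by simp [MonoidAlgebra.smul_single'], map_smul]
      rw [hPz, sum_S (fun i => z.coeff i • P (MonoidAlgebra.single i 1))]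
      simp only [MA_add_apply]
      rw [Finset.sum_add_distrib, Finset.sum_add_distrib, hs z e1, hs z e2, hs z e3]
      simp
    rw [mul_eq (P x) (P y), hσPz, zero_mul,

      mul_eq x (P y), hσPz, mul_zero,
      mul_eq (P x) y, hσPz, zero_mul]
    simp

end Stmt5
end

section
/- Let S = CS(2) be the commutative semigroup of order 3 in which e_i e_j = e_1 for all (i,j) except e_3 e_3 = e_2. A k-linear operator P on k[S] is a Rota-Baxter operator of weight zero if and only if its matrix C_P is either of the form [[a, -a, 0], [b, -b, 0], [c, -c, 0]] for some a, b, c in k, or of the form [[a, -a, 0], [b, -b, 0], [c, 2(b-a)-c, 2(a-b)]] for some a, b, c in k with a not equal to b. -/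
/- Statement 6: RBOs of weight zero on the semigroup algebra of CS(2). -/

namespace Stmt6

inductive S : Type
  | e1 | e2 | e3
  deriving DecidableEq

open S

instance : Fintype S := ⟨{e1, e2, e3}, fun x => by cases x <;> simp⟩

/-- Multiplication table of the semigroup. -/
instance : Mul S := ⟨fun a b => match a, b with
  | e1, e1 => e1
  | e1, e2 => e1
  | e1, e3 => e1
  | e2, e1 => e1
  | e2, e2 => e1
  | e2, e3 => e1
  | e3, e1 => e1
  | e3, e2 => e1
  | e3, e3 => e2⟩

instance : Semigroup S := { mul_assoc := by decide }

/-- The 3×3 matrix (rows = first index) as a function `S → S → k`. -/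
def mat3 {k : Type*} (a11 a12 a13 a21 a22 a23 a31 a32 a33 : k) : S → S → k :=
  fun i j => match i, j with
  | e1, e1 => a11 | e1, e2 => a12 | e1, e3 => a13
  | e2, e1 => a21 | e2, e2 => a22 | e2, e3 => a23
  | e3, e1 => a31 | e3, e2 => a32 | e3, e3 => a33

section Aux

variable {k : Type*} [Field k]

open MonoidAlgebra

lemma m11 : e1 * e1 = e1 := rfl
lemma m12 : e1 * e2 = e1 := rfl
lemma m13 : e1 * e3 = e1 := rfl
lemma m21 : e2 * e1 = e1 := rfl
lemma m22 : e2 * e2 = e1 := rfl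
lemma m23 : e2 * e3 = e1 := rfl
lemma m31 : e3 * e1 = e1 := rfl
lemma m32 : e3 * e2 = e1 := rfl
lemma m33 : e3 * e3 = e2 := rfl

lemma sum_S {M : Type*} [AddCommMonoid M] (f : S → M) :
    ∑ j, f j = f e1 + f e2 + f e3 := by
  have h : (Finset.univ : Finset S) = {e1, e2, e3} := by decide
  rw [h]
  simp [Finset.sum_insert, add_assoc]

lemma reduce (P : MonoidAlgebra k S →ₗ[k] MonoidAlgebra k S) :
    (∀ x y, P x * P y = P (x * P y) + P (P x * y)) ↔
    (∀ i j : S, P (single i 1) * P (single j 1)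
      = P (single i 1 * P (single j 1)) + P (P (single i 1) * single j 1)) := by
  constructor
  · exact fun h i j => h _ _
  · intro h x y
    let B : MonoidAlgebra k S →ₗ[k] MonoidAlgebra k S →ₗ[k] MonoidAlgebra k S :=
      LinearMap.mul k (MonoidAlgebra k S)
    let B₁ := B.compl₁₂ P P
    let B₂ := ((B.compl₁₂ LinearMap.id P).compr₂ P) + ((B.compl₁₂ P LinearMap.id).compr₂ P)
    have hB : B₁ = B₂ := by
      refine MonoidAlgebra.lhom_ext' (fun i => LinearMap.ext fun r => ?_)
      rw [LinearMap.comp_apply, LinearMap.comp_apply, MonoidAlgebra.lsingle_apply]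
      refine MonoidAlgebra.lhom_ext' (fun j => LinearMap.ext fun s => ?_)
      rw [LinearMap.comp_apply, LinearMap.comp_apply, MonoidAlgebra.lsingle_apply]
      have h1 : (single i r : MonoidAlgebra k S) = r • single i 1 := by
        rw [MonoidAlgebra.smul_single', mul_one]
      have h2 : (single j s : MonoidAlgebra k S) = s • single j 1 := by
        rw [MonoidAlgebra.smul_single', mul_one]
      rw [h1, h2, map_smul, map_smul, LinearMap.smul_apply, map_smul, map_smul,
        LinearMap.smul_apply]
      congr 1
      congr 1
      simpa [B₁, B₂, B, LinearMap.mul_apply'] using h i j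
    have h2 := DFunLike.congr_fun (DFunLike.congr_fun hB x) y
    simp only [B₁, B₂, B, LinearMap.compl₁₂_apply, LinearMap.compr₂_apply,
      LinearMap.add_apply, LinearMap.mul_apply', LinearMap.id_coe, id_eq] at h2
    exact h2

lemma Psingle (P : MonoidAlgebra k S →ₗ[k] MonoidAlgebra k S) (C : S → S → k)
    (hC : ∀ i, P (MonoidAlgebra.single i 1) = ∑ j, MonoidAlgebra.single j (C i j))
    (p : S) (r : k) :
    P (single p r) = single e1 (r * C p e1) + single e2 (r * C p e2) + single e3 (r * C p e3) := by
  have h1 : (single p r : MonoidAlgebra k S) = r • single p 1 := by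
    rw [MonoidAlgebra.smul_single', mul_one]
  rw [h1, map_smul, hC p, sum_S]
  simp [MonoidAlgebra.smul_single']

lemma myext (x y : MonoidAlgebra k S)
    (h : ∀ s, Finsupp.applyAddHom (M := k) s x.coeff = Finsupp.applyAddHom (M := k) s y.coeff) : x = y :=
  MonoidAlgebra.ext (Finsupp.ext h)

end Aux

set_option maxHeartbeats 1000000 in
open MonoidAlgebra in
lemma forward_aux {k : Type*} [Field k] [CharZero k]
    (P : MonoidAlgebra k S →ₗ[k] MonoidAlgebra k S) (C : S → S → k)
    (hC : ∀ i, P (MonoidAlgebra.single i 1) = ∑ j, MonoidAlgebra.single j (C i j))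
    (h : ∀ i j : S, P (single i 1) * P (single j 1)
      = P (single i 1 * P (single j 1)) + P (P (single i 1) * single j 1)) :
    ((∃ a b c : k, C = mat3 a (-a) 0 b (-b) 0 c (-c) 0) ∨ (∃ a b c : k, a ≠ b ∧ C = mat3 a (-a) 0 b (-b) 0 c (2 * (b - a) - c) (2 * (a - b)))) := by
    set a1 := C e1 e1 with ha1d
    set a2 := C e1 e2 with ha2d
    set a3 := C e1 e3 with ha3d
    set b1 := C e2 e1 with hb1d
    set b2 := C e2 e2 with hb2d
    set b3 := C e2 e3 with hb3d
    set c1 := C e3 e1 with hc1d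
    set c2 := C e3 e2 with hc2d
    set c3 := C e3 e3 with hc3d
    have ext_eq : ∀ i j : S, ∀ s : S,
        Finsupp.applyAddHom (M := k) s (P (single i 1) * P (single j 1)).coeff
          = Finsupp.applyAddHom (M := k) s
              (P (single i 1 * P (single j 1)) + P (P (single i 1) * single j 1)).coeff :=
      fun i j s => congrArg (fun z => Finsupp.applyAddHom (M := k) s z.coeff) (h i j)
    have E1 : (2:k) * (a1 + a2 + a3) * a3 = 0 := by
      have h3 := ext_eq e1 e1 e3
      simp only [Psingle P C hC, add_mul, mul_add, MonoidAlgebra.single_mul_single,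
        m11, m12, m13, m21, m22, m23, m31, m32, m33, map_add,
        Finsupp.applyAddHom_apply, MonoidAlgebra.coeff_add, MonoidAlgebra.coeff_single, Finsupp.single_apply,
        reduceCtorEq, if_false, if_true, if_pos rfl, add_zero, zero_add, one_mul, mul_one] at h3
      simp only [← ha1d, ← ha2d, ← ha3d, ← hb1d, ← hb2d, ← hb3d, ← hc1d, ← hc2d, ← hc3d] at h3
      linear_combination -h3
    have E2 : a3 ^ 2 = 2 * (a1 + a2 + a3) * a2 := by
      have h3 := ext_eq e1 e1 e2
      simp only [Psingle P C hC, add_mul, mul_add, MonoidAlgebra.single_mul_single,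
        m11, m12, m13, m21, m22, m23, m31, m32, m33, map_add,
        Finsupp.applyAddHom_apply, MonoidAlgebra.coeff_add, MonoidAlgebra.coeff_single, Finsupp.single_apply,
        reduceCtorEq, if_false, if_true, if_pos rfl, add_zero, zero_add, one_mul, mul_one] at h3
      simp only [← ha1d, ← ha2d, ← ha3d, ← hb1d, ← hb2d, ← hb3d, ← hc1d, ← hc2d, ← hc3d] at h3
      linear_combination h3
    have E3 : (a1 + a2 + a3) ^ 2 - a3 ^ 2 = 2 * (a1 + a2 + a3) * a1 := by
      have h3 := ext_eq e1 e1 e1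
      simp only [Psingle P C hC, add_mul, mul_add, MonoidAlgebra.single_mul_single,
        m11, m12, m13, m21, m22, m23, m31, m32, m33, map_add,
        Finsupp.applyAddHom_apply, MonoidAlgebra.coeff_add, MonoidAlgebra.coeff_single, Finsupp.single_apply,
        reduceCtorEq, if_false, if_true, if_pos rfl, add_zero, zero_add, one_mul, mul_one] at h3
      simp only [← ha1d, ← ha2d, ← ha3d, ← hb1d, ← hb2d, ← hb3d, ← hc1d, ← hc2d, ← hc3d] at h3
      linear_combination h3
    have E4 : (b1 + b2 + b3) ^ 2 - b3 ^ 2 = 2 * (b1 + b2 + b3) * a1 := by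
      have h3 := ext_eq e2 e2 e1
      simp only [Psingle P C hC, add_mul, mul_add, MonoidAlgebra.single_mul_single,
        m11, m12, m13, m21, m22, m23, m31, m32, m33, map_add,
        Finsupp.applyAddHom_apply, MonoidAlgebra.coeff_add, MonoidAlgebra.coeff_single, Finsupp.single_apply,
        reduceCtorEq, if_false, if_true, if_pos rfl, add_zero, zero_add, one_mul, mul_one] at h3
      simp only [← ha1d, ← ha2d, ← ha3d, ← hb1d, ← hb2d, ← hb3d, ← hc1d, ← hc2d, ← hc3d] at h3
      linear_combination h3
    have E6 : (0:k) = b1 * a3 + b2 * a3 + b3 ^ 2 + (c1 + c2 + c3) * a3 := by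
      have h3 := ext_eq e3 e2 e3
      simp only [Psingle P C hC, add_mul, mul_add, MonoidAlgebra.single_mul_single,
        m11, m12, m13, m21, m22, m23, m31, m32, m33, map_add,
        Finsupp.applyAddHom_apply, MonoidAlgebra.coeff_add, MonoidAlgebra.coeff_single, Finsupp.single_apply,
        reduceCtorEq, if_false, if_true, if_pos rfl, add_zero, zero_add, one_mul, mul_one] at h3
      simp only [← ha1d, ← ha2d, ← ha3d, ← hb1d, ← hb2d, ← hb3d, ← hc1d, ← hc2d, ← hc3d] at h3
      linear_combination h3
    have E7 : (a1 + a2 + a3) * (b1 + b2 + b3) - a3 * b3 = (a1 + a2 + a3 + b1 + b2 + b3) * a1 := by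
      have h3 := ext_eq e1 e2 e1
      simp only [Psingle P C hC, add_mul, mul_add, MonoidAlgebra.single_mul_single,
        m11, m12, m13, m21, m22, m23, m31, m32, m33, map_add,
        Finsupp.applyAddHom_apply, MonoidAlgebra.coeff_add, MonoidAlgebra.coeff_single, Finsupp.single_apply,
        reduceCtorEq, if_false, if_true, if_pos rfl, add_zero, zero_add, one_mul, mul_one] at h3
      simp only [← ha1d, ← ha2d, ← ha3d, ← hb1d, ← hb2d, ← hb3d, ← hc1d, ← hc2d, ← hc3d] at h3
      linear_combination h3
    have E8 : (c1 + c2 + c3) ^ 2 - c3 ^ 2 = 2 * ((c1 + c2) * a1 + c3 * b1) := by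
      have h3 := ext_eq e3 e3 e1
      simp only [Psingle P C hC, add_mul, mul_add, MonoidAlgebra.single_mul_single,
        m11, m12, m13, m21, m22, m23, m31, m32, m33, map_add,
        Finsupp.applyAddHom_apply, MonoidAlgebra.coeff_add, MonoidAlgebra.coeff_single, Finsupp.single_apply,
        reduceCtorEq, if_false, if_true, if_pos rfl, add_zero, zero_add, one_mul, mul_one] at h3
      simp only [← ha1d, ← ha2d, ← ha3d, ← hb1d, ← hb2d, ← hb3d, ← hc1d, ← hc2d, ← hc3d] at h3
      linear_combination h3
    have E9 : c3 ^ 2 = 2 * ((c1 + c2) * a2 + c3 * b2) := by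
      have h3 := ext_eq e3 e3 e2
      simp only [Psingle P C hC, add_mul, mul_add, MonoidAlgebra.single_mul_single,
        m11, m12, m13, m21, m22, m23, m31, m32, m33, map_add,
        Finsupp.applyAddHom_apply, MonoidAlgebra.coeff_add, MonoidAlgebra.coeff_single, Finsupp.single_apply,
        reduceCtorEq, if_false, if_true, if_pos rfl, add_zero, zero_add, one_mul, mul_one] at h3
      simp only [← ha1d, ← ha2d, ← ha3d, ← hb1d, ← hb2d, ← hb3d, ← hc1d, ← hc2d, ← hc3d] at h3
      linear_combination h3
    have ha3 : a3 = 0 := by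
      have k1 : a3 ^ 3 = 0 := by linear_combination a3 * E2 + a2 * E1
      exact pow_eq_zero_iff (by norm_num) |>.mp k1
    have hb3 : b3 = 0 := by
      have k1 : b3 ^ 2 = 0 := by
        linear_combination (-1 : k) * E6 - (b1 + b2 + c1 + c2 + c3) * ha3
      exact pow_eq_zero_iff (by norm_num) |>.mp k1
    have hs1 : a2 = -a1 := by
      have k1 : (a1 + a2) ^ 2 = 0 := by
        linear_combination (-1 : k) * E3 - E2 + a3 * ha3
      have h0 := pow_eq_zero_iff (n := 2) (by norm_num) |>.mp k1
      linear_combination h0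
    rw [hb3] at E4
    rw [ha3, hb3, hs1] at E7
    have hs2 : b2 = -b1 := by
      have k1 : (b1 + b2) ^ 2 = 0 := by
        linear_combination E4 - 2 * E7
      have h0 := pow_eq_zero_iff (n := 2) (by norm_num) |>.mp k1
      linear_combination h0
    rw [hs1, hs2] at E9
    have hs3 : c2 = -c1 - c3 := by
      have k1 : (c1 + c2 + c3) ^ 2 = 0 := by
        linear_combination E8 + E9
      have h0 := pow_eq_zero_iff (n := 2) (by norm_num) |>.mp k1
      linear_combination h0
    rw [hs3] at E9
    have hfin : c3 * (c3 - 2 * (a1 - b1)) = 0 := by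
      linear_combination E9
    by_cases hc3 : c3 = 0
    · refine Or.inl ⟨a1, b1, c1, ?_⟩
      funext i j
      cases i <;> cases j <;>
          simp only [mat3, ← ha1d, ← ha2d, ← ha3d, ← hb1d, ← hb2d, ← hb3d, ← hc1d, ← hc2d,
            ← hc3d] <;>
        first
          | rfl
          | linear_combination hs1
          | linear_combination ha3
          | linear_combination hs2
          | linear_combination hb3
          | linear_combination hs3 - hc3
          | linear_combination hc3
    · have hc3eq : c3 = 2 * (a1 - b1) := by
        have h0 := (mul_eq_zero.mp hfin).resolve_left hc3
        linear_combination h0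
      have hab : a1 ≠ b1 := by
        intro he
        exact hc3 (by rw [hc3eq, he]; ring)
      refine Or.inr ⟨a1, b1, c1, hab, ?_⟩
      funext i j
      cases i <;> cases j <;>
          simp only [mat3, ← ha1d, ← ha2d, ← ha3d, ← hb1d, ← hb2d, ← hb3d, ← hc1d, ← hc2d,
            ← hc3d] <;>
        first
          | rfl
          | linear_combination hs1
          | linear_combination ha3
          | linear_combination hs2
          | linear_combination hb3
          | linear_combination hs3 - hc3eq
          | linear_combination hc3eq

set_option maxHeartbeats 2000000 in
open MonoidAlgebra in
lemma backward_aux {k : Type*} [Field k]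
    (P : MonoidAlgebra k S →ₗ[k] MonoidAlgebra k S) (a b c : k)
    (a11 a12 a13 a21 a22 a23 a31 a32 a33 : k)
    (hC : ∀ i, P (MonoidAlgebra.single i 1)
      = ∑ j, MonoidAlgebra.single j (mat3 a11 a12 a13 a21 a22 a23 a31 a32 a33 i j))
    (h1 : a12 = -a11) (h2 : a13 = 0) (h3 : a22 = -a21) (h4 : a23 = 0)
    (h5 : a32 = -a31 - a33) (h6 : a33 * (a33 - 2 * (a11 - a21)) = 0) :
    ∀ i j : S, P (single i 1) * P (single j 1)
      = P (single i 1 * P (single j 1)) + P (P (single i 1) * single j 1) := by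
  intro i j
  cases i <;> cases j <;>
  · simp only [Psingle P _ hC, add_mul, mul_add, MonoidAlgebra.single_mul_single,
      m11, m12, m13, m21, m22, m23, m31, m32, m33, map_add, one_mul, mul_one, mat3]
    apply myext
    intro s
    cases s <;>
    · simp only [map_add, Finsupp.applyAddHom_apply, MonoidAlgebra.coeff_add, MonoidAlgebra.coeff_single, Finsupp.single_apply,
        reduceCtorEq, if_false, if_true, if_pos rfl, add_zero, zero_add]
      subst h1 h2 h3 h4 h5
      first
        | ring1
        | linear_combination h6
        | linear_combination -h6

theorem rbo_CS2 {k : Type*} [Field k] [CharZero k]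
    (P : MonoidAlgebra k S →ₗ[k] MonoidAlgebra k S) (C : S → S → k)
    (hC : ∀ i, P (MonoidAlgebra.single i 1) = ∑ j, MonoidAlgebra.single j (C i j)) :
    (∀ x y, P x * P y = P (x * P y) + P (P x * y)) ↔
      ((∃ a b c : k, C = mat3 a (-a) 0 b (-b) 0 c (-c) 0) ∨ (∃ a b c : k, a ≠ b ∧ C = mat3 a (-a) 0 b (-b) 0 c (2 * (b - a) - c) (2 * (a - b)))) := by

  rw [reduce]
  constructor
  · exact forward_aux P C hC
  · intro h
    rcases h with ⟨a, b, c, hmat⟩ | ⟨a, b, c, hab, hmat⟩ <;> subst hmat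
    · exact backward_aux P a b c _ _ _ _ _ _ _ _ _ hC rfl rfl rfl rfl (by ring) (by ring)
    · exact backward_aux P a b c _ _ _ _ _ _ _ _ _ hC rfl rfl rfl rfl (by ring) (by ring)


end Stmt6
end

section
/- Let S = CS(3) be the commutative semigroup of order 3 in which e_2 e_2 = e_2 and all other products e_i e_j equal e_1. A k-linear operator P on k[S] is a Rota-Baxter operator of weight zero if and only if its matrix C_P equals [[a, 0, -a], [b, 0, -b], [c, 0, -c]] for some a, b, c in k. -/
/- Statement 7: RBOs of weight zero on the semigroup algebra of CS(3). -/

namespace Stmt7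

inductive S : Type
  | e1 | e2 | e3
  deriving DecidableEq

open S

instance : Fintype S := ⟨{e1, e2, e3}, fun x => by cases x <;> simp⟩

/-- Multiplication table of the semigroup. -/
instance : Mul S := ⟨fun a b => match a, b with
  | e1, e1 => e1
  | e1, e2 => e1
  | e1, e3 => e1
  | e2, e1 => e1
  | e2, e2 => e2
  | e2, e3 => e1
  | e3, e1 => e1
  | e3, e2 => e1
  | e3, e3 => e1⟩

instance : Semigroup S := { mul_assoc := by decide }

/-- The 3×3 matrix (rows = first index) as a function `S → S → k`. -/
def mat3 {k : Type*} (a11 a12 a13 a21 a22 a23 a31 a32 a33 : k) : S → S → k :=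
  fun i j => match i, j with
  | e1, e1 => a11 | e1, e2 => a12 | e1, e3 => a13
  | e2, e1 => a21 | e2, e2 => a22 | e2, e3 => a23
  | e3, e1 => a31 | e3, e2 => a32 | e3, e3 => a33

@[simp] lemma m11 : (e1*e1 : S) = e1 := rfl
@[simp] lemma m12 : (e1*e2 : S) = e1 := rfl
@[simp] lemma m13 : (e1*e3 : S) = e1 := rfl
@[simp] lemma m21 : (e2*e1 : S) = e1 := rfl
@[simp] lemma m22 : (e2*e2 : S) = e2 := rfl
@[simp] lemma m23 : (e2*e3 : S) = e1 := rfl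
@[simp] lemma m31 : (e3*e1 : S) = e1 := rfl
@[simp] lemma m32 : (e3*e2 : S) = e1 := rfl
@[simp] lemma m33 : (e3*e3 : S) = e1 := rfl

lemma sum_S {M : Type*} [AddCommMonoid M] (f : S → M) : ∑ x, f x = f e1 + f e2 + f e3 := by
  have h : (Finset.univ : Finset S) = {e1, e2, e3} := by decide
  rw [h, Finset.sum_insert (by decide), Finset.sum_insert (by decide), Finset.sum_singleton,
    add_assoc]

@[simp] lemma ma_add_apply {k : Type*} [Semiring k] (f g : MonoidAlgebra k S) (t : S) :
    (f + g).coeff t = f.coeff t + g.coeff t := Finsupp.add_apply f.coeff g.coeff t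

@[simp] lemma ma_smul_apply {k : Type*} [Semiring k] (c : k) (f : MonoidAlgebra k S) (t : S) :
    (c • f).coeff t = c * f.coeff t := Finsupp.smul_apply c f.coeff t

@[simp] lemma ma_sub_apply {k : Type*} [Ring k] (f g : MonoidAlgebra k S) (t : S) :
    (f - g).coeff t = f.coeff t - g.coeff t := Finsupp.sub_apply f.coeff g.coeff t

@[simp] lemma ma_single_apply {k : Type*} [Semiring k] (s : S) (c : k) (t : S) :
    (MonoidAlgebra.single s c).coeff t = if s = t then c else 0 := Finsupp.single_apply

@[simp] lemma ma_sum_apply {k : Type*} [Semiring k] (f : S → MonoidAlgebra k S) (t : S) :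
    (∑ s, f s).coeff t = ∑ s, (f s).coeff t := by
  rw [sum_S, sum_S (fun s => (f s).coeff t)]; simp

lemma decomp {k : Type*} [Semiring k] (x : MonoidAlgebra k S) :
    x = ∑ s, MonoidAlgebra.single s (x.coeff s) := by
  ext t
  rw [ma_sum_apply, sum_S (fun s => (MonoidAlgebra.single s (x.coeff s) : MonoidAlgebra k S).coeff t)]
  cases t <;> simp

lemma mulu {k : Type*} [Field k] (x : MonoidAlgebra k S) :
    x * (MonoidAlgebra.single e1 1 - MonoidAlgebra.single e3 (1:k)) = 0 := by
  conv_lhs => rw [decomp x]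
  rw [Finset.sum_mul]
  refine Finset.sum_eq_zero fun s _ => ?_
  rw [mul_sub, MonoidAlgebra.single_mul_single, MonoidAlgebra.single_mul_single]
  cases s <;> simp

lemma umul {k : Type*} [Field k] (y : MonoidAlgebra k S) :
    (MonoidAlgebra.single e1 1 - MonoidAlgebra.single e3 (1:k)) * y = 0 := by
  conv_lhs => rw [decomp y]
  rw [Finset.mul_sum]
  refine Finset.sum_eq_zero fun s _ => ?_
  rw [sub_mul, MonoidAlgebra.single_mul_single, MonoidAlgebra.single_mul_single]
  cases s <;> simp

theorem rbo_CS3 {k : Type*} [Field k] [CharZero k]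
    (P : MonoidAlgebra k S →ₗ[k] MonoidAlgebra k S) (C : S → S → k)
    (hC : ∀ i, P (MonoidAlgebra.single i 1) = ∑ j, MonoidAlgebra.single j (C i j)) :
    (∀ x y, P x * P y = P (x * P y) + P (P x * y)) ↔
      (∃ a b c : k, C = mat3 a 0 (-a) b 0 (-b) c 0 (-c)) := by
  have hsingle : ∀ (s : S) (d : k), MonoidAlgebra.single s d = d • MonoidAlgebra.single s 1 := by
    intro s d; rw [MonoidAlgebra.smul_single', mul_one]
  constructor
  · intro h
    have key : ∀ i j t : S,
        (∑ p, ∑ q, (if p*q = t then C i p * C j q else 0)) =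
        (∑ q, C j q * C (i*q) t) + (∑ p, C i p * C (p*j) t) := by
      intro i j t
      have h1 := h (MonoidAlgebra.single i 1) (MonoidAlgebra.single j 1)
      rw [hC i, hC j] at h1
      have ee2 : (MonoidAlgebra.single i 1 : MonoidAlgebra k S) *
          ∑ q, MonoidAlgebra.single q (C j q) = ∑ q, MonoidAlgebra.single (i*q) (C j q) := by
        rw [Finset.mul_sum]
        exact Finset.sum_congr rfl fun q _ => by rw [MonoidAlgebra.single_mul_single, one_mul]
      have ee3 : (∑ p, MonoidAlgebra.single p (C i p)) * MonoidAlgebra.single j (1:k)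
          = ∑ p, MonoidAlgebra.single (p*j) (C i p) := by
        rw [Finset.sum_mul]
        exact Finset.sum_congr rfl fun p _ => by rw [MonoidAlgebra.single_mul_single, mul_one]
      rw [ee2, ee3, map_sum, map_sum] at h1
      have ee4 : ∀ (s : S) (d : k), P (MonoidAlgebra.single s d)
          = ∑ r, MonoidAlgebra.single r (d * C s r) := by
        intro s d
        rw [hsingle s d, map_smul, hC s, Finset.smul_sum]
        exact Finset.sum_congr rfl fun r _ => by rw [MonoidAlgebra.smul_single']
      simp only [ee4] at h1
      have ee5 : (∑ p, MonoidAlgebra.single p (C i p)) * (∑ q, MonoidAlgebra.single q (C j q))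
          = ∑ p, ∑ q, MonoidAlgebra.single (p*q) (C i p * C j q) := by
        rw [Finset.sum_mul]
        refine Finset.sum_congr rfl fun p _ => ?_
        rw [Finset.mul_sum]
        exact Finset.sum_congr rfl fun q _ => MonoidAlgebra.single_mul_single ..
      rw [ee5] at h1
      have h2 := congrArg (fun f : MonoidAlgebra k S => f.coeff t) h1
      simp only [ma_sum_apply, ma_add_apply, ma_single_apply] at h2
      simp only [Finset.sum_ite_eq', Finset.mem_univ, if_true] at h2
      exact h2
    have E111 := key e1 e1 e1
    have E112 := key e1 e1 e2
    have E113 := key e1 e1 e3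
    have E331 := key e3 e3 e1
    have E332 := key e3 e3 e2
    have E131 := key e1 e3 e1
    have E221 := key e2 e2 e1
    have E222 := key e2 e2 e2
    have E211 := key e2 e1 e1
    simp only [sum_S, m11, m12, m13, m21, m22, m23, m31, m32, m33, if_true, if_false,
      reduceIte] at E111 E112 E113 E331 E332 E131 E221 E222 E211
    simp at E111 E112 E113 E331 E332 E131 E221 E222 E211
    have hS1 : C e1 e1 + C e1 e2 + C e1 e3 = 0 := by
      have hsq : (C e1 e1 + C e1 e2 + C e1 e3)^2 = 0 := by
        linear_combination (-1 : k) * E111 - E112 - E113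
      exact pow_eq_zero_iff two_ne_zero |>.mp hsq
    have hx2 : C e1 e2 = 0 := by
      have hsq : (C e1 e2)^2 = 0 := by
        linear_combination E112 + (2 * C e1 e2) * hS1
      exact pow_eq_zero_iff two_ne_zero |>.mp hsq
    have hx3 : C e1 e3 = -C e1 e1 := by linear_combination hS1 - hx2
    have hz2 : C e3 e2 = 0 := by
      have hsq : (C e3 e2)^2 = 0 := by
        linear_combination E332 + (2 * (C e3 e1 + C e3 e2 + C e3 e3)) * hx2
      exact pow_eq_zero_iff two_ne_zero |>.mp hsq
    have hS3 : C e3 e1 + C e3 e2 + C e3 e3 = 0 := by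
      have hsq : (C e3 e1 + C e3 e2 + C e3 e3)^2 = 0 := by
        linear_combination E331 - 2 * E131
          + (2 * (C e3 e1 + C e3 e2 + C e3 e3) - 2 * C e1 e1) * hS1
          + (-2 * C e3 e2) * hx2 + (C e3 e2) * hz2
      exact pow_eq_zero_iff two_ne_zero |>.mp hsq
    have hz3 : C e3 e3 = -C e3 e1 := by linear_combination hS3 - hz2
    have hy2 : C e2 e2 = 0 := by
      have hsq : (C e2 e2)^2 = 0 := by
        linear_combination (-1 : k) * E222 + (-2 * (C e2 e1 + C e2 e3)) * hx2
      exact pow_eq_zero_iff two_ne_zero |>.mp hsq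
    have hS2 : C e2 e1 + C e2 e2 + C e2 e3 = 0 := by
      have hsq : (C e2 e1 + C e2 e2 + C e2 e3)^2 = 0 := by
        linear_combination E221 - 2 * E211
          + (C e2 e2 + 2 * C e2 e1 - 2 * C e1 e1) * hy2
          + (2 * (C e2 e1 + C e2 e2 + C e2 e3) - 2 * C e1 e1) * hS1
          + (-2 * C e2 e2 + 2 * C e1 e1 - 2 * C e2 e1) * hx2
      exact pow_eq_zero_iff two_ne_zero |>.mp hsq
    have hy3 : C e2 e3 = -C e2 e1 := by linear_combination hS2 - hy2
    refine ⟨C e1 e1, C e2 e1, C e3 e1, ?_⟩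
    funext i j
    cases i <;> cases j
    · rfl
    · exact hx2
    · exact hx3
    · rfl
    · exact hy2
    · exact hy3
    · rfl
    · exact hz2
    · exact hz3
  · rintro ⟨a, b, c, rfl⟩
    set u : MonoidAlgebra k S := MonoidAlgebra.single e1 1 - MonoidAlgebra.single e3 1 with hu
    have hQ : ∀ s : S, ∃ d : k, P (MonoidAlgebra.single s 1) = d • u := by
      intro s
      cases s
      · exact ⟨a, by rw [hC, sum_S]; ext t; cases t <;> simp [hu, mat3]⟩
      · exact ⟨b, by rw [hC, sum_S]; ext t; cases t <;> simp [hu, mat3]⟩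
      · exact ⟨c, by rw [hC, sum_S]; ext t; cases t <;> simp [hu, mat3]⟩
    have hP : ∀ x : MonoidAlgebra k S, ∃ d : k, P x = d • u := by
      intro x
      obtain ⟨d1, h1⟩ := hQ e1
      obtain ⟨d2, h2⟩ := hQ e2
      obtain ⟨d3, h3⟩ := hQ e3
      refine ⟨x.coeff e1 * d1 + x.coeff e2 * d2 + x.coeff e3 * d3, ?_⟩
      conv_lhs => rw [decomp x]
      rw [map_sum, sum_S (fun s => P (MonoidAlgebra.single s (x.coeff s)))]
      rw [hsingle e1, hsingle e2, hsingle e3, map_smul, map_smul, map_smul, h1, h2, h3]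
      module
    intro x y
    obtain ⟨dx, hx⟩ := hP x
    obtain ⟨dy, hy⟩ := hP y
    rw [hx, hy, smul_mul_assoc, mul_smul_comm, mulu, smul_zero, smul_zero,
      mul_smul_comm, mulu, smul_zero, map_zero, smul_mul_assoc, umul, smul_zero, map_zero,
      add_zero]

end Stmt7
end

section
/- Let S = CS(4) be the commutative semigroup of order 3 in which e_2 e_2 = e_2, e_3 e_3 = e_3, and all other products e_i e_j equal e_1. The only Rota-Baxter operator of weight zero on k[S] is the zero operator; that is, a k-linear operator P on k[S] is a Rota-Baxter operator of weight zero if and only if its matrix C_P is the 3x3 zero matrix. -/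
/- Statement 8: the only RBO of weight zero on the semigroup algebra of CS(4) is zero. -/

namespace Stmt8

inductive S : Type
  | e1 | e2 | e3
  deriving DecidableEq

instance : Fintype S := ⟨{S.e1, S.e2, S.e3}, fun x => by cases x <;> decide⟩

open S

/-- Multiplication table of the semigroup. -/
instance : Mul S := ⟨fun a b => match a, b with
  | e1, e1 => e1
  | e1, e2 => e1
  | e1, e3 => e1
  | e2, e1 => e1
  | e2, e2 => e2
  | e2, e3 => e1
  | e3, e1 => e1
  | e3, e2 => e1
  | e3, e3 => e3⟩

instance : Semigroup S := { mul_assoc := by decide }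

/-- The 3×3 matrix (rows = first index) as a function `S → S → k`. -/
def mat3 {k : Type*} (a11 a12 a13 a21 a22 a23 a31 a32 a33 : k) : S → S → k :=
  fun i j => match i, j with
  | e1, e1 => a11 | e1, e2 => a12 | e1, e3 => a13
  | e2, e1 => a21 | e2, e2 => a22 | e2, e3 => a23
  | e3, e1 => a31 | e3, e2 => a32 | e3, e3 => a33

theorem sum_S {M : Type*} [AddCommMonoid M] (f : S → M) :
    ∑ i, f i = f e1 + f e2 + f e3 := by
  show Finset.sum _ f = _
  rw [show (Finset.univ : Finset S) = {e1, e2, e3} from rfl]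
  simp [Finset.sum_insert, add_assoc]

theorem rbo_CS4 {k : Type*} [Field k] [CharZero k]
    (P : MonoidAlgebra k S →ₗ[k] MonoidAlgebra k S) (C : S → S → k)
    (hC : ∀ i, P (MonoidAlgebra.single i 1) = ∑ j, MonoidAlgebra.single j (C i j)) :
    (∀ x y, P x * P y = P (x * P y) + P (P x * y)) ↔
      (C = mat3 0 0 0 0 0 0 0 0 0) := by
  constructor
  · intro h
    have hmul : ∀ i j : S, P (MonoidAlgebra.single i 1) * P (MonoidAlgebra.single j 1)
        = ∑ a, ∑ b, MonoidAlgebra.single (a * b) (C i a * C j b) := by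
      intro i j
      rw [hC, hC, Finset.sum_mul_sum]
      simp [MonoidAlgebra.single_mul_single]
    have hsingle : ∀ (a : S) (c : k), MonoidAlgebra.single a c
        = c • MonoidAlgebra.single a (1 : k) := by
      intro a c; rw [MonoidAlgebra.smul_single', mul_one]
    have hL : ∀ i j : S, P (MonoidAlgebra.single i 1 * P (MonoidAlgebra.single j 1))
        = ∑ a, ∑ b, MonoidAlgebra.single b (C j a * C (i * a) b) := by
      intro i j
      rw [hC, Finset.mul_sum]
      have step : ∀ a : S, MonoidAlgebra.single i (1 : k) * MonoidAlgebra.single a (C j a)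
          = C j a • MonoidAlgebra.single (i * a) (1 : k) := by
        intro a; rw [MonoidAlgebra.single_mul_single, one_mul, hsingle]
      simp only [step, map_sum, map_smul, hC]
      refine Finset.sum_congr rfl fun a _ => ?_
      rw [Finset.smul_sum]
      refine Finset.sum_congr rfl fun b _ => ?_
      rw [MonoidAlgebra.smul_single']
    have hR : ∀ i j : S, P (P (MonoidAlgebra.single i 1) * MonoidAlgebra.single j 1)
        = ∑ a, ∑ b, MonoidAlgebra.single b (C i a * C (a * j) b) := by
      intro i j
      rw [hC, Finset.sum_mul]
      have step : ∀ a : S, MonoidAlgebra.single a (C i a) * MonoidAlgebra.single j (1 : k)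
          = C i a • MonoidAlgebra.single (a * j) (1 : k) := by
        intro a; rw [MonoidAlgebra.single_mul_single, mul_one, hsingle]
      simp only [step, map_sum, map_smul, hC]
      refine Finset.sum_congr rfl fun a _ => ?_
      rw [Finset.smul_sum]
      refine Finset.sum_congr rfl fun b _ => ?_
      rw [MonoidAlgebra.smul_single']
    have key : ∀ i j m : S,
        (∑ a, ∑ b, if a * b = m then C i a * C j b else 0)
          = (∑ a, ∑ b, if b = m then C j a * C (i * a) b else 0)
            + (∑ a, ∑ b, if b = m then C i a * C (a * j) b else 0) := by
      intro i j m
      have h1 := h (MonoidAlgebra.single i 1) (MonoidAlgebra.single j 1)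
      rw [hmul, hL, hR] at h1
      have h1' : (∑ a, ∑ b, Finsupp.single (a * b) (C i a * C j b) : S →₀ k)
          = (∑ a, ∑ b, Finsupp.single b (C j a * C (i * a) b))
            + (∑ a, ∑ b, Finsupp.single b (C i a * C (a * j) b)) := by
        have h1c := congrArg MonoidAlgebra.coeff h1
        simpa only [MonoidAlgebra.coeff_sum, MonoidAlgebra.coeff_add,
          MonoidAlgebra.coeff_single] using h1c
      have h2 := DFunLike.congr_fun h1' m
      simpa only [Finset.sum_apply', Finsupp.add_apply, Finsupp.single_apply] using h2
    have A1 := key e1 e1 e1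
    have A2 := key e1 e1 e2
    have A3 := key e1 e1 e3
    have B1 := key e2 e2 e1
    have B2 := key e2 e2 e2
    have B3 := key e2 e2 e3
    have D1 := key e3 e3 e1
    have D2 := key e3 e3 e2
    have D3 := key e3 e3 e3
    simp only [sum_S] at A1 A2 A3 B1 B2 B3 D1 D2 D3
    simp only [show (e1*e1:S)=e1 from rfl, show (e1*e2:S)=e1 from rfl, show (e1*e3:S)=e1 from rfl, show (e2*e1:S)=e1 from rfl, show (e2*e2:S)=e2 from rfl, show (e2*e3:S)=e1 from rfl, show (e3*e1:S)=e1 from rfl, show (e3*e2:S)=e1 from rfl, show (e3*e3:S)=e3 from rfl] at A1 A2 A3 B1 B2 B3 D1 D2 D3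
    simp (config := { decide := true }) only [if_true, if_false] at A1 A2 A3 B1 B2 B3 D1 D2 D3
    have hs : C e1 e1 + C e1 e2 + C e1 e3 = 0 := by
      have h2 : (C e1 e1 + C e1 e2 + C e1 e3) ^ 2 = 0 := by
        linear_combination -A1 - A2 - A3
      exact (pow_eq_zero_iff two_ne_zero).mp h2
    have h12 : C e1 e2 = 0 := by
      have h2 : (C e1 e2) ^ 2 = 0 := by linear_combination A2 + 2 * C e1 e2 * hs
      exact (pow_eq_zero_iff two_ne_zero).mp h2
    have h13 : C e1 e3 = 0 := by
      have h2 : (C e1 e3) ^ 2 = 0 := by linear_combination A3 + 2 * C e1 e3 * hs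
      exact (pow_eq_zero_iff two_ne_zero).mp h2
    have h11 : C e1 e1 = 0 := by linear_combination hs - h12 - h13
    have h22 : C e2 e2 = 0 := by
      have h2 : (C e2 e2) ^ 2 = 0 := by
        linear_combination -B2 - 2 * (C e2 e3 + C e2 e1) * h12
      exact (pow_eq_zero_iff two_ne_zero).mp h2
    have h23 : C e2 e3 = 0 := by
      have h2 : (C e2 e3) ^ 2 = 0 := by
        linear_combination B3 + 2 * C e2 e3 * h22 + (2 * C e2 e3 + 2 * C e2 e1) * h13
      exact (pow_eq_zero_iff two_ne_zero).mp h2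
    have h21 : C e2 e1 = 0 := by
      have h2 : (C e2 e1) ^ 2 = 0 := by
        linear_combination B1 - 2 * C e2 e3 * h22 - 2 * C e2 e1 * h23
          + (2 * C e2 e3 + 2 * C e2 e1) * h11
      exact (pow_eq_zero_iff two_ne_zero).mp h2
    have h33 : C e3 e3 = 0 := by
      have h2 : (C e3 e3) ^ 2 = 0 := by
        linear_combination -D3 - 2 * (C e3 e2 + C e3 e1) * h13
      exact (pow_eq_zero_iff two_ne_zero).mp h2
    have h32 : C e3 e2 = 0 := by
      have h2 : (C e3 e2) ^ 2 = 0 := by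
        linear_combination D2 + 2 * C e3 e2 * h33 + (2 * C e3 e2 + 2 * C e3 e1) * h12
      exact (pow_eq_zero_iff two_ne_zero).mp h2
    have h31 : C e3 e1 = 0 := by
      have h2 : (C e3 e1) ^ 2 = 0 := by
        linear_combination D1 - 2 * C e3 e2 * h33 - 2 * C e3 e1 * h32
          + (2 * C e3 e2 + 2 * C e3 e1) * h11
      exact (pow_eq_zero_iff two_ne_zero).mp h2
    funext i j
    cases i <;> cases j <;> assumption
  · intro hC0
    have hz : ∀ i : S, P (MonoidAlgebra.single i 1) = 0 := by
      intro i
      rw [hC i]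
      simp only [hC0]
      have : ∀ i j : S, (mat3 (0:k) 0 0 0 0 0 0 0 0) i j = 0 := by
        intro i j; cases i <;> cases j <;> rfl
      simp [this]
    have hP0 : ∀ x : MonoidAlgebra k S, P x = 0 := by
      intro x
      induction x using MonoidAlgebra.induction_linear with
      | zero => exact map_zero P
      | add x y hx hy => rw [map_add, hx, hy, add_zero]
      | single a c =>
        rw [show MonoidAlgebra.single a c = c • MonoidAlgebra.single a (1:k) from by
          rw [MonoidAlgebra.smul_single', mul_one], map_smul, hz, smul_zero]
    intro x y
    simp [hP0]

end Stmt8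
end

section
/- Let S = CS(5) be the commutative semigroup of order 3 with multiplication e_1 x = x e_1 = e_1 for all x, and e_2 e_2 = e_2 e_3 = e_3 e_2 = e_3 e_3 = e_2. A k-linear operator P on k[S] is a Rota-Baxter operator of weight zero if and only if its matrix C_P equals [[0, a, -a], [0, b, -b], [0, c, -c]] for some a, b, c in k. -/
/- Statement 9: RBOs of weight zero on the semigroup algebra of CS(5). -/

namespace Stmt9

inductive S : Type
  | e1 | e2 | e3
  deriving DecidableEq

open S

instance : Fintype S := ⟨{e1, e2, e3}, fun x => by cases x <;> simp⟩

/-- Multiplication table of the semigroup. -/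
instance : Mul S := ⟨fun a b => match a, b with
  | e1, e1 => e1
  | e1, e2 => e1
  | e1, e3 => e1
  | e2, e1 => e1
  | e2, e2 => e2
  | e2, e3 => e2
  | e3, e1 => e1
  | e3, e2 => e2
  | e3, e3 => e2⟩

instance : Semigroup S := { mul_assoc := by decide }

/-- The 3×3 matrix (rows = first index) as a function `S → S → k`. -/
def mat3 {k : Type*} (a11 a12 a13 a21 a22 a23 a31 a32 a33 : k) : S → S → k :=
  fun i j => match i, j with
  | e1, e1 => a11 | e1, e2 => a12 | e1, e3 => a13
  | e2, e1 => a21 | e2, e2 => a22 | e2, e3 => a23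
  | e3, e1 => a31 | e3, e2 => a32 | e3, e3 => a33

lemma sum_S {M : Type*} [AddCommMonoid M] (f : S → M) :
    ∑ j, f j = f e1 + f e2 + f e3 := by
  show (Finset.univ : Finset S).sum f = _
  rw [show (Finset.univ : Finset S) = {e1, e2, e3} from rfl]
  rw [Finset.sum_insert (by decide), Finset.sum_insert (by decide), Finset.sum_singleton, add_assoc]

lemma m11 : (e1 * e1 : S) = e1 := rfl
lemma m12 : (e1 * e2 : S) = e1 := rfl
lemma m13 : (e1 * e3 : S) = e1 := rfl
lemma m21 : (e2 * e1 : S) = e1 := rfl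
lemma m22 : (e2 * e2 : S) = e2 := rfl
lemma m23 : (e2 * e3 : S) = e2 := rfl
lemma m31 : (e3 * e1 : S) = e1 := rfl
lemma m32 : (e3 * e2 : S) = e2 := rfl
lemma m33 : (e3 * e3 : S) = e2 := rfl

set_option maxHeartbeats 1000000 in
theorem rbo_CS5 {k : Type*} [Field k] [CharZero k]
    (P : MonoidAlgebra k S →ₗ[k] MonoidAlgebra k S) (C : S → S → k)
    (hC : ∀ i, P (MonoidAlgebra.single i 1) = ∑ j, MonoidAlgebra.single j (C i j)) :
    (∀ x y, P x * P y = P (x * P y) + P (P x * y)) ↔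
      (∃ a b c : k, C = mat3 0 a (-a) 0 b (-b) 0 c (-c)) := by
  have hexp : ∀ i : S, P (MonoidAlgebra.single i 1) =
      MonoidAlgebra.single e1 (C i e1) + MonoidAlgebra.single e2 (C i e2) +
        MonoidAlgebra.single e3 (C i e3) := by
    intro i; rw [hC i, sum_S]
  have hsing : ∀ (j : S) (c : k), (MonoidAlgebra.single j c : MonoidAlgebra k S)
      = c • MonoidAlgebra.single j 1 := by
    intro j c; rw [MonoidAlgebra.smul_single', mul_one]
  have hPs : ∀ (j : S) (c : k), P (MonoidAlgebra.single j c) =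
      MonoidAlgebra.single e1 (c * C j e1) + MonoidAlgebra.single e2 (c * C j e2) +
        MonoidAlgebra.single e3 (c * C j e3) := by
    intro j c
    rw [hsing j c, map_smul, hexp j, smul_add, smul_add, MonoidAlgebra.smul_single',
      MonoidAlgebra.smul_single', MonoidAlgebra.smul_single']
  constructor
  · intro h
    have hdiag : ∀ i : S,
        (MonoidAlgebra.single e1 (C i e1) + MonoidAlgebra.single e2 (C i e2) +
          MonoidAlgebra.single e3 (C i e3)) *
        (MonoidAlgebra.single e1 (C i e1) + MonoidAlgebra.single e2 (C i e2) +
          MonoidAlgebra.single e3 (C i e3)) =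
        P (MonoidAlgebra.single (i*e1) (C i e1) + MonoidAlgebra.single (i*e2) (C i e2) +
          MonoidAlgebra.single (i*e3) (C i e3)) +
        P (MonoidAlgebra.single (e1*i) (C i e1) + MonoidAlgebra.single (e2*i) (C i e2) +
          MonoidAlgebra.single (e3*i) (C i e3)) := by
      intro i
      have h' := h (MonoidAlgebra.single i 1) (MonoidAlgebra.single i 1)
      rw [hexp i] at h'
      convert h' using 2
      · rw [mul_add, mul_add]
        simp only [MonoidAlgebra.single_mul_single, one_mul]
      · rw [add_mul, add_mul]
        simp only [MonoidAlgebra.single_mul_single, mul_one]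
    have h1 := hdiag e1
    have h2 := hdiag e2
    have h3 := hdiag e3
    simp only [m11, m12, m13, m21, m22, m23, m31, m32, m33, mul_add, add_mul,
      MonoidAlgebra.single_mul_single, map_add, hPs] at h1 h2 h3
    have q1e1 := congrArg (fun x => Finsupp.applyAddHom (M := k) e1 x.coeff) h1
    have q1e2 := congrArg (fun x => Finsupp.applyAddHom (M := k) e2 x.coeff) h1
    have q1e3 := congrArg (fun x => Finsupp.applyAddHom (M := k) e3 x.coeff) h1
    have q2e1 := congrArg (fun x => Finsupp.applyAddHom (M := k) e1 x.coeff) h2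
    have q2e2 := congrArg (fun x => Finsupp.applyAddHom (M := k) e2 x.coeff) h2
    have q2e3 := congrArg (fun x => Finsupp.applyAddHom (M := k) e3 x.coeff) h2
    have q3e1 := congrArg (fun x => Finsupp.applyAddHom (M := k) e1 x.coeff) h3
    have q3e2 := congrArg (fun x => Finsupp.applyAddHom (M := k) e2 x.coeff) h3
    have q3e3 := congrArg (fun x => Finsupp.applyAddHom (M := k) e3 x.coeff) h3
    simp only [map_add, MonoidAlgebra.coeff_add, MonoidAlgebra.coeff_single, Finsupp.applyAddHom_apply, Finsupp.single_apply, reduceCtorEq,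
      reduceIte, if_true, add_zero, zero_add] at q1e1 q1e2 q1e3 q2e1 q2e2 q2e3 q3e1 q3e2 q3e3
    -- scalar consequences
    have hc11 : C e1 e1 = 0 := by
      have : C e1 e1 ^ 2 = 0 := by linear_combination -q1e1
      exact pow_eq_zero_iff (two_ne_zero) |>.mp this
    have hc12 : C e1 e3 = - C e1 e2 := by
      have : (C e1 e2 + C e1 e3) ^ 2 = 0 := by
        linear_combination -q1e2 - q1e3 - (2 * C e1 e2 + 2 * C e1 e3) * hc11
      have := pow_eq_zero_iff (two_ne_zero) |>.mp this
      linear_combination this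
    have hc21 : C e2 e1 = 0 := by
      have : C e2 e1 ^ 2 = 0 := by linear_combination q2e1 + 2 * C e2 e1 * hc11
      exact pow_eq_zero_iff (two_ne_zero) |>.mp this
    have hc22 : C e2 e3 = - C e2 e2 := by
      have : (C e2 e2 + C e2 e3) ^ 2 = 0 := by
        linear_combination -q2e2 - q2e3 - (2 * C e1 e2 + 2 * C e1 e3) * hc21
      have := pow_eq_zero_iff (two_ne_zero) |>.mp this
      linear_combination this
    have hc32 : C e3 e3 = - C e3 e2 := by
      have : (C e3 e2 + C e3 e3) ^ 2 = 0 := by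
        linear_combination q3e2 + q3e3 + 2 * C e3 e1 * hc12 + (2 * C e3 e2 + 2 * C e3 e3) * hc22
      have := pow_eq_zero_iff (two_ne_zero) |>.mp this
      linear_combination this
    have hc31 : C e3 e1 = 0 := by
      have : C e3 e1 ^ 2 = 0 := by
        linear_combination q3e1 + 2 * C e3 e1 * hc11 + (2 * C e3 e2 + 2 * C e3 e3) * hc21 -
          2 * C e3 e1 * hc32
      exact pow_eq_zero_iff (two_ne_zero) |>.mp this
    refine ⟨C e1 e2, C e2 e2, C e3 e2, ?_⟩
    funext i j
    rcases i <;> rcases j <;>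
      simp only [mat3, hc11, hc12, hc21, hc22, hc31, hc32]
  · rintro ⟨a, b, c, rfl⟩
    have hs : ∀ i i' : S,
        P (MonoidAlgebra.single i (1:k)) * P (MonoidAlgebra.single i' 1) =
        P (MonoidAlgebra.single i 1 * P (MonoidAlgebra.single i' 1)) +
          P (P (MonoidAlgebra.single i 1) * MonoidAlgebra.single i' 1) := by
      intro i i'
      rcases i <;> rcases i' <;>
      · simp only [hexp]
        simp only [mul_add, add_mul, MonoidAlgebra.single_mul_single, one_mul, mul_one,
          m11, m12, m13, m21, m22, m23, m31, m32, m33, map_add, hPs]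
        refine MonoidAlgebra.coeff_injective (Finsupp.ext fun m => ?_)
        simp only [← Finsupp.applyAddHom_apply (M := k)]
        rcases m <;>
          simp only [map_add, MonoidAlgebra.coeff_add, MonoidAlgebra.coeff_single, Finsupp.applyAddHom_apply, Finsupp.single_apply, reduceCtorEq,
            reduceIte, mat3, add_zero, zero_add] <;>
          ring
    have hs' : ∀ (i i' : S) (u v : k),
        P (MonoidAlgebra.single i u) * P (MonoidAlgebra.single i' v) =
        P (MonoidAlgebra.single i u * P (MonoidAlgebra.single i' v)) +
          P (P (MonoidAlgebra.single i u) * MonoidAlgebra.single i' v) := by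
      intro i i' u v
      rw [hsing i u, hsing i' v]
      simp only [map_smul, smul_mul_assoc, mul_smul_comm, smul_smul, ← smul_add]
      rw [hs i i']
    have hdecomp : ∀ x : MonoidAlgebra k S,
        x = MonoidAlgebra.single e1 (x.coeff e1) + MonoidAlgebra.single e2 (x.coeff e2) +
          MonoidAlgebra.single e3 (x.coeff e3) := by
      intro x
      refine MonoidAlgebra.coeff_injective (Finsupp.ext fun m => ?_)
      simp only [← Finsupp.applyAddHom_apply (M := k)]
      rcases m <;>
        simp only [map_add, MonoidAlgebra.coeff_add, MonoidAlgebra.coeff_single, Finsupp.applyAddHom_apply, Finsupp.single_apply, reduceCtorEq,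
          reduceIte, add_zero, zero_add]
    intro x y
    rw [hdecomp x, hdecomp y]
    simp only [mul_add, add_mul, map_add]
    rw [hs' e1 e1, hs' e1 e2, hs' e1 e3, hs' e2 e1, hs' e2 e2, hs' e2 e3,
      hs' e3 e1, hs' e3 e2, hs' e3 e3]
    abel

end Stmt9
end

section
/- Let S = CS(7) be the commutative semigroup of order 3 with multiplication e_1 x = x e_1 = e_1 for all x, e_2 e_2 = e_2, e_2 e_3 = e_3 e_2 = e_3, and e_3 e_3 = e_1. A k-linear operator P on k[S] is a Rota-Baxter operator of weight zero if and only if its matrix C_P equals [[a, 0, -a], [b, 0, -b], [a, 0, -a]] for some a, b in k. -/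
/- Statement 10: RBOs of weight zero on the semigroup algebra of CS(7). -/

namespace Stmt10

inductive S : Type
  | e1 | e2 | e3
  deriving DecidableEq

open S

instance : Fintype S := ⟨{e1, e2, e3}, fun x => by cases x <;> simp⟩

/-- Multiplication table of the semigroup. -/
instance : Mul S := ⟨fun a b => match a, b with
  | e1, e1 => e1
  | e1, e2 => e1
  | e1, e3 => e1
  | e2, e1 => e1
  | e2, e2 => e2
  | e2, e3 => e3
  | e3, e1 => e1
  | e3, e2 => e3
  | e3, e3 => e1⟩

instance : Semigroup S := { mul_assoc := by decide }

/-- The 3×3 matrix (rows = first index) as a function `S → S → k`. -/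
def mat3 {k : Type*} (a11 a12 a13 a21 a22 a23 a31 a32 a33 : k) : S → S → k :=
  fun i j => match i, j with
  | e1, e1 => a11 | e1, e2 => a12 | e1, e3 => a13
  | e2, e1 => a21 | e2, e2 => a22 | e2, e3 => a23
  | e3, e1 => a31 | e3, e2 => a32 | e3, e3 => a33

lemma sum_univ {M : Type*} [AddCommMonoid M] (f : S → M) :
    ∑ j, f j = f e1 + f e2 + f e3 := by
  show Finset.sum _ f = _
  rw [show (Finset.univ : Finset S) = {e1, e2, e3} by decide]
  simp [Finset.sum_insert, add_assoc]

@[simp] lemma m11 : (e1*e1 : S) = e1 := rfl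
@[simp] lemma m12 : (e1*e2 : S) = e1 := rfl
@[simp] lemma m13 : (e1*e3 : S) = e1 := rfl
@[simp] lemma m21 : (e2*e1 : S) = e1 := rfl
@[simp] lemma m22 : (e2*e2 : S) = e2 := rfl
@[simp] lemma m23 : (e2*e3 : S) = e3 := rfl
@[simp] lemma m31 : (e3*e1 : S) = e1 := rfl
@[simp] lemma m32 : (e3*e2 : S) = e3 := rfl
@[simp] lemma m33 : (e3*e3 : S) = e1 := rfl

lemma ma_add_apply {k : Type*} [Field k] (f g : MonoidAlgebra k S) (s : S) :
    (f + g).coeff s = f.coeff s + g.coeff s := Finsupp.add_apply f.coeff g.coeff s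

lemma hPc {k : Type*} [Field k] {P : MonoidAlgebra k S →ₗ[k] MonoidAlgebra k S} {C : S → S → k}
    (hC : ∀ i, P (MonoidAlgebra.single i 1) = ∑ j, MonoidAlgebra.single j (C i j))
    (s : S) (c : k) :
    P (MonoidAlgebra.single s c) =
      MonoidAlgebra.single e1 (c * C s e1) + MonoidAlgebra.single e2 (c * C s e2) +
        MonoidAlgebra.single e3 (c * C s e3) := by
  have h1 : (MonoidAlgebra.single s c : MonoidAlgebra k S) = c • MonoidAlgebra.single s 1 := by
    rw [MonoidAlgebra.smul_single', mul_one]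
  rw [h1, map_smul, hC, sum_univ, smul_add, smul_add]
  simp [MonoidAlgebra.smul_single']

lemma sq_zero {k : Type*} [Field k] {x : k} (h : x ^ 2 = 0) : x = 0 :=
  by simpa using sq_eq_zero_iff.mp h

theorem rbo_CS7 {k : Type*} [Field k] [CharZero k]
    (P : MonoidAlgebra k S →ₗ[k] MonoidAlgebra k S) (C : S → S → k)
    (hC : ∀ i, P (MonoidAlgebra.single i 1) = ∑ j, MonoidAlgebra.single j (C i j)) :
    (∀ x y, P x * P y = P (x * P y) + P (P x * y)) ↔
      (∃ a b : k, C = mat3 a 0 (-a) b 0 (-b) a 0 (-a)) := by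
  have hc := hPc hC
  constructor
  · intro h
    -- extract coordinate equations
    have E11 := h (MonoidAlgebra.single e1 1) (MonoidAlgebra.single e1 1)
    have E31 := h (MonoidAlgebra.single e3 1) (MonoidAlgebra.single e1 1)
    have E33 := h (MonoidAlgebra.single e3 1) (MonoidAlgebra.single e3 1)
    have E22 := h (MonoidAlgebra.single e2 1) (MonoidAlgebra.single e2 1)
    have E23 := h (MonoidAlgebra.single e2 1) (MonoidAlgebra.single e3 1)
    have E12 := h (MonoidAlgebra.single e1 1) (MonoidAlgebra.single e2 1)
    simp only [hc, mul_add, add_mul, MonoidAlgebra.single_mul_single, map_add,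
      m11, m12, m13, m21, m22, m23, m31, m32, m33, one_mul] at E11 E31 E33 E22 E23 E12
    rw [MonoidAlgebra.ext_iff, Finsupp.ext_iff] at E11 E31 E33 E22 E23 E12
    have eA := E11 e1
    have eB := E11 e3
    have eC := E11 e2
    have eD := E31 e1
    have eE := E33 e1
    have eF := E33 e2
    have eG := E22 e2
    have eH := E22 e3
    have eI := E22 e1
    have eJ := E23 e1
    have eK := E12 e1
    simp only [ma_add_apply, MonoidAlgebra.single_apply, reduceIte, reduceCtorEq,
      if_true, if_false, ite_true, ite_false, add_zero, zero_add, mul_one,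
      one_mul] at eA eB eC eD eE eF eG eH eI eJ eK
    set c11 := C e1 e1; set c12 := C e1 e2; set c13 := C e1 e3
    set c21 := C e2 e1; set c22 := C e2 e2; set c23 := C e2 e3
    set c31 := C e3 e1; set c32 := C e3 e2; set c33 := C e3 e3
    have h13 : c13 = -c11 := by
      have q : (c11 + c13) ^ 2 = 0 := by linear_combination (-1 : k) * eA - eB
      have hz := sq_zero q; linear_combination hz
    have h12 : c12 = 0 := by
      have q : c12 ^ 2 = 0 := by linear_combination (-1 : k) * eC - 2 * c12 * h13
      exact sq_zero q
    have q3 : c11 * (c31 + c33) = 0 := by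
      linear_combination (-1 : k) * eD + (c33 + c31 - c11) * h13
    have h33 : c33 = -c31 := by
      have q : (c31 + c33) ^ 2 = 0 := by linear_combination eE + 2 * q3
      have hz := sq_zero q; linear_combination hz
    have h32 : c32 = 0 := by
      have q : c32 ^ 2 = 0 := by linear_combination (-1 : k) * eF - 2 * c12 * h33
      exact sq_zero q
    have h22 : c22 = 0 := by
      have q : c22 ^ 2 = 0 := by
        linear_combination (-1 : k) * eG - 2 * c23 * h32 - 2 * c21 * h12
      exact sq_zero q
    have q7 : c23 * c31 + c11 * c21 = 0 := by
      linear_combination (1/2 : k) * eH + c23 * h33 + c21 * h13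
    have h23 : c23 = -c21 := by
      have q : (c21 + c23) ^ 2 = 0 := by linear_combination eI + 2 * q7
      have hz := sq_zero q; linear_combination hz
    have q9 : c31 * (c31 - c11) = 0 := by
      linear_combination eJ + (c31 - c23 - c21) * h33 + c11 * h23
    have q10 : c11 * (c31 - c11) = 0 := by
      linear_combination eK + c31 * h13 - c13 * h23
    have h31 : c31 = c11 := by
      have q : (c31 - c11) ^ 2 = 0 := by linear_combination q9 - q10
      have hz := sq_zero q; linear_combination hz
    refine ⟨c11, c21, ?_⟩
    funext i j
    cases i <;> cases j <;>
      simp only [mat3] <;>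
      first
        | rfl
        | exact h12
        | exact h13
        | exact h22
        | exact h23
        | exact h31
        | exact h32
        | linear_combination h33 - h31
  · rintro ⟨a, b, rfl⟩
    -- key identity on basis elements
    have key : ∀ i j : S,
        P (MonoidAlgebra.single i (1:k)) * P (MonoidAlgebra.single j 1) =
          P (MonoidAlgebra.single i 1 * P (MonoidAlgebra.single j 1)) +
            P (P (MonoidAlgebra.single i 1) * MonoidAlgebra.single j 1) := by
      intro i j
      cases i <;> cases j <;>
        (simp only [hc, mul_add, add_mul, MonoidAlgebra.single_mul_single, map_add,
          m11, m12, m13, m21, m22, m23, m31, m32, m33, one_mul, mat3]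
         refine MonoidAlgebra.ext (Finsupp.ext ?_)
         intro s
         cases s <;>
           simp only [ma_add_apply, MonoidAlgebra.single_apply, reduceCtorEq,
             if_true, if_false, ite_true, ite_false, add_zero, zero_add] <;>
           ring)
    -- extend to scalar multiples of basis elements
    have key3 : ∀ (i j : S) (c d : k),
        P (MonoidAlgebra.single i c) * P (MonoidAlgebra.single j d) =
          P (MonoidAlgebra.single i c * P (MonoidAlgebra.single j d)) +
            P (P (MonoidAlgebra.single i c) * MonoidAlgebra.single j d) := by
      intro i j c d
      have hi : (MonoidAlgebra.single i c : MonoidAlgebra k S) =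
          c • MonoidAlgebra.single i 1 := by rw [MonoidAlgebra.smul_single', mul_one]
      have hj : (MonoidAlgebra.single j d : MonoidAlgebra k S) =
          d • MonoidAlgebra.single j 1 := by rw [MonoidAlgebra.smul_single', mul_one]
      simp only [hi, hj, map_smul, smul_mul_assoc, mul_smul_comm]
      simp only [key i j, smul_add]
    -- decompose arbitrary elements
    have hx : ∀ z : MonoidAlgebra k S,
        z = MonoidAlgebra.single e1 (z.coeff e1) + MonoidAlgebra.single e2 (z.coeff e2) +
            MonoidAlgebra.single e3 (z.coeff e3) := by
      intro z
      refine MonoidAlgebra.ext (Finsupp.ext ?_)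
      intro s
      cases s <;>
        simp only [ma_add_apply, MonoidAlgebra.single_apply, reduceCtorEq,
          if_true, if_false, ite_true, ite_false, add_zero, zero_add]
    intro x y
    rw [hx x, hx y]
    simp only [map_add, mul_add, add_mul]
    simp only [key3]
    abel

end Stmt10
end

section
/- Let S = CS(9) be the commutative semigroup of order 3 with multiplication e_1 e_1 = e_1 e_2 = e_2 e_1 = e_2 e_2 = e_1, e_1 e_3 = e_3 e_1 = e_2 e_3 = e_3 e_2 = e_3, and e_3 e_3 = e_1. A k-linear operator P on k[S] is a Rota-Baxter operator of weight zero if and only if its matrix C_P equals [[a, -a, 0], [b, -b, 0], [c, -c, 0]] for some a, b, c in k. -/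
/- Statement 11: RBOs of weight zero on the semigroup algebra of CS(9). -/

namespace Stmt11

inductive S : Type
  | e1 | e2 | e3
  deriving DecidableEq

open S

instance : Fintype S := ⟨{e1, e2, e3}, fun x => by cases x <;> decide⟩

/-- Multiplication table of the semigroup. -/
instance : Mul S := ⟨fun a b => match a, b with
  | e1, e1 => e1
  | e1, e2 => e1
  | e1, e3 => e3
  | e2, e1 => e1
  | e2, e2 => e1
  | e2, e3 => e3
  | e3, e1 => e3
  | e3, e2 => e3
  | e3, e3 => e1⟩

instance : Semigroup S := { mul_assoc := by decide }

/-- The 3×3 matrix (rows = first index) as a function `S → S → k`. -/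
def mat3 {k : Type*} (a11 a12 a13 a21 a22 a23 a31 a32 a33 : k) : S → S → k :=
  fun i j => match i, j with
  | e1, e1 => a11 | e1, e2 => a12 | e1, e3 => a13
  | e2, e1 => a21 | e2, e2 => a22 | e2, e3 => a23
  | e3, e1 => a31 | e3, e2 => a32 | e3, e3 => a33

/-! Auxiliary lemmas. -/

@[local simp] lemma m11 : e1 * e1 = e1 := rfl
@[local simp] lemma m12 : e1 * e2 = e1 := rfl
@[local simp] lemma m13 : e1 * e3 = e3 := rfl
@[local simp] lemma m21 : e2 * e1 = e1 := rfl
@[local simp] lemma m22 : e2 * e2 = e1 := rfl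
@[local simp] lemma m23 : e2 * e3 = e3 := rfl
@[local simp] lemma m31 : e3 * e1 = e3 := rfl
@[local simp] lemma m32 : e3 * e2 = e3 := rfl
@[local simp] lemma m33 : e3 * e3 = e1 := rfl

lemma sum3 {M : Type*} [AddCommMonoid M] (f : S → M) : ∑ x, f x = f e1 + f e2 + f e3 := by
  have h : (Finset.univ : Finset S) = {e1, e2, e3} := by decide
  rw [h]; simp [Finset.sum_insert, Finset.mem_insert]; abel

section Aux

variable {k : Type*} [Field k]

@[simp] lemma sgl_apply (s t : S) (c : k) :
    (MonoidAlgebra.single s c : MonoidAlgebra k S).coeff t = if s = t then c else 0 :=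
  Finsupp.single_apply

@[simp] lemma add_apply' (x y : MonoidAlgebra k S) (t : S) : (x + y).coeff t = x.coeff t + y.coeff t := rfl

@[simp] lemma zero_apply' (t : S) : (0 : MonoidAlgebra k S).coeff t = 0 := rfl

lemma mext {x y : MonoidAlgebra k S} (h1 : x.coeff e1 = y.coeff e1) (h2 : x.coeff e2 = y.coeff e2)
    (h3 : x.coeff e3 = y.coeff e3) : x = y :=
  MonoidAlgebra.coeff_injective (Finsupp.ext fun a => by cases a <;> assumption)

lemma decomp (z : MonoidAlgebra k S) :
    z = MonoidAlgebra.single e1 (z.coeff e1) + MonoidAlgebra.single e2 (z.coeff e2)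
        + MonoidAlgebra.single e3 (z.coeff e3) :=
  mext (by simp) (by simp) (by simp)

lemma Psingle {P : MonoidAlgebra k S →ₗ[k] MonoidAlgebra k S} {C : S → S → k}
    (hC : ∀ i, P (MonoidAlgebra.single i 1) = ∑ j, MonoidAlgebra.single j (C i j))
    (s : S) (c : k) :
    P (MonoidAlgebra.single s c) =
      MonoidAlgebra.single e1 (c * C s e1) + MonoidAlgebra.single e2 (c * C s e2)
        + MonoidAlgebra.single e3 (c * C s e3) := by
  have h1 : (MonoidAlgebra.single s c : MonoidAlgebra k S) = c • MonoidAlgebra.single s 1 := by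
    rw [MonoidAlgebra.smul_single, smul_eq_mul, mul_one]
  rw [h1, map_smul, hC s, sum3]
  simp [Finsupp.smul_single, smul_eq_mul]

end Aux

theorem rbo_CS9 {k : Type*} [Field k] [CharZero k]
    (P : MonoidAlgebra k S →ₗ[k] MonoidAlgebra k S) (C : S → S → k)
    (hC : ∀ i, P (MonoidAlgebra.single i 1) = ∑ j, MonoidAlgebra.single j (C i j)) :
    (∀ x y, P x * P y = P (x * P y) + P (P x * y)) ↔
      (∃ a b c : k, C = mat3 a (-a) 0 b (-b) 0 c (-c) 0) := by
  have Ps := Psingle hC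
  constructor
  · intro h
    set a1 := C e1 e1 with ha1; set a2 := C e1 e2 with ha2; set a3 := C e1 e3 with ha3
    set b1 := C e2 e1 with hb1; set b2 := C e2 e2 with hb2; set b3 := C e2 e3 with hb3
    set c1 := C e3 e1 with hc1; set c2 := C e3 e2 with hc2; set c3 := C e3 e3 with hc3
    -- extract scalar coefficient equations from RBO identity on basis pairs
    have HA := h (MonoidAlgebra.single e1 1) (MonoidAlgebra.single e1 1)
    have HB := h (MonoidAlgebra.single e1 1) (MonoidAlgebra.single e3 1)
    have HD := h (MonoidAlgebra.single e2 1) (MonoidAlgebra.single e2 1)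
    have HF := h (MonoidAlgebra.single e3 1) (MonoidAlgebra.single e3 1)
    simp only [Ps, one_mul, add_mul, mul_add, MonoidAlgebra.single_mul_single,
      m11, m12, m13, m21, m22, m23, m31, m32, m33, map_add] at HA HB HD HF
    have A1 := congrArg (fun f : MonoidAlgebra k S => f.coeff e1) HA
    have A2 := congrArg (fun f : MonoidAlgebra k S => f.coeff e2) HA
    have A3 := congrArg (fun f : MonoidAlgebra k S => f.coeff e3) HA
    have B3 := congrArg (fun f : MonoidAlgebra k S => f.coeff e3) HB
    have D1 := congrArg (fun f : MonoidAlgebra k S => f.coeff e1) HD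
    have D2 := congrArg (fun f : MonoidAlgebra k S => f.coeff e2) HD
    have D3 := congrArg (fun f : MonoidAlgebra k S => f.coeff e3) HD
    have F1 := congrArg (fun f : MonoidAlgebra k S => f.coeff e1) HF
    have F2 := congrArg (fun f : MonoidAlgebra k S => f.coeff e2) HF
    simp only [add_apply', sgl_apply, reduceIte, reduceCtorEq, if_false, add_zero,
      zero_add] at A1 A2 A3 B3 D1 D2 D3 F1 F2
    -- now solve the polynomial system
    have h_a3 : a3 = 0 := by
      have h3 : a3 ^ 3 = 0 := by linear_combination (c3 / 2) * A3 - a3 * B3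
      exact pow_eq_zero_iff (by norm_num : 3 ≠ 0) |>.mp h3
    have h_c3 : c3 = 0 := by
      have h3 : c3 ^ 2 = 0 := by linear_combination (-1 : k) * B3 - a3 * h_a3
      exact pow_eq_zero_iff (by norm_num : 2 ≠ 0) |>.mp h3
    have h_a2 : a2 = -a1 := by
      have h3 : (a1 + a2) ^ 2 = 0 := by
        linear_combination (-1 : k) * A1 - A2 + (a3 - 2 * c1 - 2 * c2) * h_a3
      have h4 := pow_eq_zero_iff (by norm_num : 2 ≠ 0) |>.mp h3
      linear_combination h4
    have h_c2 : c2 = -c1 := by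
      have h3 : (c1 + c2) ^ 2 = 0 := by
        linear_combination (-1 : k) * F1 - F2 + (c3 - 2 * a1 - 2 * a2) * h_c3
      have h4 := pow_eq_zero_iff (by norm_num : 2 ≠ 0) |>.mp h3
      linear_combination h4
    have ht2 : (b1 + b2) ^ 2 + b3 ^ 2 = 0 := by
      linear_combination D1 + D2 + 2 * (b1 + b2) * h_a2 + 2 * b3 * h_c2
    have htb : b3 * (b1 + b2) = 0 := by
      linear_combination (1 / 2 : k) * D3 + (b1 + b2) * h_a3 + b3 * h_c3
    have h_t : b1 + b2 = 0 := by
      have h3 : (b1 + b2) ^ 3 = 0 := by linear_combination (b1 + b2) * ht2 - b3 * htb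
      exact pow_eq_zero_iff (by norm_num : 3 ≠ 0) |>.mp h3
    have h_b3 : b3 = 0 := by
      have h3 : b3 ^ 2 = 0 := by linear_combination ht2 - (b1 + b2) * h_t
      exact pow_eq_zero_iff (by norm_num : 2 ≠ 0) |>.mp h3
    have h_b2 : b2 = -b1 := by linear_combination h_t
    refine ⟨a1, b1, c1, ?_⟩
    funext i j
    cases i <;> cases j <;>
      simp only [mat3, ← ha1, ← ha2, ← ha3, ← hb1, ← hb2, ← hb3, ← hc1, ← hc2, ← hc3,
        h_a2, h_a3, h_b2, h_b3, h_c2, h_c3]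
  · rintro ⟨a, b, c, rfl⟩ x y
    have hPx : P x = MonoidAlgebra.single e1 (x.coeff e1 * a + x.coeff e2 * b + x.coeff e3 * c)
        + MonoidAlgebra.single e2 (-(x.coeff e1 * a + x.coeff e2 * b + x.coeff e3 * c)) := by
      conv_lhs => rw [decomp x]
      rw [map_add, map_add, Ps, Ps, Ps]
      refine mext ?_ ?_ ?_ <;>
        simp only [mat3, add_apply', sgl_apply, zero_apply', reduceIte, reduceCtorEq, if_false,
          if_true, add_zero, zero_add] <;> ring
    have hPy : P y = MonoidAlgebra.single e1 (y.coeff e1 * a + y.coeff e2 * b + y.coeff e3 * c)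
        + MonoidAlgebra.single e2 (-(y.coeff e1 * a + y.coeff e2 * b + y.coeff e3 * c)) := by
      conv_lhs => rw [decomp y]
      rw [map_add, map_add, Ps, Ps, Ps]
      refine mext ?_ ?_ ?_ <;>
        simp only [mat3, add_apply', sgl_apply, zero_apply', reduceIte, reduceCtorEq, if_false,
          if_true, add_zero, zero_add] <;> ring
    have h1 : x * P y = 0 := by
      rw [hPy]
      conv_lhs => rw [decomp x]
      simp only [add_mul, mul_add, MonoidAlgebra.single_mul_single,
        m11, m12, m13, m21, m22, m23, m31, m32, m33]
      refine mext ?_ ?_ ?_ <;>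
        simp only [add_apply', sgl_apply, zero_apply', reduceIte, reduceCtorEq, if_false,
          if_true, add_zero, zero_add] <;> ring
    have h2 : P x * y = 0 := by
      rw [hPx]
      conv_lhs => rw [decomp y]
      simp only [add_mul, mul_add, MonoidAlgebra.single_mul_single,
        m11, m12, m13, m21, m22, m23, m31, m32, m33]
      refine mext ?_ ?_ ?_ <;>
        simp only [add_apply', sgl_apply, zero_apply', reduceIte, reduceCtorEq, if_false,
          if_true, add_zero, zero_add] <;> ring
    rw [h1, h2, map_zero, add_zero, hPx, hPy]
    simp only [add_mul, mul_add, MonoidAlgebra.single_mul_single,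
      m11, m12, m13, m21, m22, m23, m31, m32, m33]
    refine mext ?_ ?_ ?_ <;>
        simp only [add_apply', sgl_apply, zero_apply', reduceIte, reduceCtorEq, if_false,
          if_true, add_zero, zero_add] <;> ring

end Stmt11
end

section
/- Let S = CS(11) be the commutative semigroup of order 3 with multiplication e_1 e_1 = e_1, e_1 e_2 = e_2 e_1 = e_1 e_3 = e_3 e_1 = e_2, and e_2 e_2 = e_2 e_3 = e_3 e_2 = e_3 e_3 = e_1. A k-linear operator P on k[S] is a Rota-Baxter operator of weight zero if and only if its matrix C_P equals [[0, a, -a], [0, b, -b], [0, c, -c]] for some a, b, c in k. -/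
/- Statement 12: RBOs of weight zero on the semigroup algebra of CS(11). -/

namespace Stmt12

inductive S : Type
  | e1 | e2 | e3
  deriving DecidableEq

instance : Fintype S :=
  ⟨⟨{S.e1, S.e2, S.e3}, by decide⟩, fun x => by cases x <;> decide⟩

open S

/-- Multiplication table of the semigroup. -/
instance : Mul S := ⟨fun a b => match a, b with
  | e1, e1 => e1
  | e1, e2 => e2
  | e1, e3 => e2
  | e2, e1 => e2
  | e2, e2 => e1
  | e2, e3 => e1
  | e3, e1 => e2
  | e3, e2 => e1
  | e3, e3 => e1⟩

instance : Semigroup S := { mul_assoc := by decide }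

/-- The 3×3 matrix (rows = first index) as a function `S → S → k`. -/
def mat3 {k : Type*} (a11 a12 a13 a21 a22 a23 a31 a32 a33 : k) : S → S → k :=
  fun i j => match i, j with
  | e1, e1 => a11 | e1, e2 => a12 | e1, e3 => a13
  | e2, e1 => a21 | e2, e2 => a22 | e2, e3 => a23
  | e3, e1 => a31 | e3, e2 => a32 | e3, e3 => a33

@[simp] lemma mul_e11 : e1 * e1 = e1 := rfl
@[simp] lemma mul_e12 : e1 * e2 = e2 := rfl
@[simp] lemma mul_e13 : e1 * e3 = e2 := rfl
@[simp] lemma mul_e21 : e2 * e1 = e2 := rfl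
@[simp] lemma mul_e22 : e2 * e2 = e1 := rfl
@[simp] lemma mul_e23 : e2 * e3 = e1 := rfl
@[simp] lemma mul_e31 : e3 * e1 = e2 := rfl
@[simp] lemma mul_e32 : e3 * e2 = e1 := rfl
@[simp] lemma mul_e33 : e3 * e3 = e1 := rfl

lemma sum3 {M : Type*} [AddCommMonoid M] (f : S → M) : (∑ j, f j) = f e1 + f e2 + f e3 := by
  rw [show (Finset.univ : Finset S) = {e1, e2, e3} from rfl]
  rw [Finset.sum_insert (by decide), Finset.sum_insert (by decide), Finset.sum_singleton,
    add_assoc]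

theorem rbo_CS11 {k : Type*} [Field k] [CharZero k]
    (P : MonoidAlgebra k S →ₗ[k] MonoidAlgebra k S) (C : S → S → k)
    (hC : ∀ i, P (MonoidAlgebra.single i 1) = ∑ j, MonoidAlgebra.single j (C i j)) :
    (∀ x y, P x * P y = P (x * P y) + P (P x * y)) ↔
      (∃ a b c : k, C = mat3 0 a (-a) 0 b (-b) 0 c (-c)) := by
  classical
  have hsingle : ∀ (a : S) (b : k),
      (MonoidAlgebra.single a b : MonoidAlgebra k S) = b • MonoidAlgebra.single a 1 := by
    intro a b; rw [MonoidAlgebra.smul_single', mul_one]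
  -- Step 1: reduce to basis elements
  have step1 : (∀ x y : MonoidAlgebra k S, P x * P y = P (x * P y) + P (P x * y)) ↔
      ∀ i j : S, P (MonoidAlgebra.single i 1) * P (MonoidAlgebra.single j 1) =
        P (MonoidAlgebra.single i 1 * P (MonoidAlgebra.single j 1)) +
        P (P (MonoidAlgebra.single i 1) * MonoidAlgebra.single j 1) := by
    constructor
    · exact fun h i j => h _ _
    · intro h
      intro x y
      induction x using MonoidAlgebra.induction_linear generalizing y with
      | zero => simp
      | add f g hf hg =>
        simp only [map_add, add_mul]
        rw [hf, hg]; abel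
      | single a b =>
        induction y using MonoidAlgebra.induction_linear with
        | zero => simp
        | add f g hf hg =>
          simp only [map_add, mul_add]
          rw [hf, hg]; abel
        | single a' b' =>
          have key := h a a'
          rw [hsingle a b, hsingle a' b']
          simp only [map_smul, smul_mul_assoc, mul_smul_comm, smul_smul]
          simp only [key, smul_add]
  have hsingleM : ∀ (a : S) (b : k),
      (MonoidAlgebra.single a b : MonoidAlgebra k S) = b • MonoidAlgebra.single a 1 := by
    intro a b; rw [MonoidAlgebra.smul_single', mul_one]
  have exp1 : ∀ i j : S, P (MonoidAlgebra.single i 1) * P (MonoidAlgebra.single j 1)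
      = ∑ s, ∑ t, MonoidAlgebra.single (s * t) (C i s * C j t) := by
    intro i j
    rw [hC i, hC j, Finset.sum_mul_sum]
    refine Finset.sum_congr rfl fun s _ => Finset.sum_congr rfl fun t _ => ?_
    rw [MonoidAlgebra.single_mul_single]
  have exp2 : ∀ i j : S,
      P ((MonoidAlgebra.single i 1 : MonoidAlgebra k S) * P (MonoidAlgebra.single j 1))
      = ∑ t, ∑ u, MonoidAlgebra.single u (C j t * C (i * t) u) := by
    intro i j
    rw [hC j, Finset.mul_sum, map_sum]
    refine Finset.sum_congr rfl fun t _ => ?_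
    rw [MonoidAlgebra.single_mul_single, one_mul, hsingleM (i * t) (C j t), map_smul,
      hC (i * t), Finset.smul_sum]
    refine Finset.sum_congr rfl fun u _ => ?_
    rw [MonoidAlgebra.smul_single']
  have exp3 : ∀ i j : S,
      P (P (MonoidAlgebra.single i 1) * (MonoidAlgebra.single j 1 : MonoidAlgebra k S))
      = ∑ s, ∑ u, MonoidAlgebra.single u (C i s * C (s * j) u) := by
    intro i j
    rw [hC i, Finset.sum_mul, map_sum]
    refine Finset.sum_congr rfl fun s _ => ?_
    rw [MonoidAlgebra.single_mul_single, mul_one, hsingleM (s * j) (C i s), map_smul,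
      hC (s * j), Finset.smul_sum]
    refine Finset.sum_congr rfl fun u _ => ?_
    rw [MonoidAlgebra.smul_single']
  have step2 : ∀ i j : S,
      (P (MonoidAlgebra.single i 1) * P (MonoidAlgebra.single j 1) =
        P (MonoidAlgebra.single i 1 * P (MonoidAlgebra.single j 1)) +
        P (P (MonoidAlgebra.single i 1) * MonoidAlgebra.single j 1)) ↔
      ∀ u : S, (∑ s, ∑ t, if s * t = u then C i s * C j t else 0)
        = (∑ t, C j t * C (i * t) u) + ∑ s, C i s * C (s * j) u := by
    intro i j
    rw [exp1 i j, exp2 i j, exp3 i j]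
    have hiff : ((∑ s, ∑ t, (MonoidAlgebra.single (s * t) (C i s * C j t) : MonoidAlgebra k S)) =
        (∑ t, ∑ u, MonoidAlgebra.single u (C j t * C (i * t) u)) +
          ∑ s, ∑ u, MonoidAlgebra.single u (C i s * C (s * j) u)) ↔
        ∀ u : S, (∑ s, ∑ t, if s * t = u then C i s * C j t else 0)
          = (∑ t, C j t * C (i * t) u) + ∑ s, C i s * C (s * j) u := by
      rw [← MonoidAlgebra.coeff_inj, Finsupp.ext_iff]
      refine forall_congr' fun u => ?_
      simp only [MonoidAlgebra.coeff_sum, MonoidAlgebra.coeff_add, MonoidAlgebra.coeff_single,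
          Finsupp.finset_sum_apply, Finsupp.add_apply, Finsupp.single_apply,
        Finset.sum_ite_eq', Finset.mem_univ, if_true]
    exact hiff
  rw [step1]
  rw [forall_congr' fun i => forall_congr' fun j => step2 i j]
  constructor
  · intro hE
    have h112 := hE e1 e1 e2
    have h113 := hE e1 e1 e3
    have h122 := hE e1 e2 e2
    have h123 := hE e1 e2 e3
    have h111 := hE e1 e1 e1
    have h221 := hE e2 e2 e1
    have h232 := hE e2 e3 e2
    have h332 := hE e3 e3 e2
    have h331 := hE e3 e3 e1
    simp [sum3] at h112 h113 h122 h123 h111 h221 h232 h332 h331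
    -- abbreviations
    have hu12 : (C e1 e2 + C e1 e3) * (C e2 e2 + C e2 e3) = 0 := by
      linear_combination (-1/2 : k) * h112 - (1/2 : k) * h113
    have hsq : (C e1 e2 + C e1 e3)^2 + (C e2 e2 + C e2 e3)^2 = 0 := by
      linear_combination -h122 - h123
    have hplus : ((C e1 e2 + C e1 e3) + (C e2 e2 + C e2 e3))^2 = 0 := by
      linear_combination hsq + 2 * hu12
    have hsum0 : (C e1 e2 + C e1 e3) + (C e2 e2 + C e2 e3) = 0 :=
      sq_eq_zero_iff.mp hplus
    have hu1 : C e1 e2 + C e1 e3 = 0 := by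
      have h : (C e1 e2 + C e1 e3) * (C e1 e2 + C e1 e3) = 0 := by
        linear_combination (C e1 e2 + C e1 e3) * hsum0 - hu12
      exact mul_self_eq_zero.mp h
    have hu2 : C e2 e2 + C e2 e3 = 0 := by linear_combination hsum0 - hu1
    have ha1 : C e1 e1 = 0 := by
      have h : C e1 e1 * C e1 e1 = 0 := by
        linear_combination -h111 + (C e1 e2 + C e1 e3) * hu1 - 2 * C e2 e1 * hu1
      exact mul_self_eq_zero.mp h
    have ha2 : C e2 e1 = 0 := by
      have h : C e2 e1 * C e2 e1 = 0 := by
        linear_combination -h221 + (C e2 e2 + C e2 e3) * hu2 - 2 * C e1 e1 * hu2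
      exact mul_self_eq_zero.mp h
    have ha3u3 : C e3 e1 * (C e3 e2 + C e3 e3) = 0 := by
      linear_combination (1/2 : k) * h332 - h232 + C e3 e1 * hu2
        + (C e3 e3 + C e3 e2 - C e2 e2) * ha2 - C e1 e2 * hu2
    have hsq3 : (C e3 e2 + C e3 e3)^2 + C e3 e1 ^ 2 = 0 := by
      linear_combination h331 + 2 * C e3 e1 * ha2 + 2 * (C e3 e2 + C e3 e3) * ha1
    have hplus3 : (C e3 e1 + (C e3 e2 + C e3 e3))^2 = 0 := by
      linear_combination hsq3 + 2 * ha3u3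
    have hsum3 : C e3 e1 + (C e3 e2 + C e3 e3) = 0 := sq_eq_zero_iff.mp hplus3
    have ha3 : C e3 e1 = 0 := by
      have h : C e3 e1 * C e3 e1 = 0 := by
        linear_combination C e3 e1 * hsum3 - ha3u3
      exact mul_self_eq_zero.mp h
    have hu3 : C e3 e2 + C e3 e3 = 0 := by linear_combination hsum3 - ha3
    refine ⟨C e1 e2, C e2 e2, C e3 e2, ?_⟩
    funext i j
    cases i <;> cases j <;> simp [mat3]
    · exact ha1
    · linear_combination hu1
    · exact ha2
    · linear_combination hu2
    · exact ha3
    · linear_combination hu3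
  · rintro ⟨a, b, c, rfl⟩ i j u
    cases i <;> cases j <;> cases u <;>
      simp [sum3, mat3]

end Stmt12
end

section
/- Let S = CS(12) be the cyclic group of order 3, with e_1 the identity, e_2 e_2 = e_3, e_2 e_3 = e_3 e_2 = e_1, and e_3 e_3 = e_2. The only Rota-Baxter operator of weight zero on the group algebra k[S] is the zero operator; that is, a k-linear operator P on k[S] is a Rota-Baxter operator of weight zero if and only if its matrix C_P is the 3x3 zero matrix. -/
/- Statement 13: the only RBO of weight zero on the group algebra of the cyclic group of order 3 is zero. -/

namespace Stmt13

inductive S : Type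
  | e1 | e2 | e3
  deriving DecidableEq

instance : Fintype S := ⟨{S.e1, S.e2, S.e3}, fun x => by cases x <;> decide⟩

open S

/-- Multiplication table of the semigroup. -/
instance : Mul S := ⟨fun a b => match a, b with
  | e1, e1 => e1
  | e1, e2 => e2
  | e1, e3 => e3
  | e2, e1 => e2
  | e2, e2 => e3
  | e2, e3 => e1
  | e3, e1 => e3
  | e3, e2 => e1
  | e3, e3 => e2⟩

instance : Semigroup S := { mul_assoc := by decide }

/-- The 3×3 matrix (rows = first index) as a function `S → S → k`. -/
def mat3 {k : Type*} (a11 a12 a13 a21 a22 a23 a31 a32 a33 : k) : S → S → k :=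
  fun i j => match i, j with
  | e1, e1 => a11 | e1, e2 => a12 | e1, e3 => a13
  | e2, e1 => a21 | e2, e2 => a22 | e2, e3 => a23
  | e3, e1 => a31 | e3, e2 => a32 | e3, e3 => a33

lemma m11 : e1 * e1 = e1 := rfl
lemma m12 : e1 * e2 = e2 := rfl
lemma m13 : e1 * e3 = e3 := rfl
lemma m21 : e2 * e1 = e2 := rfl
lemma m22 : e2 * e2 = e3 := rfl
lemma m23 : e2 * e3 = e1 := rfl
lemma m31 : e3 * e1 = e3 := rfl
lemma m32 : e3 * e2 = e1 := rfl
lemma m33 : e3 * e3 = e2 := rfl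

lemma sum_univ {M : Type*} [AddCommMonoid M] (f : S → M) :
    ∑ j, f j = f e1 + f e2 + f e3 := by
  have h : (Finset.univ : Finset S) = {e1, e2, e3} := rfl
  rw [h]
  simp [Finset.sum_insert, Finset.mem_insert, add_assoc]

def coord (m : S) {k : Type*} [Semiring k] : MonoidAlgebra k S →+ k where
  toFun f := f.coeff m
  map_zero' := rfl
  map_add' _ _ := rfl

@[simp] lemma coord_single {k : Type*} [Semiring k] (m a : S) (c : k) :
    coord m (MonoidAlgebra.single a c) = if a = m then c else 0 :=
  Finsupp.single_apply

lemma Psingle {k : Type*} [Field k]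
    (P : MonoidAlgebra k S →ₗ[k] MonoidAlgebra k S) (C : S → S → k)
    (hC : ∀ i, P (MonoidAlgebra.single i 1) = ∑ j, MonoidAlgebra.single j (C i j))
    (i : S) (c : k) :
    P (MonoidAlgebra.single i c) =
      MonoidAlgebra.single e1 (c * C i e1) + MonoidAlgebra.single e2 (c * C i e2)
        + MonoidAlgebra.single e3 (c * C i e3) := by
  have h1 : (MonoidAlgebra.single i c : MonoidAlgebra k S) = c • MonoidAlgebra.single i 1 := by
    rw [MonoidAlgebra.smul_single', mul_one]
  rw [h1, map_smul, hC i, sum_univ, smul_add, smul_add]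
  simp only [MonoidAlgebra.smul_single']

set_option maxHeartbeats 4000000 in
theorem rbo_CS12 {k : Type*} [Field k] [CharZero k]
    (P : MonoidAlgebra k S →ₗ[k] MonoidAlgebra k S) (C : S → S → k)
    (hC : ∀ i, P (MonoidAlgebra.single i 1) = ∑ j, MonoidAlgebra.single j (C i j)) :
    (∀ x y, P x * P y = P (x * P y) + P (P x * y)) ↔
      (C = mat3 0 0 0 0 0 0 0 0 0) := by
  constructor
  · intro hrb
    have h := hrb (MonoidAlgebra.single e1 1) (MonoidAlgebra.single e1 1)
    rw [hC e1, sum_univ] at h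
    simp only [mul_add, add_mul, MonoidAlgebra.single_mul_single, map_add, Psingle P C hC,
      m11, m12, m13, m21, m22, m23, m31, m32, m33, one_mul, mul_one] at h
    have raw := congrArg (coord e1) h
    simp only [map_add, coord_single, reduceCtorEq, if_true, if_false, reduceIte] at raw
    have E0 : -C e1 e1 ^ 2 + (2 : k) * C e1 e2 * C e1 e3 - (2 : k) * C e1 e2 * C e2 e1 - (2 : k) * C e1 e3 * C e3 e1 = 0 := by linear_combination raw
    clear raw
    have raw := congrArg (coord e2) h
    simp only [map_add, coord_single, reduceCtorEq, if_true, if_false, reduceIte] at raw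
    have E1 : C e1 e3 ^ 2 - (2 : k) * C e1 e2 * C e2 e2 - (2 : k) * C e1 e3 * C e3 e2 = 0 := by linear_combination raw
    clear raw
    have raw := congrArg (coord e3) h
    simp only [map_add, coord_single, reduceCtorEq, if_true, if_false, reduceIte] at raw
    have E2 : C e1 e2 ^ 2 - (2 : k) * C e1 e2 * C e2 e3 - (2 : k) * C e1 e3 * C e3 e3 = 0 := by linear_combination raw
    clear raw
    clear h
    have h := hrb (MonoidAlgebra.single e1 1) (MonoidAlgebra.single e2 1)
    rw [hC e1, hC e2, sum_univ, sum_univ] at h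
    simp only [mul_add, add_mul, MonoidAlgebra.single_mul_single, map_add, Psingle P C hC,
      m11, m12, m13, m21, m22, m23, m31, m32, m33, one_mul, mul_one] at h
    have raw := congrArg (coord e1) h
    simp only [map_add, coord_single, reduceCtorEq, if_true, if_false, reduceIte] at raw
    have E3 : -C e1 e1 * C e1 e3 - C e1 e1 * C e2 e1 + C e1 e3 * C e2 e2 - C e2 e1 * C e2 e2 + C e1 e2 * C e2 e3 - C e1 e2 * C e3 e1 - C e2 e3 * C e3 e1 = 0 := by linear_combination raw
    clear raw
    have raw := congrArg (coord e2) h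
    simp only [map_add, coord_single, reduceCtorEq, if_true, if_false, reduceIte] at raw
    have E4 : -C e1 e2 * C e1 e3 - C e2 e2 ^ 2 + C e1 e3 * C e2 e3 - C e1 e2 * C e3 e2 - C e2 e3 * C e3 e2 = 0 := by linear_combination raw
    clear raw
    have raw := congrArg (coord e3) h
    simp only [map_add, coord_single, reduceCtorEq, if_true, if_false, reduceIte] at raw
    have E5 : -C e1 e3 ^ 2 + C e1 e2 * C e2 e2 - C e2 e2 * C e2 e3 - C e1 e2 * C e3 e3 - C e2 e3 * C e3 e3 = 0 := by linear_combination raw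
    clear raw
    clear h
    have h := hrb (MonoidAlgebra.single e1 1) (MonoidAlgebra.single e3 1)
    rw [hC e1, hC e3, sum_univ, sum_univ] at h
    simp only [mul_add, add_mul, MonoidAlgebra.single_mul_single, map_add, Psingle P C hC,
      m11, m12, m13, m21, m22, m23, m31, m32, m33, one_mul, mul_one] at h
    have raw := congrArg (coord e1) h
    simp only [map_add, coord_single, reduceCtorEq, if_true, if_false, reduceIte] at raw
    have E6 : -C e1 e1 * C e1 e2 - C e1 e3 * C e2 e1 - C e1 e1 * C e3 e1 + C e1 e3 * C e3 e2 - C e2 e1 * C e3 e2 + C e1 e2 * C e3 e3 - C e3 e1 * C e3 e3 = 0 := by linear_combination raw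
    clear raw
    have raw := congrArg (coord e2) h
    simp only [map_add, coord_single, reduceCtorEq, if_true, if_false, reduceIte] at raw
    have E7 : -C e1 e2 ^ 2 - C e1 e3 * C e2 e2 - C e2 e2 * C e3 e2 + C e1 e3 * C e3 e3 - C e3 e2 * C e3 e3 = 0 := by linear_combination raw
    clear raw
    have raw := congrArg (coord e3) h
    simp only [map_add, coord_single, reduceCtorEq, if_true, if_false, reduceIte] at raw
    have E8 : -C e1 e2 * C e1 e3 - C e1 e3 * C e2 e3 + C e1 e2 * C e3 e2 - C e2 e3 * C e3 e2 - C e3 e3 ^ 2 = 0 := by linear_combination raw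
    clear raw
    clear h
    have h := hrb (MonoidAlgebra.single e2 1) (MonoidAlgebra.single e1 1)
    rw [hC e2, hC e1, sum_univ, sum_univ] at h
    simp only [mul_add, add_mul, MonoidAlgebra.single_mul_single, map_add, Psingle P C hC,
      m11, m12, m13, m21, m22, m23, m31, m32, m33, one_mul, mul_one] at h
    have raw := congrArg (coord e1) h
    simp only [map_add, coord_single, reduceCtorEq, if_true, if_false, reduceIte] at raw
    have E9 : -C e1 e1 * C e1 e3 - C e1 e1 * C e2 e1 + C e1 e3 * C e2 e2 - C e2 e1 * C e2 e2 + C e1 e2 * C e2 e3 - C e1 e2 * C e3 e1 - C e2 e3 * C e3 e1 = 0 := by linear_combination raw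
    clear raw
    have raw := congrArg (coord e2) h
    simp only [map_add, coord_single, reduceCtorEq, if_true, if_false, reduceIte] at raw
    have E10 : -C e1 e2 * C e1 e3 - C e2 e2 ^ 2 + C e1 e3 * C e2 e3 - C e1 e2 * C e3 e2 - C e2 e3 * C e3 e2 = 0 := by linear_combination raw
    clear raw
    have raw := congrArg (coord e3) h
    simp only [map_add, coord_single, reduceCtorEq, if_true, if_false, reduceIte] at raw
    have E11 : -C e1 e3 ^ 2 + C e1 e2 * C e2 e2 - C e2 e2 * C e2 e3 - C e1 e2 * C e3 e3 - C e2 e3 * C e3 e3 = 0 := by linear_combination raw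
    clear raw
    clear h
    have h := hrb (MonoidAlgebra.single e2 1) (MonoidAlgebra.single e2 1)
    rw [hC e2, sum_univ] at h
    simp only [mul_add, add_mul, MonoidAlgebra.single_mul_single, map_add, Psingle P C hC,
      m11, m12, m13, m21, m22, m23, m31, m32, m33, one_mul, mul_one] at h
    have raw := congrArg (coord e1) h
    simp only [map_add, coord_single, reduceCtorEq, if_true, if_false, reduceIte] at raw
    have E12 : -C e2 e1 ^ 2 - (2 : k) * C e1 e1 * C e2 e3 + (2 : k) * C e2 e2 * C e2 e3 - (2 : k) * C e2 e2 * C e3 e1 = 0 := by linear_combination raw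
    clear raw
    have raw := congrArg (coord e2) h
    simp only [map_add, coord_single, reduceCtorEq, if_true, if_false, reduceIte] at raw
    have E13 : -(2 : k) * C e1 e2 * C e2 e3 + C e2 e3 ^ 2 - (2 : k) * C e2 e2 * C e3 e2 = 0 := by linear_combination raw
    clear raw
    have raw := congrArg (coord e3) h
    simp only [map_add, coord_single, reduceCtorEq, if_true, if_false, reduceIte] at raw
    have E14 : C e2 e2 ^ 2 - (2 : k) * C e1 e3 * C e2 e3 - (2 : k) * C e2 e2 * C e3 e3 = 0 := by linear_combination raw
    clear raw
    clear h
    have h := hrb (MonoidAlgebra.single e2 1) (MonoidAlgebra.single e3 1)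
    rw [hC e2, hC e3, sum_univ, sum_univ] at h
    simp only [mul_add, add_mul, MonoidAlgebra.single_mul_single, map_add, Psingle P C hC,
      m11, m12, m13, m21, m22, m23, m31, m32, m33, one_mul, mul_one] at h
    have raw := congrArg (coord e1) h
    simp only [map_add, coord_single, reduceCtorEq, if_true, if_false, reduceIte] at raw
    have E15 : -C e1 e1 * C e2 e2 - C e2 e1 * C e2 e3 - C e2 e1 * C e3 e1 + C e2 e3 * C e3 e2 - C e3 e1 * C e3 e2 - C e1 e1 * C e3 e3 + C e2 e2 * C e3 e3 = 0 := by linear_combination raw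
    clear raw
    have raw := congrArg (coord e2) h
    simp only [map_add, coord_single, reduceCtorEq, if_true, if_false, reduceIte] at raw
    have E16 : -C e1 e2 * C e2 e2 - C e2 e2 * C e2 e3 - C e3 e2 ^ 2 - C e1 e2 * C e3 e3 + C e2 e3 * C e3 e3 = 0 := by linear_combination raw
    clear raw
    have raw := congrArg (coord e3) h
    simp only [map_add, coord_single, reduceCtorEq, if_true, if_false, reduceIte] at raw
    have E17 : -C e1 e3 * C e2 e2 - C e2 e3 ^ 2 + C e2 e2 * C e3 e2 - C e1 e3 * C e3 e3 - C e3 e2 * C e3 e3 = 0 := by linear_combination raw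
    clear raw
    clear h
    have h := hrb (MonoidAlgebra.single e3 1) (MonoidAlgebra.single e1 1)
    rw [hC e3, hC e1, sum_univ, sum_univ] at h
    simp only [mul_add, add_mul, MonoidAlgebra.single_mul_single, map_add, Psingle P C hC,
      m11, m12, m13, m21, m22, m23, m31, m32, m33, one_mul, mul_one] at h
    have raw := congrArg (coord e1) h
    simp only [map_add, coord_single, reduceCtorEq, if_true, if_false, reduceIte] at raw
    have E18 : -C e1 e1 * C e1 e2 - C e1 e3 * C e2 e1 - C e1 e1 * C e3 e1 + C e1 e3 * C e3 e2 - C e2 e1 * C e3 e2 + C e1 e2 * C e3 e3 - C e3 e1 * C e3 e3 = 0 := by linear_combination raw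
    clear raw
    have raw := congrArg (coord e2) h
    simp only [map_add, coord_single, reduceCtorEq, if_true, if_false, reduceIte] at raw
    have E19 : -C e1 e2 ^ 2 - C e1 e3 * C e2 e2 - C e2 e2 * C e3 e2 + C e1 e3 * C e3 e3 - C e3 e2 * C e3 e3 = 0 := by linear_combination raw
    clear raw
    have raw := congrArg (coord e3) h
    simp only [map_add, coord_single, reduceCtorEq, if_true, if_false, reduceIte] at raw
    have E20 : -C e1 e2 * C e1 e3 - C e1 e3 * C e2 e3 + C e1 e2 * C e3 e2 - C e2 e3 * C e3 e2 - C e3 e3 ^ 2 = 0 := by linear_combination raw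
    clear raw
    clear h
    have h := hrb (MonoidAlgebra.single e3 1) (MonoidAlgebra.single e2 1)
    rw [hC e3, hC e2, sum_univ, sum_univ] at h
    simp only [mul_add, add_mul, MonoidAlgebra.single_mul_single, map_add, Psingle P C hC,
      m11, m12, m13, m21, m22, m23, m31, m32, m33, one_mul, mul_one] at h
    have raw := congrArg (coord e1) h
    simp only [map_add, coord_single, reduceCtorEq, if_true, if_false, reduceIte] at raw
    have E21 : -C e1 e1 * C e2 e2 - C e2 e1 * C e2 e3 - C e2 e1 * C e3 e1 + C e2 e3 * C e3 e2 - C e3 e1 * C e3 e2 - C e1 e1 * C e3 e3 + C e2 e2 * C e3 e3 = 0 := by linear_combination raw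
    clear raw
    have raw := congrArg (coord e2) h
    simp only [map_add, coord_single, reduceCtorEq, if_true, if_false, reduceIte] at raw
    have E22 : -C e1 e2 * C e2 e2 - C e2 e2 * C e2 e3 - C e3 e2 ^ 2 - C e1 e2 * C e3 e3 + C e2 e3 * C e3 e3 = 0 := by linear_combination raw
    clear raw
    have raw := congrArg (coord e3) h
    simp only [map_add, coord_single, reduceCtorEq, if_true, if_false, reduceIte] at raw
    have E23 : -C e1 e3 * C e2 e2 - C e2 e3 ^ 2 + C e2 e2 * C e3 e2 - C e1 e3 * C e3 e3 - C e3 e2 * C e3 e3 = 0 := by linear_combination raw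
    clear raw
    clear h
    have h := hrb (MonoidAlgebra.single e3 1) (MonoidAlgebra.single e3 1)
    rw [hC e3, sum_univ] at h
    simp only [mul_add, add_mul, MonoidAlgebra.single_mul_single, map_add, Psingle P C hC,
      m11, m12, m13, m21, m22, m23, m31, m32, m33, one_mul, mul_one] at h
    have raw := congrArg (coord e1) h
    simp only [map_add, coord_single, reduceCtorEq, if_true, if_false, reduceIte] at raw
    have E24 : -C e3 e1 ^ 2 - (2 : k) * C e1 e1 * C e3 e2 - (2 : k) * C e2 e1 * C e3 e3 + (2 : k) * C e3 e2 * C e3 e3 = 0 := by linear_combination raw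
    clear raw
    have raw := congrArg (coord e2) h
    simp only [map_add, coord_single, reduceCtorEq, if_true, if_false, reduceIte] at raw
    have E25 : -(2 : k) * C e1 e2 * C e3 e2 - (2 : k) * C e2 e2 * C e3 e3 + C e3 e3 ^ 2 = 0 := by linear_combination raw
    clear raw
    have raw := congrArg (coord e3) h
    simp only [map_add, coord_single, reduceCtorEq, if_true, if_false, reduceIte] at raw
    have E26 : -(2 : k) * C e1 e3 * C e3 e2 + C e3 e2 ^ 2 - (2 : k) * C e2 e3 * C e3 e3 = 0 := by linear_combination raw
    clear raw
    clear h
    have hv5 : (C e2 e3) ^ 5 = 0 := by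
      linear_combination -((9085 : k)/62016) * C e1 e2 * C e1 e3 * C e3 e2 * E0 - ((9085 : k)/62016) * C e1 e2 * C e2 e1 * C e3 e2 * E0 + ((66815 : k)/93024) * C e1 e1 * C e2 e2 * C e3 e2 * E0 - ((522445 : k)/372096) * C e1 e3 * C e2 e3 * C e3 e2 * E0 - ((255185 : k)/372096) * C e2 e1 * C e2 e3 * C e3 e2 * E0 - ((1531823 : k)/1488384) * C e1 e3 * C e3 e1 * C e3 e2 * E0 - ((1531823 : k)/1488384) * C e2 e1 * C e3 e1 * C e3 e2 * E0 - ((704329 : k)/1488384) * C e1 e2 * C e3 e2 ^ 2 * E0 + ((177031 : k)/93024) * C e2 e3 * C e3 e2 ^ 2 * E0 + ((3273383 : k)/1488384) * C e3 e1 * C e3 e2 ^ 2 * E0 + ((1928 : k)/2295) * C e1 e1 * C e1 e3 * C e3 e3 * E0 + ((1928 : k)/2295) * C e1 e1 * C e2 e1 * C e3 e3 * E0 + ((482 : k)/765) * C e1 e3 * C e2 e2 * C e3 e3 * E0 + ((482 : k)/765) * C e2 e1 * C e2 e2 * C e3 e3 * E0 - ((123943 : k)/73440) * C e1 e2 * C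 e2 e3 * C e3 e3 * E0 + ((116231 : k)/18360) * C e2 e3 ^ 2 * C e3 e3 * E0 + ((2651 : k)/850) * C e1 e2 * C e3 e1 * C e3 e3 * E0 - ((551041 : k)/122400) * C e2 e3 * C e3 e1 * C e3 e3 * E0 + ((2651 : k)/850) * C e3 e1 ^ 2 * C e3 e3 * E0 + ((3346673 : k)/1395360) * C e1 e1 * C e3 e2 * C e3 e3 * E0 - ((78309167 : k)/5581440) * C e2 e2 * C e3 e2 * C e3 e3 * E0 - ((2733143 : k)/244800) * C e1 e3 * C e3 e3 ^ 2 * E0 - ((2733143 : k)/244800) * C e2 e1 * C e3 e3 ^ 2 * E0 + ((1018878733 : k)/27907200) * C e3 e2 * C e3 e3 ^ 2 * E0 - ((13 : k)/144) * C e1 e2 * C e1 e3 * C e2 e3 * E1 + ((13 : k)/144) * C e1 e3 * C e2 e3 ^ 2 * E1 + ((9085 : k)/31008) * C e1 e2 ^ 2 * C e3 e2 * E1 + ((66815 : k)/186048) * C e1 e1 * C e1 e3 * C e3 e2 * E1 + ((66815 : k)/93024) * C e1 e1 * C e2 e1 * C e3 e2 * E1 - ((66815 : k)/186048) * C e1 e3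 * C e2 e2 * C e3 e2 * E1 + ((30173 : k)/9792) * C e1 e2 * C e2 e3 * C e3 e2 * E1 - ((939577 : k)/186048) * C e2 e3 ^ 2 * C e3 e2 * E1 + ((559981 : k)/744192) * C e1 e2 * C e3 e1 * C e3 e2 * E1 - ((110101 : k)/165376) * C e2 e3 * C e3 e1 * C e3 e2 * E1 - ((1531823 : k)/744192) * C e3 e1 ^ 2 * C e3 e2 * E1 - ((295481 : k)/372096) * C e1 e1 * C e3 e2 ^ 2 * E1 + ((600277 : k)/1488384) * C e2 e2 * C e3 e2 ^ 2 * E1 - ((964 : k)/2295) * C e1 e1 * C e1 e2 * C e3 e3 * E1 - ((208123 : k)/73440) * C e1 e2 * C e2 e2 * C e3 e3 * E1 - ((46823 : k)/73440) * C e1 e1 * C e2 e3 * C e3 e3 * E1 + ((25643 : k)/4590) * C e2 e2 * C e2 e3 * C e3 e3 * E1 + ((95677 : k)/22950) * C e1 e1 * C e3 e1 * C e3 e3 * E1 + ((6748 : k)/1275) * C e2 e2 * C e3 e1 * C e3 e3 * E1 - ((127455119 : k)/5581440) * C e2 e1 * C e3 e2 * C e3 e3 * E1 + ((127453409 : k)/5581440)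 * C e3 e2 ^ 2 * C e3 e3 * E1 + ((3322907 : k)/244800) * C e1 e2 * C e3 e3 ^ 2 * E1 + ((4984357 : k)/183600) * C e2 e3 * C e3 e3 ^ 2 * E1 - ((16524533 : k)/367200) * C e3 e1 * C e3 e3 ^ 2 * E1 - ((4 : k)/3) * C e2 e3 ^ 3 * E2 + ((9085 : k)/15504) * C e1 e2 * C e2 e2 * C e3 e2 * E2 + ((1947065 : k)/744192) * C e1 e1 * C e2 e3 * C e3 e2 * E2 - ((111335 : k)/186048) * C e2 e2 * C e2 e3 * C e3 e2 * E2 - ((60559 : k)/26112) * C e1 e1 * C e3 e1 * C e3 e2 * E2 + ((4756193 : k)/1488384) * C e2 e2 * C e3 e1 * C e3 e2 * E2 + ((4383 : k)/165376) * C e1 e3 * C e3 e2 ^ 2 * E2 - ((268249 : k)/744192) * C e2 e1 * C e3 e2 ^ 2 * E2 + ((1218395 : k)/496128) * C e3 e2 ^ 3 * E2 - ((7712 : k)/2295) * C e1 e1 * C e2 e2 * C e3 e3 * E2 - ((1928 : k)/765) * C e2 e2 ^ 2 * C e3 e3 * E2 + ((179753 : k)/73440) * C e1 e3 * C e2 e3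 * C e3 e3 * E2 - ((20749 : k)/12240) * C e2 e1 * C e2 e3 * C e3 e3 * E2 - ((29402 : k)/3825) * C e1 e3 * C e3 e1 * C e3 e3 * E2 + ((66757 : k)/11475) * C e2 e1 * C e3 e1 * C e3 e3 * E2 - ((703247311 : k)/11162880) * C e2 e3 * C e3 e2 * C e3 e3 * E2 + ((856852621 : k)/18604800) * C e3 e1 * C e3 e2 * C e3 e3 * E2 - ((12055429 : k)/734400) * C e1 e1 * C e3 e3 ^ 2 * E2 + ((3024101 : k)/81600) * C e2 e2 * C e3 e3 ^ 2 * E2 + ((502429 : k)/18360) * C e3 e3 ^ 3 * E2 - ((240005 : k)/186048) * C e1 e1 * C e1 e2 * C e3 e2 * E3 + ((66815 : k)/186048) * C e1 e3 ^ 2 * C e3 e2 * E3 - ((66815 : k)/186048) * C e1 e3 * C e2 e1 * C e3 e2 * E3 + ((9085 : k)/62016) * C e1 e2 * C e2 e2 * C e3 e2 * E3 + ((522445 : k)/372096) * C e1 e1 * C e2 e3 * C e3 e2 * E3 - ((255185 : k)/372096) * C e2 e2 * C e2 e3 * C e3 e2 * E3 + ((8119 : k)/26112) * C e1 e1 * C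 e3 e1 * C e3 e2 * E3 - ((457033 : k)/1488384) * C e2 e2 * C e3 e1 * C e3 e2 * E3 - ((176663 : k)/165376) * C e1 e3 * C e3 e2 ^ 2 * E3 - ((70219 : k)/82688) * C e2 e1 * C e3 e2 ^ 2 * E3 - ((64331 : k)/165376) * C e3 e2 ^ 3 * E3 - ((1928 : k)/2295) * C e1 e1 ^ 2 * C e3 e3 * E3 + ((964 : k)/2295) * C e1 e2 * C e1 e3 * C e3 e3 * E3 - ((964 : k)/2295) * C e1 e2 * C e2 e1 * C e3 e3 * E3 - ((3374 : k)/2295) * C e1 e1 * C e2 e2 * C e3 e3 * E3 - ((482 : k)/765) * C e2 e2 ^ 2 * C e3 e3 * E3 - ((77671 : k)/24480) * C e1 e3 * C e2 e3 * C e3 e3 * E3 + ((10907 : k)/7344) * C e2 e1 * C e2 e3 * C e3 e3 * E3 + ((74951 : k)/22950) * C e1 e3 * C e3 e1 * C e3 e3 * E3 - ((30607 : k)/11475) * C e2 e1 * C e3 e1 * C e3 e3 * E3 + ((115776607 : k)/2790720) * C e1 e2 * C e3 e2 * C e3 e3 * E3 - ((29124809 : k)/2790720) * C e2 e3 * C e3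 e2 * C e3 e3 * E3 + ((1692075719 : k)/55814400) * C e3 e1 * C e3 e2 * C e3 e3 * E3 + ((2733143 : k)/244800) * C e1 e1 * C e3 e3 ^ 2 * E3 - ((6965509 : k)/734400) * C e2 e2 * C e3 e3 ^ 2 * E3 + ((8585029 : k)/183600) * C e3 e3 ^ 3 * E3 + ((13 : k)/144) * C e1 e3 ^ 2 * C e2 e3 * E4 - ((66815 : k)/93024) * C e1 e1 ^ 2 * C e3 e2 * E4 - ((455353 : k)/93024) * C e1 e3 * C e2 e3 * C e3 e2 * E4 + ((349255 : k)/248064) * C e2 e1 * C e2 e3 * C e3 e2 * E4 - ((398015 : k)/1488384) * C e1 e3 * C e3 e1 * C e3 e2 * E4 + ((499031 : k)/165376) * C e2 e1 * C e3 e1 * C e3 e2 * E4 - ((1601 : k)/11628) * C e1 e2 * C e3 e2 ^ 2 * E4 - ((636631 : k)/744192) * C e2 e3 * C e3 e2 ^ 2 * E4 + ((61939 : k)/87552) * C e3 e1 * C e3 e2 ^ 2 * E4 - ((1928 : k)/2295) * C e1 e1 * C e1 e3 * C e3 e3 * E4 + ((84731 : k)/73440) * C e1 e3 * C e2 e2 *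 C e3 e3 * E4 + ((99367 : k)/73440) * C e1 e2 * C e2 e3 * C e3 e3 * E4 - ((284149 : k)/36720) * C e2 e3 ^ 2 * C e3 e3 * E4 - ((40006 : k)/11475) * C e1 e2 * C e3 e1 * C e3 e3 * E4 + ((2614921 : k)/367200) * C e2 e3 * C e3 e1 * C e3 e3 * E4 - ((74951 : k)/22950) * C e3 e1 ^ 2 * C e3 e3 * E4 + ((29826967 : k)/1116288) * C e1 e1 * C e3 e2 * C e3 e3 * E4 + ((5006501 : k)/279072) * C e2 e2 * C e3 e2 * C e3 e3 * E4 + ((50879 : k)/14688) * C e1 e3 * C e3 e3 ^ 2 * E4 + ((28454287 : k)/734400) * C e2 e1 * C e3 e3 ^ 2 * E4 - ((176862977 : k)/9302400) * C e3 e2 * C e3 e3 ^ 2 * E4 - ((13 : k)/72) * C e1 e2 * C e1 e3 * C e2 e3 * E5 + ((151881 : k)/20672) * C e1 e2 * C e2 e3 * C e3 e2 * E5 - ((1644109 : k)/1488384) * C e1 e2 * C e3 e1 * C e3 e2 * E5 + ((408043 : k)/1488384) * C e1 e1 * C e3 e2 ^ 2 * E5 + ((3856 : k)/2295) * C e1 e1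 * C e1 e2 * C e3 e3 * E5 - ((84731 : k)/36720) * C e1 e2 * C e2 e2 * C e3 e3 * E5 + ((20749 : k)/12240) * C e1 e1 * C e2 e3 * C e3 e3 * E5 - ((8917 : k)/11475) * C e1 e1 * C e3 e1 * C e3 e3 * E5 - ((8974087 : k)/734400) * C e1 e2 * C e3 e3 ^ 2 * E5 + ((66815 : k)/93024) * C e1 e1 * C e1 e3 * C e3 e2 * E6 + ((66815 : k)/46512) * C e1 e1 * C e2 e1 * C e3 e2 * E6 - ((66815 : k)/93024) * C e1 e3 * C e2 e2 * C e3 e2 * E6 - ((1538815 : k)/744192) * C e1 e2 * C e2 e3 * C e3 e2 * E6 - ((198145 : k)/93024) * C e2 e3 ^ 2 * C e3 e2 * E6 - ((3520679 : k)/1488384) * C e1 e2 * C e3 e1 * C e3 e2 * E6 - ((1001213 : k)/1488384) * C e2 e3 * C e3 e1 * C e3 e2 * E6 + ((9223 : k)/7752) * C e3 e1 ^ 2 * C e3 e2 * E6 + ((445763 : k)/496128) * C e1 e1 * C e3 e2 ^ 2 * E6 + ((37283 : k)/87552) * C e2 e2 * C e3 e2 ^ 2 * E6 - ((1928 : k)/2295)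 * C e1 e2 * C e2 e2 * C e3 e3 * E6 + ((16489 : k)/4896) * C e1 e1 * C e2 e3 * C e3 e3 * E6 + ((13343 : k)/2040) * C e2 e2 * C e2 e3 * C e3 e3 * E6 - ((52297 : k)/22950) * C e1 e1 * C e3 e1 * C e3 e3 * E6 - ((58804 : k)/11475) * C e2 e2 * C e3 e1 * C e3 e3 * E6 - ((127455119 : k)/5581440) * C e1 e3 * C e3 e2 * C e3 e3 * E6 - ((95848799 : k)/2790720) * C e2 e1 * C e3 e2 * C e3 e3 * E6 - ((139027813 : k)/11162880) * C e3 e2 ^ 2 * C e3 e3 * E6 - ((28454287 : k)/734400) * C e1 e2 * C e3 e3 ^ 2 * E6 - ((9130379 : k)/734400) * C e2 e3 * C e3 e3 ^ 2 * E6 + ((9267541 : k)/367200) * C e3 e1 * C e3 e3 ^ 2 * E6 + ((255185 : k)/186048) * C e1 e1 * C e2 e3 * C e3 e2 * E7 + ((27623 : k)/20672) * C e1 e1 * C e3 e1 * C e3 e2 * E7 + ((13225 : k)/248064) * C e1 e3 * C e3 e2 ^ 2 * E7 + ((33499 : k)/4590) * C e1 e3 * C e3 e1 * C e3 e3 * E7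 + ((7582469 : k)/367200) * C e1 e1 * C e3 e3 ^ 2 * E7 + ((66815 : k)/46512) * C e1 e1 ^ 2 * C e3 e2 * E8 + ((349255 : k)/186048) * C e2 e1 * C e2 e3 * C e3 e2 * E8 - ((2115793 : k)/1488384) * C e1 e2 * C e3 e2 ^ 2 * E8 - ((241 : k)/612) * C e2 e3 ^ 2 * C e3 e3 * E8 - ((130381 : k)/22950) * C e1 e2 * C e3 e1 * C e3 e3 * E8 - ((106536427 : k)/2790720) * C e1 e1 * C e3 e2 * C e3 e3 * E8 + ((9085 : k)/31008) * C e1 e2 ^ 2 * C e3 e2 * E12 - ((66815 : k)/62016) * C e1 e1 * C e1 e3 * C e3 e2 * E12 + ((66815 : k)/186048) * C e1 e3 * C e2 e2 * C e3 e2 * E12 + ((309695 : k)/186048) * C e1 e2 * C e2 e3 * C e3 e2 * E12 + ((1749863 : k)/744192) * C e1 e2 * C e3 e1 * C e3 e2 * E12 + ((537395 : k)/744192) * C e2 e3 * C e3 e1 * C e3 e2 * E12 + ((537395 : k)/744192) * C e3 e1 ^ 2 * C e3 e2 * E12 - ((437069 : k)/744192) * C e1 e1 * C e3 e2 ^ 2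 * E12 + ((70219 : k)/82688) * C e2 e2 * C e3 e2 ^ 2 * E12 - ((964 : k)/765) * C e1 e1 * C e1 e2 * C e3 e3 * E12 - ((1928 : k)/2295) * C e1 e2 * C e2 e2 * C e3 e3 * E12 - ((116231 : k)/36720) * C e1 e1 * C e2 e3 * C e3 e3 * E12 - ((100807 : k)/36720) * C e2 e2 * C e2 e3 * C e3 e3 * E12 + ((11327 : k)/11475) * C e1 e1 * C e3 e1 * C e3 e3 * E12 + ((16147 : k)/11475) * C e2 e2 * C e3 e1 * C e3 e3 * E12 + ((182001373 : k)/5581440) * C e1 e3 * C e3 e2 * C e3 e3 * E12 + ((381064721 : k)/11162880) * C e3 e2 ^ 2 * C e3 e3 * E12 + ((10821509 : k)/367200) * C e1 e2 * C e3 e3 ^ 2 * E12 - ((964 : k)/459) * C e2 e3 * C e3 e3 ^ 2 * E12 + ((1928 : k)/765) * C e3 e1 * C e3 e3 ^ 2 * E12 - ((2 : k)/3) * C e1 e2 * C e2 e3 ^ 2 * E13 + C e2 e3 ^ 3 * E13 + ((66815 : k)/93024) * C e1 e1 * C e1 e2 * C e3 e2 * E13 - ((53705 : k)/248064) * C e1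 e3 * C e2 e1 * C e3 e2 * E13 + ((9085 : k)/124032) * C e1 e2 * C e2 e2 * C e3 e2 * E13 - ((66815 : k)/31008) * C e1 e1 * C e2 e3 * C e3 e2 * E13 + ((10 : k)/3) * C e2 e2 * C e2 e3 * C e3 e2 * E13 + ((66815 : k)/46512) * C e1 e1 * C e3 e1 * C e3 e2 * E13 - ((537395 : k)/372096) * C e2 e2 * C e3 e1 * C e3 e2 * E13 - ((66815 : k)/124032) * C e1 e3 * C e3 e2 ^ 2 * E13 + ((75049 : k)/165376) * C e2 e1 * C e3 e2 ^ 2 * E13 - ((9591 : k)/41344) * C e3 e2 ^ 3 * E13 + ((482 : k)/765) * C e1 e2 * C e2 e1 * C e3 e3 * E13 - ((964 : k)/2295) * C e1 e1 * C e2 e2 * C e3 e3 * E13 - ((241 : k)/765) * C e2 e2 ^ 2 * C e3 e3 * E13 + ((13 : k)/48) * C e1 e3 * C e2 e3 * C e3 e3 * E13 - ((262759 : k)/73440) * C e2 e1 * C e2 e3 * C e3 e3 * E13 - ((24341 : k)/7650) * C e2 e1 * C e3 e1 * C e3 e3 * E13 - ((45042829 : k)/2790720) * C e1 e2 * C e3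 e2 * C e3 e3 * E13 + ((59925283 : k)/1240320) * C e2 e3 * C e3 e2 * C e3 e3 * E13 - ((301995163 : k)/6976800) * C e3 e1 * C e3 e2 * C e3 e3 * E13 - ((964 : k)/765) * C e1 e1 * C e3 e3 ^ 2 * E13 - ((106141 : k)/4080) * C e2 e2 * C e3 e3 ^ 2 * E13 + ((2246401 : k)/367200) * C e3 e3 ^ 3 * E13 + ((13 : k)/144) * C e1 e3 ^ 2 * C e2 e3 * E14 - ((160885 : k)/186048) * C e1 e2 * C e1 e3 * C e3 e2 * E14 + ((9085 : k)/62016) * C e1 e2 * C e2 e1 * C e3 e2 * E14 - ((1833487 : k)/372096) * C e1 e3 * C e2 e3 * C e3 e2 * E14 + ((537395 : k)/744192) * C e2 e1 * C e2 e3 * C e3 e2 * E14 + ((564029 : k)/744192) * C e1 e3 * C e3 e1 * C e3 e2 * E14 + ((2017123 : k)/744192) * C e2 e1 * C e3 e1 * C e3 e2 * E14 + ((606833 : k)/744192) * C e1 e2 * C e3 e2 ^ 2 * E14 + ((3060707 : k)/744192) * C e2 e3 * C e3 e2 ^ 2 * E14 - ((718313 : k)/1488384) * C e3 e1 * C e3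 e2 ^ 2 * E14 - ((1928 : k)/2295) * C e1 e2 ^ 2 * C e3 e3 * E14 - ((1928 : k)/2295) * C e1 e1 * C e2 e1 * C e3 e3 * E14 + ((131003 : k)/73440) * C e1 e3 * C e2 e2 * C e3 e3 * E14 - ((482 : k)/765) * C e2 e1 * C e2 e2 * C e3 e3 * E14 + ((167899 : k)/24480) * C e1 e2 * C e2 e3 * C e3 e3 * E14 - ((70967 : k)/36720) * C e2 e3 ^ 2 * C e3 e3 * E14 + ((20726 : k)/3825) * C e1 e2 * C e3 e1 * C e3 e3 * E14 - ((434627 : k)/367200) * C e2 e3 * C e3 e1 * C e3 e3 * E14 + ((47477 : k)/22950) * C e3 e1 ^ 2 * C e3 e3 * E14 + ((22654 : k)/2295) * C e1 e1 * C e3 e2 * C e3 e3 * E14 + ((24153337 : k)/1395360) * C e2 e2 * C e3 e2 * C e3 e3 * E14 + ((9509459 : k)/734400) * C e1 e3 * C e3 e3 ^ 2 * E14 + ((1193821 : k)/40800) * C e2 e1 * C e3 e3 ^ 2 * E14 - ((3939809 : k)/136800) * C e3 e2 * C e3 e3 ^ 2 * E14 - ((66815 : k)/93024) * C e1 e1 ^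 2 * C e3 e2 * E15 - ((9085 : k)/31008) * C e1 e2 * C e2 e1 * C e3 e2 * E15 + ((66815 : k)/93024) * C e1 e1 * C e2 e2 * C e3 e2 * E15 - ((537395 : k)/744192) * C e2 e1 * C e3 e1 * C e3 e2 * E15 + ((9085 : k)/7752) * C e1 e2 * C e3 e2 ^ 2 * E15 - ((2449523 : k)/1488384) * C e2 e3 * C e3 e2 ^ 2 * E15 - ((94599 : k)/165376) * C e3 e1 * C e3 e2 ^ 2 * E15 + ((3856 : k)/2295) * C e1 e1 * C e2 e1 * C e3 e3 * E15 + ((964 : k)/765) * C e2 e1 * C e2 e2 * C e3 e3 * E15 - ((36173 : k)/12240) * C e2 e3 ^ 2 * C e3 e3 * E15 + ((241 : k)/675) * C e2 e3 * C e3 e1 * C e3 e3 * E15 + ((964 : k)/2295) * C e3 e1 ^ 2 * C e3 e3 * E15 + ((4423727 : k)/620160) * C e1 e1 * C e3 e2 * C e3 e3 * E15 - ((113475887 : k)/5581440) * C e2 e2 * C e3 e2 * C e3 e3 * E15 - ((3856 : k)/2295) * C e2 e1 * C e3 e3 ^ 2 * E15 + ((177145433 : k)/13953600) * C e3 e2 *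 C e3 e3 ^ 2 * E15 - ((66815 : k)/46512) * C e1 e1 * C e2 e1 * C e3 e2 * E16 + ((4 : k)/3) * C e2 e3 ^ 2 * C e3 e2 * E16 - ((9085 : k)/62016) * C e1 e2 * C e3 e1 * C e3 e2 * E16 + ((255185 : k)/372096) * C e2 e3 * C e3 e1 * C e3 e2 * E16 + ((457033 : k)/1488384) * C e3 e1 ^ 2 * C e3 e2 * E16 + ((1928 : k)/2295) * C e1 e1 * C e3 e1 * C e3 e3 * E16 + ((482 : k)/765) * C e2 e2 * C e3 e1 * C e3 e3 * E16 + ((66815 : k)/93024) * C e1 e3 * C e3 e2 * C e3 e3 * E16 + ((95848799 : k)/2790720) * C e2 e1 * C e3 e2 * C e3 e3 * E16 - ((217539053 : k)/7441920) * C e3 e2 ^ 2 * C e3 e3 * E16 + ((1928 : k)/2295) * C e1 e2 * C e3 e3 ^ 2 * E16 - ((49987 : k)/2448) * C e2 e3 * C e3 e3 ^ 2 * E16 + ((3456833 : k)/146880) * C e3 e1 * C e3 e3 ^ 2 * E16 - ((66815 : k)/31008) * C e1 e1 * C e2 e3 * C e3 e2 * E17 + ((66815 : k)/93024) * C e1 e1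 * C e3 e1 * C e3 e2 * E17 - ((66815 : k)/93024) * C e1 e3 * C e3 e2 ^ 2 * E17 + ((702857 : k)/744192) * C e2 e1 * C e3 e2 ^ 2 * E17 - ((9591 : k)/20672) * C e3 e2 ^ 3 * E17 - ((13 : k)/72) * C e1 e3 * C e2 e3 * C e3 e3 * E17 - ((45721 : k)/73440) * C e2 e1 * C e2 e3 * C e3 e3 * E17 - ((47477 : k)/22950) * C e2 e1 * C e3 e1 * C e3 e3 * E17 - ((2398699 : k)/1395360) * C e1 e2 * C e3 e2 * C e3 e3 * E17 + ((142441573 : k)/2790720) * C e2 e3 * C e3 e2 * C e3 e3 * E17 - ((49503581 : k)/1468800) * C e3 e1 * C e3 e2 * C e3 e3 * E17 + ((15424 : k)/2295) * C e1 e1 * C e3 e3 ^ 2 * E17 + ((10817 : k)/7344) * C e2 e2 * C e3 e3 ^ 2 * E17 - ((502429 : k)/9180) * C e3 e3 ^ 3 * E17 + ((160885 : k)/186048) * C e1 e1 * C e1 e2 * C e3 e2 * E24 + ((646415 : k)/744192) * C e1 e3 * C e2 e1 * C e3 e2 * E24 - ((9085 : k)/15504) * C e1 e2 * C e2 e2 *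 C e3 e2 * E24 - ((268525 : k)/248064) * C e1 e1 * C e2 e3 * C e3 e2 * E24 - ((9223 : k)/7752) * C e1 e1 * C e3 e1 * C e3 e2 * E24 - ((537395 : k)/372096) * C e2 e2 * C e3 e1 * C e3 e2 * E24 + ((268249 : k)/744192) * C e1 e3 * C e3 e2 ^ 2 * E24 + ((155365 : k)/1488384) * C e2 e1 * C e3 e2 ^ 2 * E24 + ((66815 : k)/124032) * C e3 e2 ^ 3 * E24 - ((1928 : k)/2295) * C e1 e1 ^ 2 * C e3 e3 * E24 - ((482 : k)/135) * C e1 e2 * C e2 e1 * C e3 e3 * E24 + ((6266 : k)/2295) * C e1 e1 * C e2 e2 * C e3 e3 * E24 + ((1928 : k)/765) * C e2 e2 ^ 2 * C e3 e3 * E24 - ((12229 : k)/7344) * C e1 e3 * C e2 e3 * C e3 e3 * E24 + ((482 : k)/255) * C e2 e1 * C e2 e3 * C e3 e3 * E24 - ((2651 : k)/425) * C e1 e3 * C e3 e1 * C e3 e3 * E24 - ((964 : k)/2295) * C e2 e1 * C e3 e1 * C e3 e3 * E24 - ((126637469 : k)/5581440) * C e1 e2 * C e3 e2 * C e3 e3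 * E24 - ((18526883 : k)/697680) * C e2 e3 * C e3 e2 * C e3 e3 * E24 - ((561563 : k)/348840) * C e3 e1 * C e3 e2 * C e3 e3 * E24 - ((8585029 : k)/367200) * C e1 e1 * C e3 e3 ^ 2 * E24 - ((1928 : k)/765) * C e2 e2 * C e3 e3 ^ 2 * E24 - ((3157303 : k)/122400) * C e3 e3 ^ 3 * E24 + ((9085 : k)/31008) * C e1 e2 * C e2 e1 * C e3 e2 * E25 - ((13 : k)/288) * C e1 e3 * C e2 e3 * C e3 e2 * E25 - ((12305 : k)/6528) * C e2 e1 * C e2 e3 * C e3 e2 * E25 + ((66815 : k)/124032) * C e1 e3 * C e3 e1 * C e3 e2 * E25 - ((118151 : k)/46512) * C e2 e1 * C e3 e1 * C e3 e2 * E25 + ((9085 : k)/15504) * C e1 e2 * C e3 e2 ^ 2 * E25 - ((548677 : k)/1488384) * C e2 e3 * C e3 e2 ^ 2 * E25 - ((18193 : k)/43776) * C e3 e1 * C e3 e2 ^ 2 * E25 - ((3856 : k)/2295) * C e1 e1 * C e2 e1 * C e3 e3 * E25 - ((964 : k)/765) * C e2 e1 * C e2 e2 * C e3 e3 * E25 -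 ((2 : k)/3) * C e2 e3 ^ 2 * C e3 e3 * E25 + ((482 : k)/765) * C e1 e2 * C e3 e1 * C e3 e3 * E25 - ((8777 : k)/4896) * C e2 e3 * C e3 e1 * C e3 e3 * E25 - ((12773 : k)/22950) * C e3 e1 ^ 2 * C e3 e3 * E25 - ((6748 : k)/2295) * C e1 e1 * C e3 e2 * C e3 e3 * E25 - ((454907 : k)/146880) * C e2 e2 * C e3 e2 * C e3 e3 * E25 - ((3157303 : k)/61200) * C e2 e1 * C e3 e3 ^ 2 * E25 - ((576671 : k)/183600) * C e3 e2 * C e3 e3 ^ 2 * E25 - ((13 : k)/72) * C e1 e3 * C e2 e3 ^ 2 * E26 - ((66815 : k)/93024) * C e1 e1 * C e2 e1 * C e3 e2 * E26 + ((63595 : k)/124032) * C e1 e2 * C e2 e3 * C e3 e2 * E26 + ((312833 : k)/165376) * C e2 e3 ^ 2 * C e3 e2 * E26 + ((63595 : k)/124032) * C e1 e2 * C e3 e1 * C e3 e2 * E26 - ((6463 : k)/93024) * C e2 e3 * C e3 e1 * C e3 e2 * E26 + ((11983 : k)/43776) * C e3 e1 ^ 2 * C e3 e2 * E26 + ((66815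 : k)/62016) * C e1 e1 * C e3 e2 ^ 2 * E26 - ((964 : k)/765) * C e1 e1 * C e2 e3 * C e3 e3 * E26 - ((165707 : k)/36720) * C e2 e2 * C e2 e3 * C e3 e3 * E26 - ((6748 : k)/2295) * C e1 e1 * C e3 e1 * C e3 e3 * E26 - ((1687 : k)/765) * C e2 e2 * C e3 e1 * C e3 e3 * E26 + ((66815 : k)/186048) * C e1 e3 * C e3 e2 * C e3 e3 * E26 + ((264606463 : k)/11162880) * C e2 e1 * C e3 e2 * C e3 e3 * E26 - ((229009613 : k)/7441920) * C e3 e2 ^ 2 * C e3 e3 * E26 + ((964 : k)/2295) * C e1 e2 * C e3 e3 ^ 2 * E26 + ((14745311 : k)/734400) * C e2 e3 * C e3 e3 ^ 2 * E26 - ((4621061 : k)/734400) * C e3 e1 * C e3 e3 ^ 2 * E26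
    have z5 : (C e2 e3) = 0 := pow_eq_zero_iff (by norm_num) |>.1 hv5
    have hv4 : (C e2 e2) ^ 3 = 0 := by
      linear_combination -((4 : k)/3) * C e2 e2 * E0 - ((4 : k)/3) * C e3 e3 * E0 + ((4 : k)/3) * C e3 e1 * E2 + ((4 : k)/3) * C e1 e2 * E3 - ((4 : k)/3) * C e3 e3 * E4 - ((4 : k)/3) * C e2 e1 * E6 - ((4 : k)/3) * C e3 e2 * E6 - ((4 : k)/3) * C e1 e1 * E8 + ((4 : k)/3) * C e1 e3 * E12 + ((4 : k)/3) * C e3 e2 * E12 - ((4 : k)/3) * C e3 e1 * E13 + C e2 e2 * E14 + ((2 : k)/3) * C e3 e3 * E14 + ((4 : k)/3) * C e1 e1 * E15 + ((4 : k)/3) * C e3 e3 * E15 - ((4 : k)/3) * C e1 e3 * E16 + ((4 : k)/3) * C e2 e1 * E16 - ((4 : k)/3) * C e1 e2 ^ 2 * z5 + ((4 : k)/3) * C e1 e1 * C e1 e3 * z5 + ((4 : k)/3) * C e1 e1 * C e2 e1 * z5 - (2 : k) * C e1 e3 * C e2 e2 * z5 + ((4 : k)/3) * C e2 e1 * C e2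 e2 * z5 + ((4 : k)/3) * C e1 e2 * C e3 e1 * z5 + ((4 : k)/3) * C e2 e3 * C e3 e1 * z5 - ((8 : k)/3) * C e2 e2 * C e3 e2 * z5 + (4 : k) * C e1 e3 * C e3 e3 * z5 - ((8 : k)/3) * C e3 e2 * C e3 e3 * z5
    have z4 : (C e2 e2) = 0 := pow_eq_zero_iff (by norm_num) |>.1 hv4
    have hv3 : (C e2 e1) ^ 2 = 0 := by
      linear_combination -(1 : k) * E12 - (2 : k) * C e1 e1 * z5 + (2 : k) * C e2 e2 * z5 - (2 : k) * C e3 e1 * z4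
    have z3 : (C e2 e1) = 0 := pow_eq_zero_iff (by norm_num) |>.1 hv3
    have hv1 : (C e1 e2) ^ 3 = 0 := by
      linear_combination ((2 : k)/3) * C e3 e3 * E0 + ((2 : k)/3) * C e3 e2 * E1 + C e1 e2 * E2 + ((2 : k)/3) * C e3 e1 * E3 + ((2 : k)/3) * C e1 e1 * E4 - ((2 : k)/3) * C e3 e3 * E4 - ((2 : k)/3) * C e1 e3 * E6 + ((2 : k)/3) * C e3 e2 * E6 - ((2 : k)/3) * C e1 e1 * E15 - ((2 : k)/3) * C e1 e3 * E16 - ((2 : k)/3) * C e3 e1 * E17 - ((2 : k)/3) * C e1 e2 * E24 + (2 : k) * C e1 e2 ^ 2 * z5 - ((2 : k)/3) * C e1 e1 * C e1 e3 * z5 - ((2 : k)/3) * C e1 e1 * C e2 e1 * z5 - ((2 : k)/3) * C e1 e3 * C e2 e2 * z5 - ((2 : k)/3) * C e1 e2 * C e3 e1 * z5 - ((2 : k)/3) * C e2 e3 * C e3 e1 * z5 + ((2 : k)/3) * C e3 e1 ^ 2 * z5 + ((4 : k)/3) * C e1 e1 * C e3 e2 * z5 + ((4 : k)/3) * C e1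 e3 * C e3 e3 * z5 - ((2 : k)/3) * C e3 e2 * C e3 e3 * z5 - ((2 : k)/3) * C e1 e1 ^ 2 * z4 - ((2 : k)/3) * C e1 e2 * C e1 e3 * z4 + ((2 : k)/3) * C e1 e1 * C e2 e2 * z4 - ((4 : k)/3) * C e1 e3 * C e3 e1 * z4 + ((2 : k)/3) * C e2 e1 * C e3 e1 * z4 + ((4 : k)/3) * C e1 e2 * C e3 e2 * z4 + ((2 : k)/3) * C e3 e1 * C e3 e2 * z4 + ((2 : k)/3) * C e1 e1 * C e3 e3 * z4 - ((2 : k)/3) * C e2 e2 * C e3 e3 * z4 - ((2 : k)/3) * C e1 e3 ^ 2 * z3 + ((2 : k)/3) * C e3 e2 ^ 2 * z3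
    have z1 : (C e1 e2) = 0 := pow_eq_zero_iff (by norm_num) |>.1 hv1
    have hv7 : (C e3 e2) ^ 2 = 0 := by
      linear_combination -(1 : k) * E16 - C e2 e2 * z5 + C e3 e3 * z5 - C e1 e2 * z4 - C e3 e3 * z1
    have z7 : (C e3 e2) = 0 := pow_eq_zero_iff (by norm_num) |>.1 hv7
    have hv2 : (C e1 e3) ^ 2 = 0 := by
      linear_combination (1 : k) * E1 + (2 : k) * C e1 e2 * z4 + (2 : k) * C e1 e3 * z7
    have z2 : (C e1 e3) = 0 := pow_eq_zero_iff (by norm_num) |>.1 hv2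
    have hv0 : (C e1 e1) ^ 2 = 0 := by
      linear_combination -(1 : k) * E0 - (2 : k) * C e1 e2 * z3 + (2 : k) * C e1 e3 * z1 - (2 : k) * C e3 e1 * z2
    have z0 : (C e1 e1) = 0 := pow_eq_zero_iff (by norm_num) |>.1 hv0
    have hv6 : (C e3 e1) ^ 2 = 0 := by
      linear_combination -(1 : k) * E24 - (2 : k) * C e3 e3 * z3 - (2 : k) * C e1 e1 * z7 + (2 : k) * C e3 e3 * z7
    have z6 : (C e3 e1) = 0 := pow_eq_zero_iff (by norm_num) |>.1 hv6
    have hv8 : (C e3 e3) ^ 2 = 0 := by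
      linear_combination -(1 : k) * E8 - C e1 e3 * z5 - C e3 e2 * z5 - C e1 e3 * z1 + C e3 e2 * z1
    have z8 : (C e3 e3) = 0 := pow_eq_zero_iff (by norm_num) |>.1 hv8
    funext i j
    cases i <;> cases j <;> assumption
  · intro hC0
    have hz : ∀ i j, C i j = 0 := by
      intro i j; rw [hC0]; cases i <;> cases j <;> rfl
    have hP : ∀ x : MonoidAlgebra k S, P x = 0 := by
      intro x
      induction x using MonoidAlgebra.induction_linear with
      | zero => exact map_zero P
      | add f g hf hg => rw [map_add, hf, hg, add_zero]
      | single a b =>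
        rw [Psingle P C hC, hz, hz, hz]
        simp
    intro x y
    simp [hP]

end Stmt13
end

section
/- Let S = NCS(1) be the noncommutative semigroup of order 3 with Cayley table (rows indexed by the left factor): e_1 e_1 = e_1 e_2 = e_1 e_3 = e_1; e_2 e_1 = e_1, e_2 e_2 = e_2, e_2 e_3 = e_1; e_3 e_1 = e_1, e_3 e_2 = e_3, e_3 e_3 = e_1. A k-linear operator P on k[S] is a Rota-Baxter operator of weight zero if and only if its matrix C_P belongs to one of the following families (parameters in k): (1) [[0,0,0],[0,0,0],[0,a,0]] with a arbitrary; (2) [[0,0,0],[0,0,0],[-a,a,0]] with a nonzero; (3) [[0,0,0],[b-a,-b,a],[b(b-a)/a, -b^2/a, b]] with a and b nonzero; (4) [[0,0,0],[-a,-b,a],[-b,-b^2/a,b]] with a nonzero and b arbitrary; (5) [[a,0,-a],[-b,0,b],[a,0,-a]] with a nonzero and b arbitrary. -/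
/- Statement 14: RBOs of weight zero on the semigroup algebra of NCS(1). -/

namespace Stmt14

inductive S : Type
  | e1 | e2 | e3
  deriving DecidableEq

instance instFintypeS : Fintype S :=
  ⟨{S.e1, S.e2, S.e3}, fun x => by cases x <;> decide⟩

open S

/-- Multiplication table of the semigroup. -/
instance : Mul S := ⟨fun a b => match a, b with
  | e1, e1 => e1
  | e1, e2 => e1
  | e1, e3 => e1
  | e2, e1 => e1
  | e2, e2 => e2
  | e2, e3 => e1
  | e3, e1 => e1
  | e3, e2 => e3
  | e3, e3 => e1⟩

instance : Semigroup S := { mul_assoc := by decide }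

/-- The 3×3 matrix (rows = first index) as a function `S → S → k`. -/
def mat3 {k : Type*} (a11 a12 a13 a21 a22 a23 a31 a32 a33 : k) : S → S → k :=
  fun i j => match i, j with
  | e1, e1 => a11 | e1, e2 => a12 | e1, e3 => a13
  | e2, e1 => a21 | e2, e2 => a22 | e2, e3 => a23
  | e3, e1 => a31 | e3, e2 => a32 | e3, e3 => a33

noncomputable def appC {k : Type*} [Semiring k] (t : S) : MonoidAlgebra k S →+ k :=
  (Finsupp.applyAddHom t).comp (MonoidAlgebra.coeffAddEquiv (R := k) (M := S)).toAddMonoidHom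

lemma m11 : (e1*e1 : S) = e1 := rfl
lemma m12 : (e1*e2 : S) = e1 := rfl
lemma m13 : (e1*e3 : S) = e1 := rfl
lemma m21 : (e2*e1 : S) = e1 := rfl
lemma m22 : (e2*e2 : S) = e2 := rfl
lemma m23 : (e2*e3 : S) = e1 := rfl
lemma m31 : (e3*e1 : S) = e1 := rfl
lemma m32 : (e3*e2 : S) = e3 := rfl
lemma m33 : (e3*e3 : S) = e1 := rfl

lemma sum_S {M : Type*} [AddCommMonoid M] (f : S → M) : ∑ i, f i = f e1 + f e2 + f e3 := by
  have h : (Finset.univ : Finset S) = {e1, e2, e3} := by decide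
  rw [h, Finset.sum_insert (by decide), Finset.sum_insert (by decide), Finset.sum_singleton,
    add_assoc]

lemma ext3 {k : Type*} [Semiring k] {x y : MonoidAlgebra k S}
    (h : ∀ t : S, appC (k := k) t x = appC t y) : x = y :=
  MonoidAlgebra.ext (Finsupp.ext fun t => h t)

lemma app_single {k : Type*} [Semiring k] (a t : S) (c : k) :
    appC (k := k) t (MonoidAlgebra.single a c) = if a = t then c else 0 :=
  Finsupp.single_apply

lemma basis_to_all {k : Type*} [Field k] (P : MonoidAlgebra k S →ₗ[k] MonoidAlgebra k S)
    (hb : ∀ i j : S, P (MonoidAlgebra.single i 1) * P (MonoidAlgebra.single j 1) =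
      P (MonoidAlgebra.single i 1 * P (MonoidAlgebra.single j 1)) +
      P (P (MonoidAlgebra.single i 1) * MonoidAlgebra.single j 1)) :
    ∀ x y, P x * P y = P (x * P y) + P (P x * y) := by
  have hb' : ∀ (i j : S) (r s : k),
      P (MonoidAlgebra.single i r) * P (MonoidAlgebra.single j s) =
      P (MonoidAlgebra.single i r * P (MonoidAlgebra.single j s)) +
      P (P (MonoidAlgebra.single i r) * MonoidAlgebra.single j s) := by
    intro i j r s
    have h1 : (MonoidAlgebra.single i r : MonoidAlgebra k S) = r • MonoidAlgebra.single i 1 := by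
      rw [MonoidAlgebra.smul_single', mul_one]
    have h2 : (MonoidAlgebra.single j s : MonoidAlgebra k S) = s • MonoidAlgebra.single j 1 := by
      rw [MonoidAlgebra.smul_single', mul_one]
    rw [h1, h2]
    simp only [map_smul, smul_mul_assoc, mul_smul_comm, smul_smul]
    rw [← smul_add, hb i j]
  have main : ∀ (f g : S → k),
      P (∑ i, MonoidAlgebra.single i (f i)) * P (∑ j, MonoidAlgebra.single j (g j)) =
      P ((∑ i, MonoidAlgebra.single i (f i)) * P (∑ j, MonoidAlgebra.single j (g j))) +
      P (P (∑ i, MonoidAlgebra.single i (f i)) * ∑ j, MonoidAlgebra.single j (g j)) := by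
    intro f g
    rw [map_sum P (fun j => MonoidAlgebra.single j (g j)) Finset.univ,
      map_sum P (fun i => MonoidAlgebra.single i (f i)) Finset.univ,
      Finset.sum_mul_sum, Finset.sum_mul_sum, Finset.sum_mul_sum]
    simp only [map_sum]
    rw [← Finset.sum_add_distrib]
    refine Finset.sum_congr rfl fun i _ => ?_
    rw [← Finset.sum_add_distrib]
    refine Finset.sum_congr rfl fun j _ => ?_
    exact hb' i j (f i) (g j)
  intro x y
  have hx : x = ∑ i, MonoidAlgebra.single i (x.coeff i) := by
    apply MonoidAlgebra.ext
    rw [MonoidAlgebra.coeff_sum]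
    simp only [MonoidAlgebra.coeff_single]
    exact (Finsupp.sum_single x.coeff).symm.trans
      (Finsupp.sum_fintype _ _ fun i => Finsupp.single_zero i)
  have hy : y = ∑ j, MonoidAlgebra.single j (y.coeff j) := by
    apply MonoidAlgebra.ext
    rw [MonoidAlgebra.coeff_sum]
    simp only [MonoidAlgebra.coeff_single]
    exact (Finsupp.sum_single y.coeff).symm.trans
      (Finsupp.sum_fintype _ _ fun j => Finsupp.single_zero j)
  rw [hx, hy]
  exact main _ _




set_option maxHeartbeats 4000000 in
theorem rbo_NCS1 {k : Type*} [Field k] [CharZero k]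
    (P : MonoidAlgebra k S →ₗ[k] MonoidAlgebra k S) (C : S → S → k)
    (hC : ∀ i, P (MonoidAlgebra.single i 1) = ∑ j, MonoidAlgebra.single j (C i j)) :
    (∀ x y, P x * P y = P (x * P y) + P (P x * y)) ↔
      ((∃ a : k, C = mat3 0 0 0 0 0 0 0 a 0) ∨
      (∃ a : k, a ≠ 0 ∧ C = mat3 0 0 0 0 0 0 (-a) a 0) ∨
      (∃ a b : k, a ≠ 0 ∧ b ≠ 0 ∧ C = mat3 0 0 0 (b - a) (-b) a (b * (b - a) / a) (-(b ^ 2) / a) b) ∨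
      (∃ a b : k, a ≠ 0 ∧ C = mat3 0 0 0 (-a) (-b) a (-b) (-(b ^ 2) / a) b) ∨
      (∃ a b : k, a ≠ 0 ∧ C = mat3 a 0 (-a) (-b) 0 b a 0 (-a))) := by
  have Pr : ∀ (a : S) (r : k), P (MonoidAlgebra.single a r) =
      ∑ c, MonoidAlgebra.single c (r * C a c) := by
    intro a r
    have hs : (MonoidAlgebra.single a r : MonoidAlgebra k S) = r • MonoidAlgebra.single a 1 := by
      rw [MonoidAlgebra.smul_single', mul_one]
    rw [hs, map_smul, hC a, Finset.smul_sum]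
    refine Finset.sum_congr rfl fun c _ => ?_
    rw [MonoidAlgebra.smul_single']
  have basis_iff : ∀ i j : S,
      (P (MonoidAlgebra.single i 1) * P (MonoidAlgebra.single j 1) =
        P (MonoidAlgebra.single i 1 * P (MonoidAlgebra.single j 1)) +
        P (P (MonoidAlgebra.single i 1) * MonoidAlgebra.single j 1)) ↔
      (∀ t : S, (∑ a, ∑ b, if a * b = t then C i a * C j b else 0) =
        (∑ b, C j b * C (i*b) t) + (∑ a, C i a * C (a*j) t)) := by
    intro i j
    have L : P (MonoidAlgebra.single i 1) * P (MonoidAlgebra.single j 1) =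
        ∑ a, ∑ b, MonoidAlgebra.single (a*b) (C i a * C j b) := by
      rw [hC i, hC j, Finset.sum_mul_sum]
      simp only [MonoidAlgebra.single_mul_single]
    have R1 : P (MonoidAlgebra.single i 1 * P (MonoidAlgebra.single j 1)) =
        ∑ b, ∑ c, MonoidAlgebra.single c (C j b * C (i*b) c) := by
      rw [hC j, Finset.mul_sum]
      simp only [MonoidAlgebra.single_mul_single, one_mul]
      rw [map_sum]
      exact Finset.sum_congr rfl fun b _ => Pr (i*b) (C j b)
    have R2 : P (P (MonoidAlgebra.single i 1) * MonoidAlgebra.single j 1) =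
        ∑ a, ∑ c, MonoidAlgebra.single c (C i a * C (a*j) c) := by
      rw [hC i, Finset.sum_mul]
      simp only [MonoidAlgebra.single_mul_single, mul_one]
      rw [map_sum]
      exact Finset.sum_congr rfl fun a _ => Pr (a*j) (C i a)
    rw [L, R1, R2]
    constructor
    · intro H t
      have h' := congrArg (fun z : MonoidAlgebra k S => appC (k := k) t z) H
      simp only [map_add, map_sum, app_single, Finset.sum_ite_eq', Finset.mem_univ,
        if_true] at h'
      exact h'
    · intro H
      apply ext3
      intro t
      simp only [map_add, map_sum, app_single, Finset.sum_ite_eq', Finset.mem_univ, if_true]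
      exact H t
  have key : (∀ x y, P x * P y = P (x * P y) + P (P x * y)) ↔
      (∀ i j t : S, (∑ a, ∑ b, if a * b = t then C i a * C j b else 0) =
        (∑ b, C j b * C (i*b) t) + (∑ a, C i a * C (a*j) t)) := by
    constructor
    · intro h i j t
      exact (basis_iff i j).mp (h _ _) t
    · intro h
      exact basis_to_all P fun i j => (basis_iff i j).mpr (h i j)
  rw [key]
  constructor
  · intro h
    have E111 := h e1 e1 e1
    have E112 := h e1 e1 e2
    have E113 := h e1 e1 e3
    have E121 := h e1 e2 e1
    have E122 := h e1 e2 e2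
    have E131 := h e1 e3 e1
    have E211 := h e2 e1 e1
    have E221 := h e2 e2 e1
    have E222 := h e2 e2 e2
    have E223 := h e2 e2 e3
    have E231 := h e2 e3 e1
    have E323 := h e3 e2 e3
    have E331 := h e3 e3 e1
    simp only [sum_S, m11, m12, m13, m21, m22, m23, m31, m32, m33, reduceCtorEq, reduceIte,
      ite_true, ite_false, add_zero, zero_add] at E111
    simp only [sum_S, m11, m12, m13, m21, m22, m23, m31, m32, m33, reduceCtorEq, reduceIte,
      ite_true, ite_false, add_zero, zero_add] at E112
    simp only [sum_S, m11, m12, m13, m21, m22, m23, m31, m32, m33, reduceCtorEq, reduceIte,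
      ite_true, ite_false, add_zero, zero_add] at E113
    simp only [sum_S, m11, m12, m13, m21, m22, m23, m31, m32, m33, reduceCtorEq, reduceIte,
      ite_true, ite_false, add_zero, zero_add] at E121
    simp only [sum_S, m11, m12, m13, m21, m22, m23, m31, m32, m33, reduceCtorEq, reduceIte,
      ite_true, ite_false, add_zero, zero_add] at E122
    simp only [sum_S, m11, m12, m13, m21, m22, m23, m31, m32, m33, reduceCtorEq, reduceIte,
      ite_true, ite_false, add_zero, zero_add] at E131
    simp only [sum_S, m11, m12, m13, m21, m22, m23, m31, m32, m33, reduceCtorEq, reduceIte,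
      ite_true, ite_false, add_zero, zero_add] at E211
    simp only [sum_S, m11, m12, m13, m21, m22, m23, m31, m32, m33, reduceCtorEq, reduceIte,
      ite_true, ite_false, add_zero, zero_add] at E221
    simp only [sum_S, m11, m12, m13, m21, m22, m23, m31, m32, m33, reduceCtorEq, reduceIte,
      ite_true, ite_false, add_zero, zero_add] at E222
    simp only [sum_S, m11, m12, m13, m21, m22, m23, m31, m32, m33, reduceCtorEq, reduceIte,
      ite_true, ite_false, add_zero, zero_add] at E223
    simp only [sum_S, m11, m12, m13, m21, m22, m23, m31, m32, m33, reduceCtorEq, reduceIte,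
      ite_true, ite_false, add_zero, zero_add] at E231
    simp only [sum_S, m11, m12, m13, m21, m22, m23, m31, m32, m33, reduceCtorEq, reduceIte,
      ite_true, ite_false, add_zero, zero_add] at E323
    simp only [sum_S, m11, m12, m13, m21, m22, m23, m31, m32, m33, reduceCtorEq, reduceIte,
      ite_true, ite_false, add_zero, zero_add] at E331
    -- Row 1 analysis
    have h112 : C e1 e2 * (2*C e1 e1 + C e1 e2 + 2*C e1 e3) = 0 := by linear_combination -E112
    have h113 : C e1 e3 * (2*C e1 e1 + C e1 e2 + 2*C e1 e3) = 0 := by linear_combination -E113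
    have hrow : C e1 e2 = 0 ∧ C e1 e3 = -C e1 e1 := by
      by_cases hu : 2*C e1 e1 + C e1 e2 + 2*C e1 e3 = 0
      · have hsq : (C e1 e1 + C e1 e3)^2 = 0 := by linear_combination -E111 + C e1 e3 * hu
        have h13 : C e1 e1 + C e1 e3 = 0 :=
          pow_eq_zero_iff (two_ne_zero) |>.mp hsq
        exact ⟨by linear_combination hu - 2*h13, by linear_combination h13⟩
      · exfalso
        have h12 : C e1 e2 = 0 := (mul_eq_zero.mp h112).resolve_right hu
        have h13 : C e1 e3 = 0 := (mul_eq_zero.mp h113).resolve_right hu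
        have h11sq : C e1 e1 ^ 2 = 0 := by
          linear_combination -E111 + (C e1 e3 + C e1 e2) * h13
        have h11 : C e1 e1 = 0 := pow_eq_zero_iff (two_ne_zero) |>.mp h11sq
        exact hu (by rw [h11, h12, h13]; ring)
    obtain ⟨h12, h13⟩ := hrow
    try simp only [h12, h13] at E121
    try simp only [h12, h13] at E122
    try simp only [h12, h13] at E131
    try simp only [h12, h13] at E211
    try simp only [h12, h13] at E221
    try simp only [h12, h13] at E222
    try simp only [h12, h13] at E223
    try simp only [h12, h13] at E231
    try simp only [h12, h13] at E323
    try simp only [h12, h13] at E331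
    by_cases ha : C e1 e1 = 0
    · -- first row is zero
      try simp only [ha, neg_zero, mul_zero, zero_mul, add_zero, zero_add] at E121
      try simp only [ha, neg_zero, mul_zero, zero_mul, add_zero, zero_add] at E122
      try simp only [ha, neg_zero, mul_zero, zero_mul, add_zero, zero_add] at E131
      try simp only [ha, neg_zero, mul_zero, zero_mul, add_zero, zero_add] at E211
      try simp only [ha, neg_zero, mul_zero, zero_mul, add_zero, zero_add] at E221
      try simp only [ha, neg_zero, mul_zero, zero_mul, add_zero, zero_add] at E222
      try simp only [ha, neg_zero, mul_zero, zero_mul, add_zero, zero_add] at E223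
      try simp only [ha, neg_zero, mul_zero, zero_mul, add_zero, zero_add] at E231
      try simp only [ha, neg_zero, mul_zero, zero_mul, add_zero, zero_add] at E323
      try simp only [ha, neg_zero, mul_zero, zero_mul, add_zero, zero_add] at E331
      have h13' : C e1 e3 = 0 := by rw [h13, ha, neg_zero]
      by_cases hA : C e2 e3 = 0
      · rw [hA] at E221 E222 E223 E231 E323
        have h22 : C e2 e2 = 0 := by
          have hs : C e2 e2 ^ 2 = 0 := by linear_combination -E222
          exact pow_eq_zero_iff (two_ne_zero) |>.mp hs
        rw [h22] at E221
        have h21 : C e2 e1 = 0 := by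
          have hs : C e2 e1 ^ 2 = 0 := by linear_combination E221
          exact pow_eq_zero_iff (two_ne_zero) |>.mp hs
        have h33 : C e3 e3 = 0 := by
          have hs : C e3 e3 ^ 2 = 0 := by linear_combination -E323
          exact pow_eq_zero_iff (two_ne_zero) |>.mp hs
        rw [h33] at E331
        have h31 : C e3 e1 * (C e3 e1 + C e3 e2) = 0 := by linear_combination E331
        rcases mul_eq_zero.mp h31 with h31 | h3132
        · left
          exact ⟨C e3 e2, by
            funext i j
            cases i <;> cases j <;> simp only [mat3] <;> first | rfl | assumption⟩
        · by_cases h31z : C e3 e1 = 0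
          · left
            exact ⟨C e3 e2, by
              funext i j
              cases i <;> cases j <;> simp only [mat3] <;> first | rfl | assumption⟩
          · right; left
            refine ⟨C e3 e2, fun h0 => h31z (by linear_combination h3132 - h0), ?_⟩
            funext i j
            cases i <;> cases j <;> simp only [mat3] <;>
              first | rfl | assumption | linear_combination h3132
      · -- c23 ≠ 0
        have h2233 : C e2 e2 = -C e3 e3 := by
          have hf : C e2 e3 * (C e2 e2 + C e3 e3) = 0 := by linear_combination -E223
          have hq := (mul_eq_zero.mp hf).resolve_left hA
          linear_combination hq
        have h32 : C e2 e3 * C e3 e2 = -(C e3 e3^2) := by linear_combination -E323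
        rw [h2233] at E231 E221
        have hfac : (C e2 e1 + C e2 e3 - C e3 e3) * (C e3 e1 + C e3 e3) = 0 := by
          linear_combination E231
        rcases mul_eq_zero.mp hfac with hf | hf
        · have h21 : C e2 e1 = C e3 e3 - C e2 e3 := by linear_combination hf
          rw [h21] at E221
          have h31A : C e2 e3 * C e3 e1 = C e3 e3 * (C e3 e3 - C e2 e3) := by
            linear_combination -E221
          by_cases hB : C e3 e3 = 0
          · right; right; right; left
            refine ⟨C e2 e3, 0, hA, ?_⟩
            have h21' : C e2 e1 = -C e2 e3 := by rw [h21, hB]; ring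
            have h31 : C e3 e1 = 0 := by
              have hh : C e2 e3 * C e3 e1 = 0 := by
                linear_combination h31A + (C e3 e3 - C e2 e3) * hB
              exact (mul_eq_zero.mp hh).resolve_left hA
            have h32' : C e3 e2 = 0 := by
              have hh : C e2 e3 * C e3 e2 = 0 := by
                linear_combination h32 - C e3 e3 * hB
              exact (mul_eq_zero.mp hh).resolve_left hA
            have h22' : C e2 e2 = 0 := by rw [h2233, hB]; ring
            funext i j
            cases i <;> cases j <;> simp only [mat3] <;>
              first
              | rfl
              | assumption
              | (rw [neg_zero]; assumption)
              | (rw [h32']; simp)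
          · right; right; left
            refine ⟨C e2 e3, C e3 e3, hA, hB, ?_⟩
            funext i j
            cases i <;> cases j <;> simp only [mat3] <;>
              first
              | rfl
              | assumption
              | (rw [eq_div_iff hA]; linear_combination h31A)
              | (rw [eq_div_iff hA]; linear_combination h32)
        · have h31 : C e3 e1 = -C e3 e3 := by linear_combination hf
          rw [h31] at E221
          have hsq : (C e2 e3 + C e2 e1)^2 = 0 := by linear_combination E221
          have h21 : C e2 e1 = -C e2 e3 := by
            have hz := pow_eq_zero_iff (two_ne_zero) |>.mp hsq
            linear_combination hz
          right; right; right; left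
          refine ⟨C e2 e3, C e3 e3, hA, ?_⟩
          funext i j
          cases i <;> cases j <;> simp only [mat3] <;>
            first
            | rfl
            | assumption
            | (rw [eq_div_iff hA]; linear_combination h32)
    · -- C e1 e1 ≠ 0 : family 5
      have h32 : C e3 e2 = 0 := by
        have hh : C e1 e1 * C e3 e2 = 0 := by linear_combination E122
        exact (mul_eq_zero.mp hh).resolve_left ha
      have h2sum : C e2 e1 + C e2 e2 + C e2 e3 = 0 := by
        have hh : C e1 e1 * (C e2 e1 + C e2 e2 + C e2 e3) = 0 := by linear_combination -E211
        exact (mul_eq_zero.mp hh).resolve_left ha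
      rw [h32] at E222
      have h22 : C e2 e2 = 0 := by
        have hs : C e2 e2 ^ 2 = 0 := by linear_combination -E222
        exact pow_eq_zero_iff (two_ne_zero) |>.mp hs
      have h23 : C e2 e3 = -C e2 e1 := by linear_combination h2sum - h22
      rw [h23] at E121
      have h31 : C e3 e1 = C e1 e1 := by
        have hh : C e1 e1 * (C e3 e1 - C e1 e1) = 0 := by linear_combination E121
        have hq := (mul_eq_zero.mp hh).resolve_left ha
        linear_combination hq
      have h33 : C e3 e3 = -C e1 e1 := by
        have hh : C e1 e1 * (C e3 e3 + C e3 e1) = 0 := by linear_combination -E131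
        have hx := (mul_eq_zero.mp hh).resolve_left ha
        linear_combination hx - h31
      right; right; right; right
      refine ⟨C e1 e1, -C e2 e1, ha, ?_⟩
      funext i j
      cases i <;> cases j <;> simp only [mat3] <;>
        first | rfl | assumption | rw [neg_neg]
  · rintro (⟨a, rfl⟩ | ⟨a, ha, rfl⟩ | ⟨a, b, ha, hb, rfl⟩ | ⟨a, b, ha, rfl⟩ | ⟨a, b, ha, rfl⟩) <;>
      intro i j t <;> cases i <;> cases j <;> cases t <;>
      simp only [sum_S, m11, m12, m13, m21, m22, m23, m31, m32, m33, reduceCtorEq, reduceIte,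
        ite_true, ite_false, add_zero, zero_add, mat3, mul_zero, zero_mul, neg_zero,
        mul_one, one_mul] <;>
      first
      | rfl
      | ring1
      | (field_simp; first | done | ring1 | (left; ring1))

end Stmt14
end

section
/- Let S = NCS(4) be the noncommutative semigroup of order 3 with Cayley table (rows indexed by the left factor): e_1 e_j = e_1 for all j; e_2 e_j = e_2 for all j; e_3 e_j = e_1 for all j. A k-linear operator P on k[S] is a Rota-Baxter operator of weight zero if and only if its matrix C_P belongs to one of the following families (parameters in k): (1) [[-a,0,a],[b,0,-b],[c,0,-c]] with a nonzero, a+b nonzero, and b, c arbitrary; (2) [[-a,0,a],[-a,0,a],[c,d,-c-d]] with a nonzero and c, d arbitrary; (3) [[0,0,0],[-a,0,a],[b,0,-b]] with a nonzero and b arbitrary; (4) [[0,0,0],[0,0,0],[b,c,-(b+c)]] with c nonzero and b arbitrary; (5) [[0,0,0],[a,0,0],[b,0,-b]] with a, b arbitrary; (6) [[a,-(a+b),b],[a,-(a+b),b],[c,d,-(c+d)]] with b nonzero, a+b nonzero, and c, d arbitrary; (7) [[a,b,0],[-a^2/b,-a,0],[c,b,a-c]] with b nonzero, a+b nonzero,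 and c arbitrary; (8) [[-b,b,0],[-b,b,0],[c,d,-c-d]] with b nonzero and c, d arbitrary. -/
/- Statement 17: RBOs of weight zero on the semigroup algebra of NCS(4). -/

namespace Stmt17

inductive S : Type
  | e1 | e2 | e3
  deriving DecidableEq

instance instFintypeS : Fintype S :=
  ⟨{S.e1, S.e2, S.e3}, fun x => by cases x <;> simp⟩

open S

/-- Multiplication table of the semigroup. -/
instance : Mul S := ⟨fun a b => match a, b with
  | e1, e1 => e1
  | e1, e2 => e1
  | e1, e3 => e1
  | e2, e1 => e2
  | e2, e2 => e2
  | e2, e3 => e2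
  | e3, e1 => e1
  | e3, e2 => e1
  | e3, e3 => e1⟩

instance : Semigroup S := { mul_assoc := by decide }

/-- The 3×3 matrix (rows = first index) as a function `S → S → k`. -/
def mat3 {k : Type*} (a11 a12 a13 a21 a22 a23 a31 a32 a33 : k) : S → S → k :=
  fun i j => match i, j with
  | e1, e1 => a11 | e1, e2 => a12 | e1, e3 => a13
  | e2, e1 => a21 | e2, e2 => a22 | e2, e3 => a23
  | e3, e1 => a31 | e3, e2 => a32 | e3, e3 => a33

lemma sum_S {M : Type*} [AddCommMonoid M] (f : S → M) : ∑ j, f j = f e1 + f e2 + f e3 := by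
  show Finset.sum _ f = _
  rw [show (Finset.univ : Finset S) = {e1, e2, e3} from rfl]
  rw [Finset.sum_insert (by decide), Finset.sum_insert (by decide), Finset.sum_singleton,
    add_assoc]

@[simp] lemma m11 : (e1*e1 : S) = e1 := rfl
@[simp] lemma m12 : (e1*e2 : S) = e1 := rfl
@[simp] lemma m13 : (e1*e3 : S) = e1 := rfl
@[simp] lemma m21 : (e2*e1 : S) = e2 := rfl
@[simp] lemma m22 : (e2*e2 : S) = e2 := rfl
@[simp] lemma m23 : (e2*e3 : S) = e2 := rfl
@[simp] lemma m31 : (e3*e1 : S) = e1 := rfl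
@[simp] lemma m32 : (e3*e2 : S) = e1 := rfl
@[simp] lemma m33 : (e3*e3 : S) = e1 := rfl

lemma sumsum_apply {k : Type*} [Field k] (f : S → S → S) (g : S → S → k) (r : S) :
    (∑ p, ∑ q, (MonoidAlgebra.single (f p q) (g p q) : MonoidAlgebra k S)).coeff r
      = ∑ p, ∑ q, (if f p q = r then g p q else 0) := by
  rw [MonoidAlgebra.coeff_sum, Finset.sum_apply']
  refine Finset.sum_congr rfl fun p _ => ?_
  rw [MonoidAlgebra.coeff_sum, Finset.sum_apply']
  exact Finset.sum_congr rfl fun q _ => Finsupp.single_apply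

open MonoidAlgebra in
lemma reduce {k : Type*} [Field k] (P : MonoidAlgebra k S →ₗ[k] MonoidAlgebra k S)
    (C : S → S → k)
    (hC : ∀ i, P (MonoidAlgebra.single i 1) = ∑ j, MonoidAlgebra.single j (C i j)) :
    (∀ x y, P x * P y = P (x * P y) + P (P x * y)) ↔
    (∀ i j r : S, (∑ p, ∑ q, (if p * q = r then C i p * C j q else 0)) =
      (∑ q, C j q * C (i*q) r) + (∑ p, C i p * C (p*j) r)) := by
  have h1 : ∀ i j : S, P (single i 1) * P (single j 1)
      = ∑ p, ∑ q, single (p*q) (C i p * C j q) := by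
    intro i j
    rw [hC i, hC j, Finset.sum_mul_sum]
    simp [MonoidAlgebra.single_mul_single]
  have h2 : ∀ i j : S, P (single i 1 * P (single j 1))
      = ∑ q, ∑ p, single p (C j q * C (i*q) p) := by
    intro i j
    rw [hC j, Finset.mul_sum, map_sum]
    refine Finset.sum_congr rfl fun q _ => ?_
    have e : (single i 1 : MonoidAlgebra k S) * single q (C j q) = C j q • single (i*q) 1 := by
      rw [MonoidAlgebra.single_mul_single, MonoidAlgebra.smul_single', one_mul, mul_one]
    rw [e, map_smul, hC, Finset.smul_sum]
    exact Finset.sum_congr rfl fun p _ => by rw [MonoidAlgebra.smul_single']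
  have h3 : ∀ i j : S, P (P (single i 1) * single j 1)
      = ∑ p, ∑ q, single q (C i p * C (p*j) q) := by
    intro i j
    rw [hC i, Finset.sum_mul, map_sum]
    refine Finset.sum_congr rfl fun p _ => ?_
    have e : (single p (C i p) : MonoidAlgebra k S) * single j 1 = C i p • single (p*j) 1 := by
      rw [MonoidAlgebra.single_mul_single, MonoidAlgebra.smul_single', mul_one]
    rw [e, map_smul, hC, Finset.smul_sum]
    exact Finset.sum_congr rfl fun q _ => by rw [MonoidAlgebra.smul_single']
  have bridge : ∀ i j : S,
      (P (single i 1) * P (single j 1)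
        = P (single i 1 * P (single j 1)) + P (P (single i 1) * single j 1))
      ↔ (∀ r : S, (∑ p, ∑ q, (if p * q = r then C i p * C j q else 0)) =
        (∑ q, C j q * C (i*q) r) + (∑ p, C i p * C (p*j) r)) := by
    intro i j
    rw [h1, h2, h3, ← MonoidAlgebra.coeff_inj, Finsupp.ext_iff]
    refine forall_congr' fun r => ?_
    rw [MonoidAlgebra.coeff_add, Finsupp.add_apply, sumsum_apply (fun p q => p*q), sumsum_apply (fun q p => p),
      sumsum_apply (fun p q => q)]
    rw [show (∑ q, ∑ p, (if p = r then C j q * C (i*q) p else 0)) = ∑ q, C j q * C (i*q) r by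
      refine Finset.sum_congr rfl fun q _ => ?_
      rw [Finset.sum_ite_eq' Finset.univ r (fun p => C j q * C (i*q) p)]
      simp]
    rw [show (∑ p, ∑ q, (if q = r then C i p * C (p*j) q else 0)) = ∑ p, C i p * C (p*j) r by
      refine Finset.sum_congr rfl fun p _ => ?_
      rw [Finset.sum_ite_eq' Finset.univ r (fun q => C i p * C (p*j) q)]
      simp]
  constructor
  · intro h i j
    exact (bridge i j).mp (h _ _)
  · intro h
    have hs : ∀ i j : S, P (single i 1) * P (single j 1)
        = P (single i 1 * P (single j 1)) + P (P (single i 1) * single j 1) :=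
      fun i j => (bridge i j).mpr (h i j)
    intro x y
    induction x using MonoidAlgebra.induction_linear with
    | zero => simp
    | add f g hf hg => simp only [map_add, add_mul, mul_add, hf, hg]; try abel
    | single a b =>
      induction y using MonoidAlgebra.induction_linear with
      | zero => simp
      | add f g hf hg => simp only [map_add, add_mul, mul_add, hf, hg]; try abel
      | single c d =>
        have ea : (single a b : MonoidAlgebra k S) = b • single a 1 := by
          rw [MonoidAlgebra.smul_single', mul_one]
        have ec : (single c d : MonoidAlgebra k S) = d • single c 1 := by
          rw [MonoidAlgebra.smul_single', mul_one]
        rw [ea, ec]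
        simp only [map_smul, smul_mul_assoc, mul_smul_comm]
        rw [hs a c]
        simp [smul_add]

lemma C_eta {k : Type*} (C : S → S → k) :
    C = mat3 (C e1 e1) (C e1 e2) (C e1 e3) (C e2 e1) (C e2 e2) (C e2 e3)
      (C e3 e1) (C e3 e2) (C e3 e3) := by
  funext a b; cases a <;> cases b <;> rfl

lemma mat3_congr {k : Type*} {a1 a2 a3 a4 a5 a6 a7 a8 a9 b1 b2 b3 b4 b5 b6 b7 b8 b9 : k}
    (h1 : a1 = b1) (h2 : a2 = b2) (h3 : a3 = b3) (h4 : a4 = b4) (h5 : a5 = b5)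
    (h6 : a6 = b6) (h7 : a7 = b7) (h8 : a8 = b8) (h9 : a9 = b9) :
    mat3 a1 a2 a3 a4 a5 a6 a7 a8 a9 = mat3 b1 b2 b3 b4 b5 b6 b7 b8 b9 := by
  rw [h1, h2, h3, h4, h5, h6, h7, h8, h9]

set_option maxHeartbeats 3000000 in
theorem rbo_NCS4 {k : Type*} [Field k] [CharZero k]
    (P : MonoidAlgebra k S →ₗ[k] MonoidAlgebra k S) (C : S → S → k)
    (hC : ∀ i, P (MonoidAlgebra.single i 1) = ∑ j, MonoidAlgebra.single j (C i j)) :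
    (∀ x y, P x * P y = P (x * P y) + P (P x * y)) ↔
      ((∃ a b c : k, a ≠ 0 ∧ a + b ≠ 0 ∧ C = mat3 (-a) 0 a b 0 (-b) c 0 (-c)) ∨
      (∃ a c d : k, a ≠ 0 ∧ C = mat3 (-a) 0 a (-a) 0 a c d (-c - d)) ∨
      (∃ a b : k, a ≠ 0 ∧ C = mat3 0 0 0 (-a) 0 a b 0 (-b)) ∨
      (∃ b c : k, c ≠ 0 ∧ C = mat3 0 0 0 0 0 0 b c (-(b + c))) ∨
      (∃ a b : k, C = mat3 0 0 0 a 0 0 b 0 (-b)) ∨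
      (∃ a b c d : k, b ≠ 0 ∧ a + b ≠ 0 ∧ C = mat3 a (-(a + b)) b a (-(a + b)) b c d (-(c + d))) ∨
      (∃ a b c : k, b ≠ 0 ∧ a + b ≠ 0 ∧ C = mat3 a b 0 (-(a ^ 2) / b) (-a) 0 c b (a - c)) ∨
      (∃ b c d : k, b ≠ 0 ∧ C = mat3 (-b) b 0 (-b) b 0 c d (-c - d))) := by
  rw [reduce P C hC]
  constructor
  · intro H
    obtain ⟨x1, x2, x3, y1, y2, y3, z1, z2, z3, rfl⟩ :
        ∃ a1 a2 a3 a4 a5 a6 a7 a8 a9, C = mat3 a1 a2 a3 a4 a5 a6 a7 a8 a9 :=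
      ⟨_, _, _, _, _, _, _, _, _, C_eta C⟩
    have h111 := H e1 e1 e1; simp [sum_S, mat3] at h111
    have h121 := H e1 e2 e1; simp [sum_S, mat3] at h121
    have h131 := H e1 e3 e1; simp [sum_S, mat3] at h131
    have h112 := H e1 e1 e2; simp [sum_S, mat3] at h112
    have h113 := H e1 e1 e3; simp [sum_S, mat3] at h113
    have h211 := H e2 e1 e1; simp [sum_S, mat3] at h211
    have h221 := H e2 e2 e1; simp [sum_S, mat3] at h221
    have h231 := H e2 e3 e1; simp [sum_S, mat3] at h231
    have h212 := H e2 e1 e2; simp [sum_S, mat3] at h212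
    have h213 := H e2 e1 e3; simp [sum_S, mat3] at h213
    have h311 := H e3 e1 e1; simp [sum_S, mat3] at h311
    have h321 := H e3 e2 e1; simp [sum_S, mat3] at h321
    have h331 := H e3 e3 e1; simp [sum_S, mat3] at h331
    have h312 := H e3 e1 e2; simp [sum_S, mat3] at h312
    have h322 := H e3 e2 e2; simp [sum_S, mat3] at h322
    have h332 := H e3 e3 e2; simp [sum_S, mat3] at h332
    by_cases hA : x3 = 0 ∧ y3 = 0 ∧ z1 + z3 = x1 ∧ z2 = x2
    · obtain ⟨hx3, hy3, hzA, hz2A⟩ := hA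
      have N1 : x1 ^ 2 + x2 * y1 = 0 := by
        linear_combination -h111 + (x1 + x2 + x3 - x1) * hx3
      have N2 : x2 * (x1 + y2) = 0 := by linear_combination -h112 - x2 * hx3
      have N4 : x2 * y1 + y2 ^ 2 = 0 := by linear_combination -h212 - x2 * hy3
      by_cases hx2 : x2 = 0
      · -- family 5
        have hx1 : x1 = 0 := by
          have hsq : x1 ^ 2 = 0 := by linear_combination N1 - y1 * hx2
          exact (pow_eq_zero_iff two_ne_zero).mp hsq
        have hy2 : y2 = 0 := by
          have hsq : y2 ^ 2 = 0 := by linear_combination N4 - y1 * hx2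
          exact (pow_eq_zero_iff two_ne_zero).mp hsq
        refine Or.inr (Or.inr (Or.inr (Or.inr (Or.inl ⟨y1, z1, ?_⟩))))
        exact mat3_congr hx1 hx2 hx3 rfl hy2 hy3 rfl
          (by linear_combination hz2A + hx2) (by linear_combination hzA + hx1)
      · have hy2v : y2 = -x1 := by
          have := (mul_eq_zero.mp N2).resolve_left hx2
          linear_combination this
        by_cases hpq : x1 + x2 = 0
        · -- family 8
          have hy1v : y1 = -x2 := by
            have h0 : x2 * (y1 + x2) = 0 := by linear_combination N1 - (x1 - x2) * hpq
            have := (mul_eq_zero.mp h0).resolve_left hx2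
            linear_combination this
          refine Or.inr (Or.inr (Or.inr (Or.inr (Or.inr (Or.inr (Or.inr ⟨x2, z1, z2, hx2, ?_⟩))))))
          exact mat3_congr (by linear_combination hpq) rfl hx3 hy1v
            (by linear_combination hy2v - hpq) hy3 rfl rfl
            (by linear_combination hzA + hz2A + hpq)
        · -- family 7
          have hy1v : y1 = -(x1 ^ 2) / x2 := by
            rw [eq_div_iff hx2]
            linear_combination N1
          refine Or.inr (Or.inr (Or.inr (Or.inr (Or.inr (Or.inr (Or.inl
            ⟨x1, x2, z1, hx2, hpq, ?_⟩))))))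
          exact mat3_congr rfl rfl hx3 hy1v hy2v hy3 rfl hz2A (by linear_combination hzA)
    · -- some W ≠ 0 : all row sums equal, then zero
      have F1 : (x1 + x3) ^ 2 + x2 * (y1 + y3) = 0 := by linear_combination -h111 - h113
      have F2 : (y1 + y3) * (x1 + x3 + y2) = 0 := by linear_combination -h211 - h213
      have F3 : x2 * (x1 + x3 + y2) = 0 := by linear_combination -h112
      have F4 : (y1 + y3) * x2 + y2 ^ 2 = 0 := by linear_combination -h212
      have hss : x1 + x2 + x3 = y1 + y2 + y3 ∧ x1 + x2 + x3 = z1 + z2 + z3 := by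
        by_cases hx3 : x3 = 0
        · by_cases hy3 : y3 = 0
          · by_cases hz : z1 + z3 = x1
            · by_cases hz2 : z2 = x2
              · exact absurd ⟨hx3, hy3, hz, hz2⟩ hA
              · have w : z2 - x2 ≠ 0 := sub_ne_zero.mpr hz2
                constructor
                · refine mul_left_cancel₀ w ?_
                  linear_combination h312 - h322
                · refine mul_left_cancel₀ w ?_
                  linear_combination h312 - h332
            · have w : z1 + z3 - x1 ≠ 0 := sub_ne_zero.mpr hz
              constructor
              · refine mul_left_cancel₀ w ?_
                linear_combination h311 - h321
              · refine mul_left_cancel₀ w ?_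
                linear_combination h311 - h331
          · constructor
            · refine mul_left_cancel₀ hy3 ?_
              linear_combination h211 - h221
            · refine mul_left_cancel₀ hy3 ?_
              linear_combination h211 - h231
        · constructor
          · refine mul_left_cancel₀ hx3 ?_
            linear_combination h111 - h121
          · refine mul_left_cancel₀ hx3 ?_
            linear_combination h111 - h131
      obtain ⟨hs2, hs3⟩ := hss
      have hT : x1 + x3 + y2 = 0 := by
        by_contra hT
        have hU2 : y1 + y3 = 0 := (mul_eq_zero.mp F2).resolve_right hT
        have hX2 : x2 = 0 := (mul_eq_zero.mp F3).resolve_right hT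
        have hu1 : x1 + x3 = 0 := by
          have hsq : (x1 + x3) ^ 2 = 0 := by linear_combination F1 - (y1 + y3) * hX2
          exact (pow_eq_zero_iff two_ne_zero).mp hsq
        have hy2z : y2 = 0 := by
          have hsq : y2 ^ 2 = 0 := by linear_combination F4 - x2 * hU2
          exact (pow_eq_zero_iff two_ne_zero).mp hsq
        exact hT (by linear_combination hu1 + hy2z)
      have hs0 : x1 + x2 + x3 = 0 := by
        have hsq : (x1 + x2 + x3) ^ 2 = 0 := by
          linear_combination F4 + (x1 + x2 + x3 - y2) * hT + x2 * hs2
        exact (pow_eq_zero_iff two_ne_zero).mp hsq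
      have hs0' : y1 + y2 + y3 = 0 := by linear_combination hs0 - hs2
      have hs0'' : z1 + z2 + z3 = 0 := by linear_combination hs0 - hs3
      have P1 : x2 * (y1 - x1) = 0 := by linear_combination -h111 - (x1 - x3) * hs0
      have P2 : x2 * (y2 - x2) = 0 := by linear_combination -h112 - x2 * hs0
      have P5 : y2 * (y2 - x2) = 0 := by linear_combination -h212 - x2 * hs0'
      have P7 : z2 * (y1 - x1) = 0 := by
        linear_combination -h311 + (z1 + z2 + z3 - z2 - x1) * hs0 - x1 * hs0''
      by_cases hR : x1 = y1 ∧ x2 = y2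
      · obtain ⟨h1, h2⟩ := hR
        by_cases hq : x2 = 0
        · by_cases hp : x1 = 0
          · by_cases hz2 : z2 = 0
            · -- family 5 (degenerate)
              refine Or.inr (Or.inr (Or.inr (Or.inr (Or.inl ⟨y1, z1, ?_⟩))))
              exact mat3_congr hp hq (by linear_combination hs0 - hq - hp) rfl
                (by linear_combination hq - h2)
                (by linear_combination hs0' + h1 + h2 - hp - hq) rfl hz2
                (by linear_combination hs0'' - hz2)
            · -- family 4
              refine Or.inr (Or.inr (Or.inr (Or.inl ⟨z1, z2, hz2, ?_⟩)))
              exact mat3_congr hp hq (by linear_combination hs0 - hq - hp)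
                (by linear_combination -h1 + hp) (by linear_combination hq - h2)
                (by linear_combination hs0' + h1 + h2 - hp - hq) rfl rfl
                (by linear_combination hs0'')
          · -- family 2
            refine Or.inr (Or.inl ⟨-x1, z1, z2, neg_ne_zero.mpr hp, ?_⟩)
            exact mat3_congr (by ring) hq (by linear_combination hs0 - hq)
              (by linear_combination -h1) (by linear_combination hq - h2)
              (by linear_combination hs0' + h1 + h2 - hq) rfl rfl
              (by linear_combination hs0'')
        · by_cases hpq : x1 + x2 = 0
          · -- family 8
            refine Or.inr (Or.inr (Or.inr (Or.inr (Or.inr (Or.inr (Or.inr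
              ⟨x2, z1, z2, hq, ?_⟩))))))
            exact mat3_congr (by linear_combination hpq) rfl (by linear_combination hs0 - hpq)
              (by linear_combination hpq - h1) (by linear_combination -h2)
              (by linear_combination hs0' + h1 + h2 - hpq) rfl rfl
              (by linear_combination hs0'')
          · -- family 6
            have hb : x3 ≠ 0 := fun hh => hpq (by linear_combination hs0 - hh)
            have hab : x1 + x3 ≠ 0 := fun hh => hq (by linear_combination hs0 - hh)
            refine Or.inr (Or.inr (Or.inr (Or.inr (Or.inr (Or.inl
              ⟨x1, x3, z1, z2, hb, hab, ?_⟩)))))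
            exact mat3_congr rfl (by linear_combination hs0) rfl (by linear_combination -h1)
              (by linear_combination hs0 - h2)
              (by linear_combination hs0' - hs0 + h1 + h2) rfl rfl
              (by linear_combination hs0'')
      · have h2 : x2 = y2 := by
          by_contra hne
          have hw : y2 - x2 ≠ 0 := sub_ne_zero.mpr fun hh => hne hh.symm
          have hx2e : x2 = 0 := (mul_eq_zero.mp P2).resolve_right hw
          have hy2e : y2 = 0 := (mul_eq_zero.mp P5).resolve_right hw
          exact hne (by linear_combination hx2e - hy2e)
        have h1 : x1 ≠ y1 := fun hh => hR ⟨hh, h2⟩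
        have hw : y1 - x1 ≠ 0 := sub_ne_zero.mpr (Ne.symm h1)
        have hx2v : x2 = 0 := (mul_eq_zero.mp P1).resolve_right hw
        have hy2v : y2 = 0 := by linear_combination hx2v - h2
        have hz2v : z2 = 0 := (mul_eq_zero.mp P7).resolve_right hw
        by_cases hx1 : x1 = 0
        · -- family 3
          have hy1 : -y1 ≠ 0 := neg_ne_zero.mpr fun hh => h1 (hx1.trans hh.symm)
          refine Or.inr (Or.inr (Or.inl ⟨-y1, z1, hy1, ?_⟩))
          exact mat3_congr hx1 hx2v (by linear_combination hs0 - hx2v - hx1) (by ring) hy2v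
            (by linear_combination hs0' - hy2v) rfl hz2v (by linear_combination hs0'' - hz2v)
        · -- family 1
          have hab : -x1 + y1 ≠ 0 := fun hh => hw (by linear_combination hh)
          refine Or.inl ⟨-x1, y1, z1, neg_ne_zero.mpr hx1, hab, ?_⟩
          exact mat3_congr (by ring) hx2v (by linear_combination hs0 - hx2v) rfl hy2v
            (by linear_combination hs0' - hy2v) rfl hz2v (by linear_combination hs0'' - hz2v)
  · rintro (⟨a, b, c, ha, hab, rfl⟩ | ⟨a, c, d, ha, rfl⟩ | ⟨a, b, ha, rfl⟩ | ⟨b, c, hc, rfl⟩ |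
      ⟨a, b, rfl⟩ | ⟨a, b, c, d, hb, hab, rfl⟩ | ⟨a, b, c, hb, hab, rfl⟩ | ⟨b, c, d, hb, rfl⟩) <;>
      intro i j r
    case _ =>
      cases i <;> cases j <;> cases r <;>
        simp only [sum_S, mat3, m11, m12, m13, m21, m22, m23, m31, m32, m33, reduceIte, reduceCtorEq, if_false, ite_false] <;> ring
    case _ =>
      cases i <;> cases j <;> cases r <;>
        simp only [sum_S, mat3, m11, m12, m13, m21, m22, m23, m31, m32, m33, reduceIte, reduceCtorEq, if_false, ite_false] <;> ring
    case _ =>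
      cases i <;> cases j <;> cases r <;>
        simp only [sum_S, mat3, m11, m12, m13, m21, m22, m23, m31, m32, m33, reduceIte, reduceCtorEq, if_false, ite_false] <;> ring
    case _ =>
      cases i <;> cases j <;> cases r <;>
        simp only [sum_S, mat3, m11, m12, m13, m21, m22, m23, m31, m32, m33, reduceIte, reduceCtorEq, if_false, ite_false] <;> ring
    case _ =>
      cases i <;> cases j <;> cases r <;>
        simp only [sum_S, mat3, m11, m12, m13, m21, m22, m23, m31, m32, m33, reduceIte, reduceCtorEq, if_false, ite_false] <;> ring
    case _ =>
      cases i <;> cases j <;> cases r <;>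
        simp only [sum_S, mat3, m11, m12, m13, m21, m22, m23, m31, m32, m33, reduceIte, reduceCtorEq, if_false, ite_false] <;> ring
    case _ =>
      cases i <;> cases j <;> cases r <;>
        simp only [sum_S, mat3, m11, m12, m13, m21, m22, m23, m31, m32, m33, reduceIte, reduceCtorEq, if_false, ite_false] <;>
        field_simp <;> ring
    case _ =>
      cases i <;> cases j <;> cases r <;>
        simp only [sum_S, mat3, m11, m12, m13, m21, m22, m23, m31, m32, m33, reduceIte, reduceCtorEq, if_false, ite_false] <;> ring

end Stmt17
end
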